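/- arXiv:2012.03230 — 11 statements merged into one kernel-verified Lean document; each statement's English description precedes it below -/
import Mathlib

section
/- Let F be a field, let ι be a finite type with n elements, and for each i ∈ ι let A_i be a nonempty finite subset of F. Set S = ∑_i |A_i| and let t = max_i |A_i|, and assume t ≥ 2. Let P be a multivariate polynomial over F in variables indexed by ι of total degree d, assume S ≥ n + d, and assume that P is nonzero at some point of the grid. Then the number of grid points at which P evaluates to a nonzero value is at least t^((S - n - d)/(t - 1)) (real exponentiation). -/
open MvPolynomial Finset

lemma waf_amgm {t y : ℝ} (ht : 1 < t) (hy1 : 1 ≤ y) (hyt : y ≤ t) :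
    t ^ ((y - 1) / (t - 1)) ≤ y := by
  have ht1 : (0:ℝ) < t - 1 := by linarith
  have hw1 : 0 ≤ (t - y) / (t - 1) := div_nonneg (by linarith) ht1.le
  have hw2 : 0 ≤ (y - 1) / (t - 1) := div_nonneg (by linarith) ht1.le
  have hsum : (t - y)/(t-1) + (y-1)/(t-1) = 1 := by field_simp; ring
  have h := Real.geom_mean_le_arith_mean2_weighted hw1 hw2 zero_le_one
    (by linarith : (0:ℝ) ≤ t) hsum
  rw [Real.one_rpow, one_mul] at h
  have h2 : (t - y)/(t-1) * 1 + (y-1)/(t-1) * t = y := by field_simp; ring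
  linarith

lemma waf_triv {t : ℕ} (ht2 : 2 ≤ t) {e : ℝ} (he : e ≤ 0) {N : ℕ} (hN : 1 ≤ N) :
    (t:ℝ) ^ e ≤ (N : ℝ) := by
  have h1 : (t:ℝ) ^ e ≤ 1 :=
    Real.rpow_le_one_of_one_le_of_nonpos (by exact_mod_cast ht2.trans' one_le_two) he
  exact h1.trans (by exact_mod_cast hN)

lemma waf_step {F : Type*} [Field F] [DecidableEq F] (t : ℕ) (ht2 : 2 ≤ t) (n : ℕ)
    (A : Fin n → Finset F) (B : Finset F)
    (hB : B.Nonempty) (hBt : B.card ≤ t)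
    (IH : ∀ (D : ℕ) (P : MvPolynomial (Fin n) F), P.totalDegree ≤ D →
      (∃ x ∈ Fintype.piFinset A, eval x P ≠ 0) →
      (t:ℝ) ^ (((∑ i, ((A i).card:ℝ)) - n - D) / ((t:ℝ)-1)) ≤
        (((Fintype.piFinset A).filter fun x => eval x P ≠ 0).card : ℝ)) :
    ∀ (K D : ℕ) (q : Polynomial (MvPolynomial (Fin n) F)),
      (∀ j, q.coeff j ≠ 0 → (q.coeff j).totalDegree + j ≤ D) →
      (∀ j, K < j → ∀ y ∈ Fintype.piFinset A, eval y (q.coeff j) = 0) →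
      (∃ y ∈ Fintype.piFinset A, ∃ b ∈ B, Polynomial.eval b (q.map (eval y)) ≠ 0) →
      (t:ℝ) ^ (((B.card:ℝ) + (∑ i, ((A i).card:ℝ)) - (n+1) - D) / ((t:ℝ)-1)) ≤
        (∑ y ∈ Fintype.piFinset A,
          ((B.filter fun b => Polynomial.eval b (q.map (eval y)) ≠ 0).card : ℝ)) := by
  intro K
  induction K using Nat.strong_induction_on with
  | _ K IHK =>
  intro D q hD hK hex
  have ht1R : (1:ℝ) < t := by exact_mod_cast ht2.trans' (by norm_num)
  have ht0R : (0:ℝ) < t := by linarith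
  set s : Finset ℕ := q.support.filter
    (fun j => ∃ y ∈ Fintype.piFinset A, eval y (q.coeff j) ≠ 0) with hs_def
  have hs : s.Nonempty := by
    obtain ⟨y, hy, b, hb, hne⟩ := hex
    have : ∃ j, eval y (q.coeff j) ≠ 0 := by
      by_contra h
      push_neg at h
      have : q.map (eval y) = 0 := by
        ext j; simp [Polynomial.coeff_map, h j]
      rw [this] at hne; simp at hne
    obtain ⟨j, hj⟩ := this
    refine ⟨j, Finset.mem_filter.2 ⟨Polynomial.mem_support_iff.2 ?_, ⟨y, hy, hj⟩⟩⟩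
    intro h0; rw [h0] at hj; simp at hj
  set k : ℕ := s.max' hs with hk_def
  have hk_mem := s.max'_mem hs
  rw [Finset.mem_filter] at hk_mem
  have hkQ : q.coeff k ≠ 0 := Polynomial.mem_support_iff.1 hk_mem.1
  have hkgrid : ∃ y ∈ Fintype.piFinset A, eval y (q.coeff k) ≠ 0 := hk_mem.2
  have hkK : k ≤ K := by
    by_contra h
    push_neg at h
    obtain ⟨y, hy, hne⟩ := hkgrid
    exact hne (hK k h y hy)
  have htop : ∀ j, k < j → ∀ y ∈ Fintype.piFinset A, eval y (q.coeff j) = 0 := by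
    intro j hj y hy
    by_contra hne
    have hjs : j ∈ s := by
      refine Finset.mem_filter.2 ⟨Polynomial.mem_support_iff.2 ?_, ⟨y, hy, hne⟩⟩
      intro h0; rw [h0] at hne; simp at hne
    exact absurd (s.le_max' j hjs) (not_le.2 hj)
  have hkD : k ≤ D := le_trans (Nat.le_add_left _ _) (hD k hkQ)
  have ha1 : 1 ≤ B.card := hB.card_pos
  by_cases hka : k < B.card
  · -- counting case
    have hQD : (q.coeff k).totalDegree ≤ D - k := by
      have := hD k hkQ; omega
    have hT := IH (D - k) (q.coeff k) hQD hkgrid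
    set T := (Fintype.piFinset A).filter (fun y => eval y (q.coeff k) ≠ 0) with hTdef
    have hfib : ∀ y ∈ T, ((B.card : ℝ) - k) ≤
        ((B.filter fun b => Polynomial.eval b (q.map (eval y)) ≠ 0).card : ℝ) := by
      intro y hyT
      rw [hTdef, Finset.mem_filter] at hyT
      obtain ⟨hy, hyQ⟩ := hyT
      set f := q.map (eval y) with hfdef
      have hfdeg : f.natDegree ≤ k := by
        rw [Polynomial.natDegree_le_iff_coeff_eq_zero]
        intro j hj
        rw [hfdef, Polynomial.coeff_map]
        exact htop j hj y hy
      have hf0 : f ≠ 0 := fun h => hyQ (by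
        have := Polynomial.coeff_map (eval y) k (p := q)
        rw [← hfdef, h] at this; simpa using this.symm)
      have hroots : ((B.filter fun b => Polynomial.eval b f = 0)).card ≤ k := by
        refine le_trans (Polynomial.card_le_degree_of_subset_roots ?_) hfdeg
        intro b hb
        rw [Finset.mem_val, Finset.mem_filter] at hb
        rw [Polynomial.mem_roots hf0]
        exact hb.2
      have hsplit := Finset.card_filter_add_card_filter_not
        (s := B) (p := fun b => Polynomial.eval b f = 0)
      have hnat : B.card ≤ k + (B.filter fun a => ¬ Polynomial.eval a f = 0).card := by
        omega
      have hR : ((B.card : ℕ) : ℝ) ≤ (k : ℝ)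
          + ((B.filter fun a => ¬ Polynomial.eval a f = 0).card : ℝ) := by
        exact_mod_cast hnat
      simp only [ne_eq]
      linarith
    have hTsum : (T.card : ℝ) * ((B.card:ℝ) - k) ≤ ∑ y ∈ Fintype.piFinset A,
        ((B.filter fun b => Polynomial.eval b (q.map (eval y)) ≠ 0).card : ℝ) := by
      calc (T.card : ℝ) * ((B.card:ℝ) - k) = ∑ _y ∈ T, ((B.card:ℝ) - k) := by
            rw [Finset.sum_const, nsmul_eq_mul]
        _ ≤ ∑ y ∈ T, ((B.filter fun b => Polynomial.eval b (q.map (eval y)) ≠ 0).card : ℝ) :=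
            Finset.sum_le_sum hfib
        _ ≤ _ := Finset.sum_le_sum_of_subset_of_nonneg (Finset.filter_subset _ _)
            (fun _ _ _ => by positivity)
    have hc : ((D - k : ℕ):ℝ) = (D:ℝ) - k := by
      rw [Nat.cast_sub hkD]
    rw [hc] at hT
    have hexp : ((B.card:ℝ) + (∑ i, ((A i).card:ℝ)) - (n+1) - D) / ((t:ℝ)-1)
        = ((∑ i, ((A i).card:ℝ)) - n - ((D:ℝ) - k)) / ((t:ℝ)-1)
          + (((B.card:ℝ) - k) - 1)/((t:ℝ)-1) := by ring
    rw [hexp, Real.rpow_add ht0R]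
    have hamgm : (t:ℝ) ^ ((((B.card:ℝ) - k) - 1)/((t:ℝ)-1)) ≤ (B.card:ℝ) - k := by
      refine waf_amgm ht1R ?_ ?_
      · have : (k:ℝ) + 1 ≤ (B.card:ℝ) := by exact_mod_cast hka
        linarith
      · have h1 : (B.card:ℝ) ≤ t := by exact_mod_cast hBt
        have h2 : (0:ℝ) ≤ k := Nat.cast_nonneg k
        linarith
    calc (t:ℝ) ^ (((∑ i, ((A i).card:ℝ)) - n - ((D:ℝ) - k)) / ((t:ℝ)-1))
          * (t:ℝ) ^ ((((B.card:ℝ) - k) - 1)/((t:ℝ)-1))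
        ≤ (T.card : ℝ) * ((B.card:ℝ) - k) := by
          refine mul_le_mul hT hamgm (Real.rpow_nonneg ht0R.le _) (Nat.cast_nonneg _)
      _ ≤ _ := hTsum
  · -- reduction case
    push_neg at hka
    set m₀ : Polynomial F :=
      Polynomial.X ^ (k - B.card) * ∏ c ∈ B, (Polynomial.X - Polynomial.C c) with hm₀
    have hm₀monic : m₀.Monic :=
      (Polynomial.monic_X_pow _).mul
        (Polynomial.monic_prod_of_monic _ _ fun c _ => Polynomial.monic_X_sub_C c)
    have hm₀deg : m₀.natDegree = k := by
      rw [hm₀, (Polynomial.monic_X_pow _).natDegree_mul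
        (Polynomial.monic_prod_of_monic _ _ fun c _ => Polynomial.monic_X_sub_C c),
        Polynomial.natDegree_X_pow,
        Polynomial.natDegree_prod _ _ (fun c _ => Polynomial.X_sub_C_ne_zero c)]
      simp only [Polynomial.natDegree_X_sub_C]
      rw [Finset.sum_const, smul_eq_mul, mul_one]
      omega
    set M : Polynomial (MvPolynomial (Fin n) F) :=
      m₀.map (MvPolynomial.C : F →+* MvPolynomial (Fin n) F) with hM
    set q' := q - Polynomial.C (q.coeff k) * M with hq'
    have hcoeffsub : ∀ j, (Polynomial.C (q.coeff k) * M).coeff j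
        = q.coeff k * MvPolynomial.C (m₀.coeff j) := by
      intro j; rw [Polynomial.coeff_C_mul, hM, Polynomial.coeff_map]
    have hMeval : ∀ (y : Fin n → F), ∀ b ∈ B, Polynomial.eval b (M.map (eval y)) = 0 := by
      intro y b hb
      have hMy : M.map (eval y) = m₀ := by
        rw [hM, Polynomial.map_map]
        have hid : (eval y : MvPolynomial (Fin n) F →+* F).comp
            (MvPolynomial.C : F →+* MvPolynomial (Fin n) F) = RingHom.id F := by
          ext c; simp
        rw [hid, Polynomial.map_id]
      rw [hMy, hm₀, Polynomial.eval_mul, Polynomial.eval_prod]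
      exact mul_eq_zero_of_right _ (Finset.prod_eq_zero hb (by simp))
    have hvals : ∀ (y : Fin n → F), ∀ b ∈ B,
        Polynomial.eval b (q'.map (eval y)) = Polynomial.eval b (q.map (eval y)) := by
      intro y b hb
      have h0 : Polynomial.eval b ((Polynomial.C (q.coeff k) * M).map (eval y)) = 0 := by
        rw [Polynomial.map_mul, Polynomial.map_C, Polynomial.eval_mul, Polynomial.eval_C,
          hMeval y b hb, mul_zero]
      rw [hq', Polynomial.map_sub, Polynomial.eval_sub, h0, sub_zero]
    have hcoeff : ∀ j, q'.coeff j = q.coeff j - q.coeff k * MvPolynomial.C (m₀.coeff j) := by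
      intro j; rw [hq', Polynomial.coeff_sub, hcoeffsub]
    have hD' : ∀ j, q'.coeff j ≠ 0 → (q'.coeff j).totalDegree + j ≤ D := by
      intro j hj
      have h2 : q.coeff k * MvPolynomial.C (m₀.coeff j) ≠ 0 →
          (q.coeff k * MvPolynomial.C (m₀.coeff j)).totalDegree + j ≤ D := by
        intro hne
        have hjk : j ≤ k := by
          by_contra h
          push_neg at h
          rw [Polynomial.coeff_eq_zero_of_natDegree_lt (by omega : m₀.natDegree < j),
            map_zero, mul_zero] at hne
          exact hne rfl
        have hmul : (q.coeff k * MvPolynomial.C (m₀.coeff j)).totalDegree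
            ≤ (q.coeff k).totalDegree := by
          refine le_trans (MvPolynomial.totalDegree_mul _ _) ?_
          simp [MvPolynomial.totalDegree_C]
        have := hD k hkQ
        omega
      rw [hcoeff j] at hj ⊢
      rcases eq_or_ne (q.coeff j) 0 with h0 | h0
      · rcases eq_or_ne (q.coeff k * MvPolynomial.C (m₀.coeff j)) 0 with h0' | h0'
        · rw [h0, h0'] at hj; simp at hj
        · rw [h0, zero_sub, MvPolynomial.totalDegree_neg]
          exact h2 h0'
      · rcases eq_or_ne (q.coeff k * MvPolynomial.C (m₀.coeff j)) 0 with h0' | h0'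
        · rw [h0', sub_zero]; exact hD j h0
        · have hb1 := hD j h0
          have hb2 := h2 h0'
          have hle := MvPolynomial.totalDegree_sub (q.coeff j)
            (q.coeff k * MvPolynomial.C (m₀.coeff j))
          rcases max_cases (q.coeff j).totalDegree
            (q.coeff k * MvPolynomial.C (m₀.coeff j)).totalDegree with ⟨heq, _⟩ | ⟨heq, _⟩ <;>
            omega
    have hK' : ∀ j, k - 1 < j → ∀ y ∈ Fintype.piFinset A, eval y (q'.coeff j) = 0 := by
      intro j hj y hy
      rcases lt_or_ge k j with h | h
      · rw [hcoeff j, Polynomial.coeff_eq_zero_of_natDegree_lt (by omega : m₀.natDegree < j),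
          map_zero, mul_zero, sub_zero]
        exact htop j h y hy
      · have hjk : j = k := by omega
        have hco : m₀.coeff j = 1 := by
          rw [hjk, ← hm₀deg]; exact hm₀monic.coeff_natDegree
        rw [hcoeff j, hco, map_one, mul_one, hjk, sub_self, map_zero]
    have hklt : k - 1 < K := by omega
    have hex' : ∃ y ∈ Fintype.piFinset A, ∃ b ∈ B, Polynomial.eval b (q'.map (eval y)) ≠ 0 := by
      obtain ⟨y, hy, b, hb, hne⟩ := hex
      exact ⟨y, hy, b, hb, by rw [hvals y b hb]; exact hne⟩
    refine le_trans (IHK (k-1) hklt D q' hD' hK' hex') (le_of_eq ?_)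
    refine Finset.sum_congr rfl (fun y _ => ?_)
    have hfe : (B.filter fun b => Polynomial.eval b (q'.map (eval y)) ≠ 0)
        = (B.filter fun b => Polynomial.eval b (q.map (eval y)) ≠ 0) :=
      Finset.filter_congr (fun b hb => by rw [hvals y b hb])
    rw [hfe]

lemma waf_key {F : Type*} [Field F] [DecidableEq F] (t : ℕ) (ht2 : 2 ≤ t) :
    ∀ (n : ℕ) (A : Fin n → Finset F), (∀ i, (A i).Nonempty) → (∀ i, (A i).card ≤ t) →
    ∀ (D : ℕ) (P : MvPolynomial (Fin n) F), P.totalDegree ≤ D →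
    (∃ x ∈ Fintype.piFinset A, eval x P ≠ 0) →
    (t:ℝ) ^ (((∑ i, ((A i).card:ℝ)) - n - D) / ((t:ℝ)-1)) ≤
      (((Fintype.piFinset A).filter fun x => eval x P ≠ 0).card : ℝ) := by
  intro n
  induction n with
  | zero =>
    intro A hA hAt D P hPD hex
    obtain ⟨x, hx, hne⟩ := hex
    have hN : 1 ≤ ((Fintype.piFinset A).filter fun x => eval x P ≠ 0).card :=
      Finset.card_pos.mpr ⟨x, Finset.mem_filter.2 ⟨hx, hne⟩⟩
    have htR : (1:ℝ) < t := by exact_mod_cast lt_of_lt_of_le one_lt_two ht2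
    refine waf_triv ht2 ?_ hN
    have hnum : (∑ i : Fin 0, ((A i).card:ℝ)) - ((0:ℕ):ℝ) - (D:ℝ) ≤ 0 := by
      simp
    exact div_nonpos_of_nonpos_of_nonneg hnum (by linarith)
  | succ n IHn =>
    intro A hA hAt D P hPD hex
    set q := finSuccEquiv F n P with hq
    have hD : ∀ j, q.coeff j ≠ 0 → (q.coeff j).totalDegree + j ≤ D :=
      fun j hj => le_trans (totalDegree_coeff_finSuccEquiv_add_le P j hj) hPD
    have hK : ∀ j, q.natDegree < j → ∀ y ∈ Fintype.piFinset (fun i => A i.succ),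
        eval y (q.coeff j) = 0 := by
      intro j hj y _
      rw [Polynomial.coeff_eq_zero_of_natDegree_lt hj, map_zero]
    have hmemtail : ∀ x ∈ Fintype.piFinset A,
        Fin.tail x ∈ Fintype.piFinset (fun i => A i.succ) := by
      intro x hx
      rw [Fintype.mem_piFinset] at hx ⊢
      exact fun i => hx i.succ
    have hevalP : ∀ (x : Fin (n+1) → F),
        eval x P = Polynomial.eval (x 0) (q.map (eval (Fin.tail x))) := by
      intro x
      conv_lhs => rw [← Fin.cons_self_tail x]
      rw [eval_eq_eval_mv_eval']
    have hex' : ∃ y ∈ Fintype.piFinset (fun i => A i.succ), ∃ b ∈ A 0,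
        Polynomial.eval b (q.map (eval y)) ≠ 0 := by
      obtain ⟨x, hx, hne⟩ := hex
      exact ⟨Fin.tail x, hmemtail x hx, x 0, (Fintype.mem_piFinset.1 hx) 0,
        by rw [← hevalP x]; exact hne⟩
    have hstep := waf_step t ht2 n (fun i => A i.succ) (A 0) (hA 0) (hAt 0)
      (fun D' P' h1 h2 =>
        IHn (fun i => A i.succ) (fun i => hA i.succ) (fun i => hAt i.succ) D' P' h1 h2)
      q.natDegree D q hD hK hex'
    have hcard : ((Fintype.piFinset A).filter fun x => eval x P ≠ 0).card =
        ∑ y ∈ Fintype.piFinset (fun i => A i.succ),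
          ((A 0).filter fun b => Polynomial.eval b (q.map (eval y)) ≠ 0).card := by
      rw [Finset.card_eq_sum_card_fiberwise (f := (Fin.tail : (Fin (n+1) → F) → (Fin n → F)))
        (s := (Fintype.piFinset A).filter fun x => eval x P ≠ 0)
        (t := Fintype.piFinset (fun i => A i.succ))
        (fun x hx => hmemtail x (Finset.mem_filter.1 hx).1)]
      refine Finset.sum_congr rfl (fun y hy => ?_)
      refine Finset.card_bij' (fun x _ => x 0) (fun b _ => Fin.cons b y) ?_ ?_ ?_ ?_
      · intro x hx
        have hx' := Finset.mem_filter.1 hx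
        have hx1 := Finset.mem_filter.1 hx'.1
        have hx2 : Fin.tail x = y := hx'.2
        refine Finset.mem_filter.2 ⟨(Fintype.mem_piFinset.1 hx1.1) 0, ?_⟩
        show Polynomial.eval (x 0) (q.map (eval y)) ≠ 0
        rw [← hx2, ← hevalP x]
        exact hx1.2
      · intro b hb
        have hb' := Finset.mem_filter.1 hb
        have hmem : Fin.cons b y ∈ Fintype.piFinset A := by
          rw [Fintype.mem_piFinset]
          intro i
          refine Fin.cases ?_ ?_ i
          · show (Fin.cons b y : Fin (n+1) → F) 0 ∈ A 0
            rw [Fin.cons_zero]; exact hb'.1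
          · intro j
            show (Fin.cons b y : Fin (n+1) → F) j.succ ∈ A j.succ
            rw [Fin.cons_succ]
            exact (Fintype.mem_piFinset.1 hy) j
        refine Finset.mem_filter.2 ⟨Finset.mem_filter.2 ⟨hmem, ?_⟩, ?_⟩
        · show eval (Fin.cons b y : Fin (n+1) → F) P ≠ 0
          rw [hevalP (Fin.cons b y), Fin.cons_zero, Fin.tail_cons]
          exact hb'.2
        · show Fin.tail (Fin.cons b y : Fin (n+1) → F) = y
          simp
      · intro x hx
        have hx2 : Fin.tail x = y := (Finset.mem_filter.1 hx).2
        show Fin.cons (x 0) y = x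
        rw [← hx2]
        exact Fin.cons_self_tail x
      · intro b _
        show (Fin.cons b y : Fin (n+1) → F) 0 = b
        rw [Fin.cons_zero]
    have hexp : ((∑ i : Fin (n+1), ((A i).card:ℝ)) - (((n+1) : ℕ):ℝ) - (D:ℝ)) / ((t:ℝ)-1)
        = ((((A 0).card:ℝ) + (∑ i : Fin n, ((A (Fin.succ i)).card:ℝ)) - ((n:ℝ) + 1) - (D:ℝ))
          / ((t:ℝ)-1)) := by
      rw [Fin.sum_univ_succ]
      push_cast
      ring
    rw [hexp, hcard, Nat.cast_sum]
    exact hstep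

/-- Weak Alon–Füredi (Theorem 16 of the paper): if a multivariate polynomial `P` of total
degree `d` over a field `F` does not vanish identically on a grid `∏ i, A i` with
`S = ∑ i, |A i|`, `t = max_i |A i| ≥ 2` and `S ≥ n + d`, then the number of non-vanishing
grid points is at least `t ^ ((S - n - d)/(t - 1))`. -/
theorem weak_alon_furedi {F : Type*} [Field F] [DecidableEq F]
    {ι : Type*} [Fintype ι] [DecidableEq ι]
    (A : ι → Finset F) (hA : ∀ i, (A i).Nonempty)
    (S t : ℕ) (hS : S = ∑ i, (A i).card)
    (ht : t = Finset.univ.sup fun i => (A i).card) (ht2 : 2 ≤ t)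
    (P : MvPolynomial ι F) (d : ℕ) (hd : d = P.totalDegree)
    (hSnd : Fintype.card ι + d ≤ S)
    (hex : ∃ x ∈ Fintype.piFinset A, eval x P ≠ 0) :
    (t : ℝ) ^ (((S : ℝ) - (Fintype.card ι : ℝ) - (d : ℝ)) / ((t : ℝ) - 1)) ≤
      (((Fintype.piFinset A).filter fun x => eval x P ≠ 0).card : ℝ) := by
  classical
  set n := Fintype.card ι with hn
  set e : ι ≃ Fin n := Fintype.equivFin ι with he
  set A' : Fin n → Finset F := fun j => A (e.symm j) with hA'
  set P' : MvPolynomial (Fin n) F := rename e P with hP'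
  have heval : ∀ x : Fin n → F, eval x P' = eval (x ∘ e) P := by
    intro x; rw [hP', eval_rename]
  have hex' : ∃ x ∈ Fintype.piFinset A', eval x P' ≠ 0 := by
    obtain ⟨x, hx, hne⟩ := hex
    refine ⟨x ∘ e.symm, ?_, ?_⟩
    · rw [Fintype.mem_piFinset]
      intro j
      exact (Fintype.mem_piFinset.1 hx) (e.symm j)
    · rw [heval]
      have : (x ∘ e.symm) ∘ e = x := by
        funext i; simp
      rw [this]
      exact hne
  have hkey := waf_key t ht2 n A' (fun j => hA (e.symm j))
    (fun j => by
      rw [ht]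
      exact Finset.le_sup (f := fun i => (A i).card) (Finset.mem_univ (e.symm j))) d P'
    (by rw [hP', hd]; exact totalDegree_rename_le e P) hex'
  have hsum : (∑ j, ((A' j).card : ℝ)) = (S : ℝ) := by
    rw [hS]
    push_cast
    exact Fintype.sum_equiv e.symm _ _ (fun j => rfl)
  rw [hsum] at hkey
  have hcards : ((Fintype.piFinset A').filter fun x => eval x P' ≠ 0).card =
      ((Fintype.piFinset A).filter fun x => eval x P ≠ 0).card := by
    refine Finset.card_bij' (fun x _ => x ∘ e) (fun x _ => x ∘ e.symm) ?_ ?_ ?_ ?_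
    · intro x hx
      have hx' := Finset.mem_filter.1 hx
      refine Finset.mem_filter.2 ⟨?_, ?_⟩
      · rw [Fintype.mem_piFinset]
        intro i
        have := (Fintype.mem_piFinset.1 hx'.1) (e i)
        simpa [hA'] using this
      · rw [← heval x]
        exact hx'.2
    · intro x hx
      have hx' := Finset.mem_filter.1 hx
      refine Finset.mem_filter.2 ⟨?_, ?_⟩
      · rw [Fintype.mem_piFinset]
        intro j
        exact (Fintype.mem_piFinset.1 hx'.1) (e.symm j)
      · rw [heval]
        have hcomp : (x ∘ e.symm) ∘ e = x := by funext i; simp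
        rw [hcomp]
        exact hx'.2
    · intro x _
      funext j; simp
    · intro x _
      funext i; simp
  rw [hcards] at hkey
  exact hkey
end

section
/- Let F be a field, let ι be a finite type, and for each i ∈ ι let A_i be a nonempty finite subset of F. Let P be a multivariate polynomial over F in variables indexed by ι of total degree d, and suppose that P does not vanish at every point of the grid ∏_i A_i. Then the number of grid points at which P evaluates to a nonzero value is at least the minimum of ∏_i q_i taken over all integer vectors q : ι → ℕ satisfying 1 ≤ q_i ≤ |A_i| for all i and ∑_i q_i ≥ ∑_i |A_i| - d. -/
open MvPolynomial Finset

lemma AF.uni_count {F : Type*} [Field F] [DecidableEq F] (p : Polynomial F) (hp : p ≠ 0)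
    (B : Finset F) : B.card ≤ (B.filter fun b => p.eval b ≠ 0).card + p.natDegree := by
  have h1 : (B.filter fun b => ¬ p.eval b ≠ 0) ⊆ p.roots.toFinset := by
    intro b hb
    simp only [Finset.mem_filter, not_not] at hb
    simp [Multiset.mem_toFinset, Polynomial.mem_roots hp, Polynomial.IsRoot, hb.2]
  have h2 := Finset.card_le_card h1
  have h3 : p.roots.toFinset.card ≤ p.natDegree :=
    le_trans p.roots.toFinset_card_le p.card_roots'
  have h4 := Finset.card_filter_add_card_filter_not (s := B)
    (p := fun b => p.eval b ≠ 0)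
  omega

lemma AF.finSuccEquiv_C {F : Type*} [CommSemiring F] (n : ℕ) (a : F) :
    finSuccEquiv F n (C a) = Polynomial.C (MvPolynomial.C a) := by
  simp [finSuccEquiv_apply]

lemma AF.finSuccEquiv_rename_succ {F : Type*} [CommSemiring F] (n : ℕ)
    (q : MvPolynomial (Fin n) F) :
    finSuccEquiv F n (rename Fin.succ q) = Polynomial.C q := by
  induction q using MvPolynomial.induction_on with
  | C a => rw [rename_C, AF.finSuccEquiv_C]
  | add p q hp hq => rw [map_add, map_add, hp, hq, map_add]
  | mul_X p i hp => rw [map_mul, map_mul, hp, rename_X, finSuccEquiv_X_succ, map_mul]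

lemma AF.eval_cons_symm {F : Type*} [CommSemiring F] {n : ℕ}
    (g : Polynomial (MvPolynomial (Fin n) F)) (a : F) (s : Fin n → F) :
    eval (Fin.cons a s) ((finSuccEquiv F n).symm g) =
      Polynomial.eval a (g.map (eval s)) := by
  rw [eval_eq_eval_mv_eval', (finSuccEquiv F n).apply_symm_apply]

lemma AF.exists_reduced {F : Type*} [Field F] [DecidableEq F] (n : ℕ)
    (A : Fin (n + 1) → Finset F) (hA0 : (A 0).Nonempty) :
    ∀ (t : ℕ) (P : MvPolynomial (Fin (n + 1)) F), (finSuccEquiv F n P).natDegree ≤ t →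
    ∃ Q : MvPolynomial (Fin (n + 1)) F,
      (∀ s : Fin n → F, (∀ i, s i ∈ A i.succ) → ∀ a ∈ A 0,
        eval (Fin.cons a s) Q = eval (Fin.cons a s) P) ∧
      Q.totalDegree ≤ P.totalDegree ∧
      (finSuccEquiv F n Q).natDegree < (A 0).card ∧
      (Q = 0 ∨ ∃ s : Fin n → F, (∀ i, s i ∈ A i.succ) ∧
        eval s (finSuccEquiv F n Q).leadingCoeff ≠ 0) := by
  intro t
  induction t using Nat.strong_induction_on with
  | _ t ih =>
  intro P hPt
  by_cases hP0 : P = 0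
  · refine ⟨0, ?_, ?_, ?_, Or.inl rfl⟩
    · intro s _ a _; rw [hP0]
    · rw [hP0]
    · rw [map_zero, Polynomial.natDegree_zero]
      exact Finset.card_pos.mpr hA0
  set f := finSuccEquiv F n P with hf
  have hf0 : f ≠ 0 := fun h => hP0 ((finSuccEquiv F n).injective (by rw [← hf, h, map_zero]))
  have hlc : f.leadingCoeff ≠ 0 := Polynomial.leadingCoeff_ne_zero.mpr hf0
  have key : ∀ (B : Finset F) (k : ℕ), k + B.card = f.natDegree →
      (∀ (s : Fin n → F) (a : F), (∀ i, s i ∈ A i.succ) → a ∈ A 0 →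
        eval s f.leadingCoeff * (a ^ k * ∏ b ∈ B, (a - b)) = 0) →
      ∃ Q : MvPolynomial (Fin (n + 1)) F,
        (∀ s : Fin n → F, (∀ i, s i ∈ A i.succ) → ∀ a ∈ A 0,
          eval (Fin.cons a s) Q = eval (Fin.cons a s) P) ∧
        Q.totalDegree ≤ P.totalDegree ∧
        (finSuccEquiv F n Q).natDegree < (A 0).card ∧
        (Q = 0 ∨ ∃ s : Fin n → F, (∀ i, s i ∈ A i.succ) ∧
          eval s (finSuccEquiv F n Q).leadingCoeff ≠ 0) := by
    intro B k hkB hvanish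
    set h : Polynomial (MvPolynomial (Fin n) F) :=
      Polynomial.X ^ k * ∏ b ∈ B, (Polynomial.X - Polynomial.C (C b)) with hh
    have hhmon : h.Monic :=
      (Polynomial.monic_X_pow k).mul
        (Polynomial.monic_prod_of_monic _ _ fun b _ => Polynomial.monic_X_sub_C _)
    have hhdeg : h.natDegree = f.natDegree := by
      rw [hh, Polynomial.natDegree_mul ((Polynomial.monic_X_pow k).ne_zero)
        (Polynomial.monic_prod_of_monic _ _ fun b _ => Polynomial.monic_X_sub_C _).ne_zero,
        Polynomial.natDegree_X_pow,
        Polynomial.natDegree_prod_of_monic _ _ fun b _ => Polynomial.monic_X_sub_C _]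
      simp [hkB]
    set g0 : Polynomial (MvPolynomial (Fin n) F) := Polynomial.C f.leadingCoeff * h with hg0
    have hg0lc : g0.leadingCoeff = f.leadingCoeff := by
      rw [hg0, Polynomial.leadingCoeff_mul, Polynomial.leadingCoeff_C, hhmon.leadingCoeff, mul_one]
    have hg0deg : g0.degree = f.degree := by
      rw [hg0, Polynomial.degree_mul, Polynomial.degree_C hlc, zero_add,
        Polynomial.degree_eq_natDegree hhmon.ne_zero, hhdeg,
        Polynomial.degree_eq_natDegree hf0]
    set f' : Polynomial (MvPolynomial (Fin n) F) := f - g0 with hf'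
    set P' : MvPolynomial (Fin (n + 1)) F := (finSuccEquiv F n).symm f' with hP'
    have hfP' : finSuccEquiv F n P' = f' := (finSuccEquiv F n).apply_symm_apply f'
    -- grid values of P' and P agree
    have hevalg0 : ∀ (s : Fin n → F) (a : F),
        Polynomial.eval a (g0.map (eval s)) =
          eval s f.leadingCoeff * (a ^ k * ∏ b ∈ B, (a - b)) := by
      intro s a
      rw [hg0, hh]
      simp only [Polynomial.map_mul, Polynomial.map_C, Polynomial.map_pow, Polynomial.map_X,
        Polynomial.map_prod, Polynomial.map_sub, Polynomial.eval_mul, Polynomial.eval_C,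
        Polynomial.eval_pow, Polynomial.eval_X, Polynomial.eval_prod, Polynomial.eval_sub,
        eval_C]
    have hPP' : ∀ (s : Fin n → F), (∀ i, s i ∈ A i.succ) → ∀ a ∈ A 0,
        eval (Fin.cons a s) P' = eval (Fin.cons a s) P := by
      intro s hs a ha
      rw [hP', AF.eval_cons_symm, hf', Polynomial.map_sub, Polynomial.eval_sub, hevalg0,
        hvanish s a hs ha, sub_zero, ← eval_eq_eval_mv_eval']
    -- total degree bound
    have hsymm : (finSuccEquiv F n).symm g0 =
        rename Fin.succ f.leadingCoeff * ((X 0) ^ k * ∏ b ∈ B, (X 0 - C b)) := by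
      apply (finSuccEquiv F n).injective
      rw [(finSuccEquiv F n).apply_symm_apply]
      simp only [map_mul, map_pow, map_prod, map_sub, AF.finSuccEquiv_rename_succ,
        finSuccEquiv_X_zero, AF.finSuccEquiv_C]
      rw [hg0, hh]
    have hlcdeg : f.leadingCoeff.totalDegree + f.natDegree ≤ P.totalDegree := by
      have := totalDegree_coeff_finSuccEquiv_add_le P f.natDegree
        (by rw [← hf, ← Polynomial.leadingCoeff]; exact hlc)
      rwa [← hf, ← Polynomial.leadingCoeff] at this
    have hsymmdeg : ((finSuccEquiv F n).symm g0).totalDegree ≤ P.totalDegree := by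
      rw [hsymm]
      refine le_trans (totalDegree_mul _ _) ?_
      have h1 : (rename (Fin.succ : Fin n → Fin (n+1)) f.leadingCoeff).totalDegree ≤
          f.leadingCoeff.totalDegree := totalDegree_rename_le _ _
      have h2 : ((X 0 : MvPolynomial (Fin (n+1)) F) ^ k * ∏ b ∈ B, (X 0 - C b)).totalDegree ≤ k + B.card := by
        refine le_trans (totalDegree_mul _ _) ?_
        have h3 : ((X 0 : MvPolynomial (Fin (n+1)) F) ^ k).totalDegree ≤ k := by
          rw [totalDegree_X_pow]
        have h4 : (∏ b ∈ B, (X 0 - C b : MvPolynomial (Fin (n+1)) F)).totalDegree ≤ B.card := by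
          refine le_trans (totalDegree_finset_prod _ _) ?_
          calc ∑ b ∈ B, (X 0 - C b : MvPolynomial (Fin (n+1)) F).totalDegree
              ≤ ∑ _b ∈ B, 1 := by
                refine Finset.sum_le_sum fun b _ => ?_
                rw [sub_eq_add_neg]
                refine le_trans (totalDegree_add _ _) ?_
                rw [totalDegree_neg, totalDegree_X, totalDegree_C]
                simp
            _ = B.card := by simp
        omega
      omega
    have hP'deg : P'.totalDegree ≤ P.totalDegree := by
      have : P' = P + (-(finSuccEquiv F n).symm g0) := by
        rw [hP', hf', map_sub, hf, (finSuccEquiv F n).symm_apply_apply, sub_eq_add_neg]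
      rw [this]
      refine le_trans (totalDegree_add _ _) ?_
      rw [totalDegree_neg]
      exact max_le le_rfl hsymmdeg
    -- recursion or termination
    by_cases hf'0 : f' = 0
    · refine ⟨0, ?_, ?_, ?_, Or.inl rfl⟩
      · intro s hs a ha
        rw [← hPP' s hs a ha, hP', hf'0]
        rw [map_zero (finSuccEquiv F n).symm]
      · exact (totalDegree_zero (R := F)).le.trans (Nat.zero_le _)
      · rw [map_zero, Polynomial.natDegree_zero]; exact Finset.card_pos.mpr hA0
    · have hdrop : f'.natDegree < f.natDegree :=
        Polynomial.natDegree_lt_natDegree hf'0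
          (hf' ▸ Polynomial.degree_sub_lt hg0deg.symm hf0 hg0lc.symm)
      obtain ⟨Q, hQ1, hQ2, hQ3, hQ4⟩ := ih f'.natDegree (lt_of_lt_of_le hdrop hPt) P'
        (le_of_eq (by rw [hfP']))
      refine ⟨Q, ?_, le_trans hQ2 hP'deg, hQ3, hQ4⟩
      intro s hs a ha
      rw [hQ1 s hs a ha, hPP' s hs a ha]
  by_cases hcase : (A 0).card ≤ f.natDegree
  · refine key (A 0) (f.natDegree - (A 0).card) (Nat.sub_add_cancel hcase) ?_
    intro s a _ ha
    rw [Finset.prod_eq_zero ha (by rw [sub_self]), mul_zero, mul_zero]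
  · by_cases hvan : ∃ s : Fin n → F, (∀ i, s i ∈ A i.succ) ∧ eval s f.leadingCoeff ≠ 0
    · exact ⟨P, fun _ _ _ _ => rfl, le_rfl, lt_of_not_ge hcase, Or.inr hvan⟩
    · push_neg at hvan
      refine key ∅ f.natDegree (by simp) ?_
      intro s a hs _
      rw [hvan s hs, zero_mul]

lemma AF.main {F : Type*} [Field F] [DecidableEq F] :
    ∀ (n : ℕ) (A : Fin n → Finset F), (∀ i, (A i).Nonempty) →
    ∀ P : MvPolynomial (Fin n) F, (∃ x ∈ Fintype.piFinset A, eval x P ≠ 0) →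
    ∃ q : Fin n → ℕ, (∀ i, 1 ≤ q i ∧ q i ≤ (A i).card) ∧
      ((∑ i, ((A i).card : ℤ)) - (P.totalDegree : ℤ) ≤ ∑ i, (q i : ℤ)) ∧
      ∏ i, q i ≤ ((Fintype.piFinset A).filter fun x => eval x P ≠ 0).card := by
  intro n
  induction n with
  | zero =>
    intro A hA P hex
    obtain ⟨x, hx, hPx⟩ := hex
    refine ⟨fun _ => 1, fun i => i.elim0, by simp, ?_⟩
    simp only [Finset.univ_eq_empty, Finset.prod_empty]
    exact Finset.card_pos.mpr ⟨x, Finset.mem_filter.mpr ⟨hx, hPx⟩⟩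
  | succ n ihn =>
    intro A hA P hex
    obtain ⟨Q, hQeval, hQdeg, hQnat, hQalt⟩ :=
      AF.exists_reduced n A (hA 0) (finSuccEquiv F n P).natDegree P le_rfl
    set g := finSuccEquiv F n Q with hg
    set t := g.natDegree with ht
    set lc := g.leadingCoeff with hlcdef
    obtain ⟨x, hx, hPx⟩ := hex
    have hx' : ∀ i, x i ∈ A i := Fintype.mem_piFinset.mp hx
    have hxQ : eval x Q ≠ 0 := by
      have h := hQeval (Fin.tail x) (fun i => hx' i.succ) (x 0) (hx' 0)
      rw [Fin.cons_self_tail] at h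
      rw [h]; exact hPx
    have hQ0 : Q ≠ 0 := by rintro rfl; exact hxQ (by simp)
    obtain ⟨s₀, hs₀, hlcs₀⟩ := hQalt.resolve_left hQ0
    have hg0 : g ≠ 0 := fun h => hQ0 ((finSuccEquiv F n).injective (by rw [← hg, h, map_zero]))
    have hlc0 : lc ≠ 0 := Polynomial.leadingCoeff_ne_zero.mpr hg0
    have hlcQ : lc.totalDegree + t ≤ Q.totalDegree := by
      have := totalDegree_coeff_finSuccEquiv_add_le Q t
        (by rw [← hg, ← Polynomial.leadingCoeff, ← hlcdef]; exact hlc0)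
      rwa [← hg, ← Polynomial.leadingCoeff, ← hlcdef] at this
    obtain ⟨q', hq'1, hq'2, hq'3⟩ := ihn (fun i => A i.succ) (fun i => hA i.succ) lc
      ⟨s₀, Fintype.mem_piFinset.mpr hs₀, hlcs₀⟩
    set c0 := (A 0).card with hc0
    set S₁ := (Fintype.piFinset fun i : Fin n => A i.succ).filter (fun s => eval s lc ≠ 0)
      with hS₁
    have hfiber : ∀ s ∈ S₁, c0 - t ≤ ((A 0).filter fun b => eval (Fin.cons b s) P ≠ 0).card := by
      intro s hs
      obtain ⟨hsg, hlcs⟩ := Finset.mem_filter.mp hs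
      have hsg' : ∀ i, s i ∈ A i.succ := Fintype.mem_piFinset.mp hsg
      set p := g.map (eval s) with hp
      have hcoef : p.coeff t = eval s lc := by
        rw [hp, Polynomial.coeff_map, ← Polynomial.leadingCoeff]
      have hp0 : p ≠ 0 := fun h => hlcs (by rw [← hcoef, h, Polynomial.coeff_zero])
      have hpd : p.natDegree ≤ t := Polynomial.natDegree_map_le
      have count := AF.uni_count p hp0 (A 0)
      have heq : (A 0).filter (fun b => p.eval b ≠ 0) =
          (A 0).filter (fun b => eval (Fin.cons b s) P ≠ 0) := by
        refine Finset.filter_congr fun b hb => ?_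
        rw [← hQeval s hsg' b hb, eval_eq_eval_mv_eval', ← hg, ← hp]
      rw [heq] at count
      omega
    set T : Finset (Fin (n+1) → F) := S₁.biUnion
      (fun s => ((A 0).filter fun b => eval (Fin.cons b s) P ≠ 0).image (fun b => Fin.cons b s))
      with hT
    have hTsub : T ⊆ (Fintype.piFinset A).filter (fun x => eval x P ≠ 0) := by
      intro y hy
      obtain ⟨s, hs, hy2⟩ := Finset.mem_biUnion.mp hy
      obtain ⟨b, hb, rfl⟩ := Finset.mem_image.mp hy2
      obtain ⟨hb0, hbne⟩ := Finset.mem_filter.mp hb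
      refine Finset.mem_filter.mpr ⟨Fintype.mem_piFinset.mpr ?_, hbne⟩
      intro i
      refine Fin.cases ?_ ?_ i
      · simpa using hb0
      · intro j
        simpa using Fintype.mem_piFinset.mp (Finset.mem_filter.mp hs).1 j
    have hTcard : ∑ s ∈ S₁, ((A 0).filter fun b => eval (Fin.cons b s) P ≠ 0).card = T.card := by
      rw [hT, Finset.card_biUnion]
      · refine Finset.sum_congr rfl fun s _ => ?_
        rw [Finset.card_image_of_injective _ (fun b1 b2 h => by simpa using congrFun h 0)]
      · intro s1 h1 s2 h2 hne
        simp only [Finset.disjoint_left]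
        rintro y hy1 hy2
        obtain ⟨b1, _, rfl⟩ := Finset.mem_image.mp hy1
        obtain ⟨b2, _, heq⟩ := Finset.mem_image.mp hy2
        exact hne (by
          have := congrArg Fin.tail heq
          rw [Fin.tail_cons, Fin.tail_cons] at this
          exact this.symm)
    have hcount : (c0 - t) * S₁.card ≤
        ((Fintype.piFinset A).filter (fun x => eval x P ≠ 0)).card := by
      calc (c0 - t) * S₁.card = ∑ _s ∈ S₁, (c0 - t) := by rw [Finset.sum_const, smul_eq_mul,
            mul_comm]
        _ ≤ ∑ s ∈ S₁, ((A 0).filter fun b => eval (Fin.cons b s) P ≠ 0).card :=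
            Finset.sum_le_sum hfiber
        _ = T.card := hTcard
        _ ≤ _ := Finset.card_le_card hTsub
    refine ⟨Fin.cons (c0 - t) q', ?_, ?_, ?_⟩
    · intro i
      refine Fin.cases ?_ ?_ i
      · rw [Fin.cons_zero]
        constructor
        · omega
        · exact Nat.sub_le _ _
      · intro j
        rw [Fin.cons_succ]
        exact hq'1 j
    · rw [Fin.sum_univ_succ, Fin.sum_univ_succ]
      simp only [Fin.cons_zero, Fin.cons_succ]
      have hc1 : ((c0 - t : ℕ) : ℤ) = (c0 : ℤ) - (t : ℤ) := by
        have : t ≤ c0 := le_of_lt hQnat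
        push_cast [this]
        ring
      have hdeg2 : (lc.totalDegree : ℤ) + (t : ℤ) ≤ (P.totalDegree : ℤ) := by
        exact_mod_cast le_trans hlcQ hQdeg
      rw [hc1]
      linarith [hq'2]
    · rw [Fin.prod_univ_succ]
      simp only [Fin.cons_zero, Fin.cons_succ]
      calc (c0 - t) * ∏ i, q' i ≤ (c0 - t) * S₁.card := Nat.mul_le_mul_left _ hq'3
        _ ≤ _ := hcount


/-- The Alon–Füredi theorem (Theorem 13 of the paper): if a multivariate polynomial `P` of
total degree `d` over a field `F` does not vanish identically on a grid `∏ i, A i`, then the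
number of non-vanishing grid points is at least the minimum of `∏ i, q i` over all integer
vectors `q` with `1 ≤ q i ≤ |A i|` and `∑ i, q i ≥ ∑ i, |A i| - d`. -/
theorem alon_furedi {F : Type*} [Field F] [DecidableEq F]
    {ι : Type*} [Fintype ι] [DecidableEq ι]
    (A : ι → Finset F) (hA : ∀ i, (A i).Nonempty)
    (P : MvPolynomial ι F) (d : ℕ) (hd : d = P.totalDegree)
    (hex : ∃ x ∈ Fintype.piFinset A, eval x P ≠ 0) :
    sInf {p : ℕ | ∃ q : ι → ℕ, (∀ i, 1 ≤ q i ∧ q i ≤ (A i).card) ∧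
        (∑ i, ((A i).card : ℤ)) - (d : ℤ) ≤ ∑ i, (q i : ℤ) ∧ p = ∏ i, q i} ≤
      ((Fintype.piFinset A).filter fun x => eval x P ≠ 0).card := by
  classical
  obtain ⟨x₀, hx₀, hPx₀⟩ := hex
  set e : ι ≃ Fin (Fintype.card ι) := Fintype.equivFin ι with he
  set A' : Fin (Fintype.card ι) → Finset F := fun j => A (e.symm j) with hA'
  set P' : MvPolynomial (Fin (Fintype.card ι)) F := rename e P with hP'
  have hevalP' : ∀ y : Fin (Fintype.card ι) → F, eval y P' = eval (y ∘ e) P := by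
    intro y
    rw [hP', eval_rename]
  have hcomp : ∀ x : ι → F, (x ∘ e.symm) ∘ e = x := by
    intro x; funext i; simp
  have hex' : ∃ y ∈ Fintype.piFinset A', eval y P' ≠ 0 := by
    refine ⟨x₀ ∘ e.symm, Fintype.mem_piFinset.mpr fun j =>
      Fintype.mem_piFinset.mp hx₀ _, ?_⟩
    rw [hevalP', hcomp]
    exact hPx₀
  obtain ⟨q', hq'1, hq'2, hq'3⟩ := AF.main (Fintype.card ι) A' (fun j => hA _) P' hex'
  have hcards : ((Fintype.piFinset A').filter fun y => eval y P' ≠ 0).card =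
      ((Fintype.piFinset A).filter fun x => eval x P ≠ 0).card := by
    refine Finset.card_bij' (fun y _ => y ∘ e) (fun x _ => x ∘ e.symm) ?_ ?_ ?_ ?_
    · intro y hy
      obtain ⟨hy1, hy2⟩ := Finset.mem_filter.mp hy
      refine Finset.mem_filter.mpr ⟨Fintype.mem_piFinset.mpr fun i => ?_, ?_⟩
      · have := Fintype.mem_piFinset.mp hy1 (e i)
        rw [hA'] at this
        simpa using this
      · rw [← hevalP']; exact hy2
    · intro x hx
      obtain ⟨hx1, hx2⟩ := Finset.mem_filter.mp hx
      refine Finset.mem_filter.mpr ⟨Fintype.mem_piFinset.mpr fun j =>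
        Fintype.mem_piFinset.mp hx1 _, ?_⟩
      rw [hevalP', hcomp]
      exact hx2
    · intro y _; funext j; simp
    · intro x _; funext i; simp
  have hdP' : (P'.totalDegree : ℤ) ≤ (d : ℤ) := by
    rw [hd]
    exact_mod_cast totalDegree_rename_le _ _
  have hmem : (∏ i, q' (e i)) ∈ {p : ℕ | ∃ q : ι → ℕ, (∀ i, 1 ≤ q i ∧ q i ≤ (A i).card) ∧
      (∑ i, ((A i).card : ℤ)) - (d : ℤ) ≤ ∑ i, (q i : ℤ) ∧ p = ∏ i, q i} := by
    refine ⟨fun i => q' (e i), fun i => ?_, ?_, rfl⟩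
    · have := hq'1 (e i)
      rw [hA'] at this
      simpa using this
    · have hsumA : ∑ j, ((A' j).card : ℤ) = ∑ i, ((A i).card : ℤ) :=
        Equiv.sum_comp e.symm (fun i => ((A i).card : ℤ))
      have hsumq : ∑ i, ((q' (e i) : ℤ)) = ∑ j, ((q' j : ℤ)) :=
        Equiv.sum_comp e (fun j => ((q' j : ℤ)))
      rw [hsumq, ← hsumA]
      linarith [hq'2]
  refine le_trans (Nat.sInf_le hmem) ?_
  have hprod : ∏ i, q' (e i) = ∏ j, q' j := Equiv.prod_comp e _
  rw [hprod, ← hcards]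
  exact hq'3
end

section
/- Let a_1, a_2, …, a_n be positive integers (n ≥ 1) with t = max_i a_i ≥ 2 and S = ∑_{i=1}^n a_i. Then ∏_{i=1}^n a_i ≥ t^((S - n)/(t - 1)), where the right-hand side uses real exponentiation. -/
open Finset

lemma pointwise_aux {a t : ℝ} (ha : 1 ≤ a) (hat : a ≤ t) (ht : 2 ≤ t) :
    t ^ ((a - 1) / (t - 1)) ≤ a := by
  have ht1 : (1:ℝ) < t := by linarith
  have ht0 : (0:ℝ) < t := by linarith
  have ha0 : (0:ℝ) < a := by linarith
  have htm : (0:ℝ) < t - 1 := by linarith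
  have hlogt : 0 < Real.log t := Real.log_pos ht1
  have h1 : (0:ℝ) ≤ (t - a)/(t-1) := div_nonneg (by linarith) htm.le
  have h2 : (0:ℝ) ≤ (a - 1)/(t-1) := div_nonneg (by linarith) htm.le
  have h3 : (t - a)/(t-1) + (a - 1)/(t-1) = 1 := by field_simp; ring
  have hc := strictConcaveOn_log_Ioi.concaveOn.2
      (Set.mem_Ioi.mpr one_pos) (Set.mem_Ioi.mpr ht0) h1 h2 h3
  have hcomb : ((t - a)/(t-1)) • (1:ℝ) + ((a-1)/(t-1)) • t = a := by
    rw [smul_eq_mul, smul_eq_mul, div_mul_eq_mul_div, div_mul_eq_mul_div, ← add_div,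
      div_eq_iff htm.ne']
    ring
  rw [hcomb] at hc
  simp only [smul_eq_mul, Real.log_one, mul_zero, zero_add] at hc
  have hlog : (a - 1) / (t - 1) * Real.log t ≤ Real.log a := hc
  have hexp : (a - 1) / (t - 1) ≤ Real.logb t a := by
    rw [Real.logb, le_div_iff₀ hlogt]
    exact hlog
  calc t ^ ((a - 1) / (t - 1)) ≤ t ^ Real.logb t a :=
        Real.rpow_le_rpow_of_exponent_le ht1.le hexp
    _ = a := Real.rpow_logb ht0 (by linarith) ha0

/-- The technical lemma (Lemma 14 of the paper): for positive integers `a 1, …, a n` with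
maximum `t ≥ 2` and sum `S`, we have `∏ i, a i ≥ t ^ ((S - n)/(t - 1))`. -/
theorem technical_lemma {n : ℕ} (hn : 1 ≤ n) (a : Fin n → ℕ) (ha : ∀ i, 1 ≤ a i)
    (t : ℕ) (ht : t = Finset.univ.sup a) (ht2 : 2 ≤ t)
    (S : ℕ) (hS : S = ∑ i, a i) :
    (t : ℝ) ^ (((S : ℝ) - (n : ℝ)) / ((t : ℝ) - 1)) ≤ ∏ i, (a i : ℝ) := by
  have ht0 : (0:ℝ) < t := by positivity
  have ht2' : (2:ℝ) ≤ t := by exact_mod_cast ht2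
  have hat : ∀ i, (a i : ℝ) ≤ t := by
    intro i
    exact_mod_cast Nat.cast_le.mpr (ht ▸ Finset.le_sup (Finset.mem_univ i))
  have key : ∀ i, (t:ℝ) ^ (((a i : ℝ) - 1) / ((t:ℝ) - 1)) ≤ (a i : ℝ) := fun i =>
    pointwise_aux (by exact_mod_cast ha i) (hat i) ht2'
  have hsum : ((S : ℝ) - (n : ℝ)) / ((t : ℝ) - 1)
      = ∑ i, (((a i : ℝ) - 1) / ((t:ℝ) - 1)) := by
    rw [← Finset.sum_div, Finset.sum_sub_distrib, Finset.sum_const, Finset.card_univ,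
      Fintype.card_fin]
    push_cast [hS]
    ring_nf
  rw [hsum, Real.rpow_sum_of_pos ht0]
  exact Finset.prod_le_prod (fun i _ => (Real.rpow_pos_of_pos ht0 _).le)
    (fun i _ => key i)
end

section
/- Let t and x be real numbers with t ≥ 2 and 1 ≤ x ≤ t. Then t^((x - 1)/(t - 1)) ≤ x, where t^((x-1)/(t-1)) denotes real exponentiation. -/
/-- Inequality (7) of the paper: for real `t ≥ 2` and `1 ≤ x ≤ t`,
`t ^ ((x - 1)/(t - 1)) ≤ x`. -/
theorem convexity_inequality (t x : ℝ) (ht : 2 ≤ t) (hx1 : 1 ≤ x) (hxt : x ≤ t) :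
    t ^ ((x - 1) / (t - 1)) ≤ x := by
  have ht1 : (0:ℝ) < t - 1 := by linarith
  have h := rpow_one_add_le_one_add_mul_self (s := t - 1) (by linarith)
    (p := (x - 1) / (t - 1)) (by apply div_nonneg <;> linarith) (by rw [div_le_one ht1]; linarith)
  rw [div_mul_cancel₀ _ ht1.ne'] at h
  calc t ^ ((x - 1) / (t - 1)) = (1 + (t - 1)) ^ ((x - 1) / (t - 1)) := by ring_nf
    _ ≤ 1 + (x - 1) := h
    _ = x := by ring
end

section
/- Let F be a field, let E be a finite set, let V be a type, let u, v : E → V be functions, and let a, b, c : E → F. Then for every finitely supported exponent vector d : V →₀ ℕ whose total degree ∑_w d(w) equals |E|, the coefficient of the monomial X^d in the multivariate polynomial ∏_{e ∈ E} (a_e·X_{u(e)} + b_e·X_{v(e)} + c_e) over F equals the coefficient of X^d in ∏_{e ∈ E} (a_e·X_{u(e)} + b_e·X_{v(e)}). -/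
open MvPolynomial

/-- Core of Theorem 4 of the paper: adding constant labels `c e` to the linear factors of a
decorated graph polynomial does not change any coefficient of top total degree `|E|`. -/
theorem labels_preserve_top_coefficients {F : Type*} [Field F] {E V : Type*} [Fintype E]
    (u v : E → V) (a b c : E → F) (d : V →₀ ℕ)
    (hd : (d.sum fun _ n => n) = Fintype.card E) :
    coeff d (∏ e : E, (C (a e) * X (u e) + C (b e) * X (v e) + C (c e))) =
      coeff d (∏ e : E, (C (a e) * X (u e) + C (b e) * X (v e))) := by
  classical
  rw [Finset.prod_add]
  rw [coeff_sum]
  rw [Finset.sum_eq_single Finset.univ]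
  · simp
  · intro t ht htne
    apply coeff_eq_zero_of_totalDegree_lt
    calc totalDegree ((∏ e ∈ t, (C (a e) * X (u e) + C (b e) * X (v e))) * ∏ e ∈ tᶜ, C (c e))
        ≤ totalDegree (∏ e ∈ t, (C (a e) * X (u e) + C (b e) * X (v e)))
          + totalDegree (∏ e ∈ tᶜ, C (c e)) := totalDegree_mul _ _
      _ ≤ (∑ e ∈ t, 1) + 0 := by
          gcongr
          · exact (totalDegree_finset_prod _ _).trans (Finset.sum_le_sum fun e _ => by
              refine (totalDegree_add _ _).trans (max_le ?_ ?_) <;>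
                exact le_trans (totalDegree_mul _ _) (by simp [totalDegree_X]))
          · rw [← map_prod]
            exact (totalDegree_C _).le
      _ < Fintype.card E := by
          simp only [Finset.sum_const, smul_eq_mul, mul_one, add_zero]
          exact lt_of_le_of_ne (Finset.card_le_univ t) (fun h => htne
            (Finset.eq_univ_of_card t h))
      _ = d.sum fun _ n => n := hd.symm
  · simp
end

section
/- Let F be a field and let G be a finite simple graph on a linearly ordered vertex type V; write each edge e of G with endpoints u_e < v_e, and assign to each edge e elements a_e, b_e ∈ F. Let d : V → ℕ be defined by d(w) = the number of neighbors u of w in G with u < w. Then the coefficient of the monomial ∏_w X_w^{d(w)} in the decorated graph polynomial D_G = ∏_{e ∈ E(G)} (a_e·X_{u_e} + b_e·X_{v_e}) equals ∏_{e ∈ E(G)} b_e. -/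
open MvPolynomial Finset

section Aux

variable {F : Type*} [CommRing F] {V : Type*} [LinearOrder V] {ι : Type*} [DecidableEq ι]

/-- Degree bound: in the product of linear forms, the exponent of `X w` in any monomial
with nonzero coefficient is at most the number of factors mentioning `w`. -/
lemma coeff_prod_linear_bound (f g : ι → V) (a b : ι → F) :
    ∀ (t : Finset ι) (D : V →₀ ℕ),
      coeff D (∏ i ∈ t, (C (a i) * X (f i) + C (b i) * X (g i))) ≠ 0 →
      ∀ w, D w ≤ (t.filter fun i => f i = w ∨ g i = w).card := by
  intro t
  induction t using Finset.induction with
  | empty =>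
    intro D h w
    simp only [Finset.prod_empty] at h
    rw [coeff_one] at h
    have : (0 : V →₀ ℕ) = D := by by_contra hne; simp [hne] at h
    simp [← this]
  | @insert i t hi ih =>
    intro D h w
    rw [Finset.prod_insert hi, coeff_mul] at h
    obtain ⟨⟨d1, d2⟩, hmem, hne⟩ := Finset.exists_ne_zero_of_sum_ne_zero h
    have hd : d1 + d2 = D := Finset.HasAntidiagonal.mem_antidiagonal.mp hmem
    have h1 : coeff d1 (C (a i) * X (f i) + C (b i) * X (g i)) ≠ 0 :=
      fun hh => hne (by rw [hh, zero_mul])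
    have h2 : coeff d2 (∏ j ∈ t, (C (a j) * X (f j) + C (b j) * X (g j))) ≠ 0 :=
      fun hh => hne (by rw [hh, mul_zero])
    have hb2 := ih d2 h2 w
    have hd1 : d1 w ≤ if f i = w ∨ g i = w then 1 else 0 := by
      have hcases : Finsupp.single (f i) 1 = d1 ∨ Finsupp.single (g i) 1 = d1 := by
        by_contra hc
        push_neg at hc
        rw [coeff_add, coeff_C_mul, coeff_C_mul, coeff_X', coeff_X',
          if_neg hc.1, if_neg hc.2, mul_zero, mul_zero, add_zero] at h1
        exact h1 rfl
      rcases hcases with rfl | rfl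
      · rw [Finsupp.single_apply]
        split_ifs with h3 h4 h4
        · exact le_refl 1
        · exact absurd (Or.inl h3) h4
        · exact Nat.zero_le 1
        · exact le_refl 0
      · rw [Finsupp.single_apply]
        split_ifs with h3 h4 h4
        · exact le_refl 1
        · exact absurd (Or.inr h3) h4
        · exact Nat.zero_le 1
        · exact le_refl 0
    rw [Finset.filter_insert]
    have hDw : D w = d1 w + d2 w := by rw [← hd]; rfl
    split_ifs with hcond
    · rw [Finset.card_insert_of_notMem (fun hmem' => hi (Finset.mem_of_mem_filter _ hmem'))]
      rw [if_pos hcond] at hd1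
      omega
    · rw [if_neg hcond] at hd1
      omega

/-- Key lemma: coefficient extraction by picking a factor with maximal larger endpoint. -/
lemma coeff_prod_linear (f g : ι → V) (a b : ι → F) :
    ∀ (n : ℕ) (t : Finset ι), t.card = n → (∀ i ∈ t, f i < g i) →
      ∀ (D : V →₀ ℕ), (∀ w, D w = (t.filter fun i => g i = w).card) →
      coeff D (∏ i ∈ t, (C (a i) * X (f i) + C (b i) * X (g i))) = ∏ i ∈ t, b i := by
  intro n
  induction n with
  | zero =>
    intro t hcard _ D hD
    rw [Finset.card_eq_zero] at hcard
    subst hcard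
    have : D = 0 := by
      ext w
      simp [hD w]
    simp [this]
  | succ n ih =>
    intro t hcard hfg D hD
    have hne : t.Nonempty := by rw [← Finset.card_pos, hcard]; omega
    obtain ⟨i, hit, hmax⟩ := t.exists_max_image g hne
    have hins : t = insert i (t.erase i) := (Finset.insert_erase hit).symm
    rw [hins, Finset.prod_insert (Finset.notMem_erase i t),
      Finset.prod_insert (Finset.notMem_erase i t)]
    rw [add_mul, coeff_add]
    set P := ∏ j ∈ t.erase i, (C (a j) * X (f j) + C (b j) * X (g j)) with hP
    -- the g-value count at g i
    have hDgi : 1 ≤ D (g i) := by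
      rw [hD]
      exact Finset.card_pos.mpr ⟨i, Finset.mem_filter.mpr ⟨hit, rfl⟩⟩
    -- erase-filter cardinality facts
    have herase : ∀ w, ((t.erase i).filter fun j => g j = w).card
        = (t.filter fun j => g j = w).card - (if g i = w then 1 else 0) := by
      intro w
      rw [Finset.filter_erase]
      split_ifs with hgw
      · rw [Finset.card_erase_of_mem (Finset.mem_filter.mpr ⟨hit, hgw⟩)]
      · rw [Finset.erase_eq_of_notMem]
        · omega
        · intro hmem; exact hgw (Finset.mem_filter.mp hmem).2
    -- first summand is zero
    have hzero : coeff D (C (a i) * X (f i) * P) = 0 := by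
      rw [mul_assoc, coeff_C_mul, coeff_X_mul']
      split_ifs with hsupp
      · have hPzero : coeff (D - Finsupp.single (f i) 1) P = 0 := by
          by_contra habs
          have hbound := coeff_prod_linear_bound f g a b (t.erase i)
            (D - Finsupp.single (f i) 1) habs (g i)
          have hval : (D - Finsupp.single (f i) 1 : V →₀ ℕ) (g i) = D (g i) := by
            rw [Finsupp.tsub_apply, Finsupp.single_apply,
              if_neg (ne_of_lt (hfg i hit)), Nat.sub_zero]
          have hfilt : ((t.erase i).filter fun j => f j = g i ∨ g j = g i)
              = (t.erase i).filter fun j => g j = g i := by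
            apply Finset.filter_congr
            intro j hj
            have hjt := Finset.mem_of_mem_erase hj
            have hlt : f j < g i := lt_of_lt_of_le (hfg j hjt) (hmax j hjt)
            constructor
            · rintro (hh | hh)
              · exact absurd hh (ne_of_lt hlt)
              · exact hh
            · exact Or.inr
          rw [hval, hfilt, herase (g i), if_pos rfl, hD (g i)] at hbound
          have h1le : 1 ≤ (t.filter fun j => g j = g i).card :=
            Finset.card_pos.mpr ⟨i, Finset.mem_filter.mpr ⟨hit, rfl⟩⟩
          omega
        rw [hPzero, mul_zero]
      · exact mul_zero _
    rw [hzero, zero_add, mul_assoc, coeff_C_mul, coeff_X_mul',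
      if_pos (Finsupp.mem_support_iff.mpr (by omega))]
    congr 1
    apply ih (t.erase i)
    · rw [Finset.card_erase_of_mem hit, hcard]
      omega
    · exact fun j hj => hfg j (Finset.mem_of_mem_erase hj)
    · intro w
      rw [Finsupp.tsub_apply, Finsupp.single_apply, herase w, hD w]

end Aux

/-- The monomial corresponding to the acyclic orientation directing every edge towards its
larger endpoint appears in the decorated graph polynomial
`D_G = ∏_{e ∈ E(G)} (a_e·X_{min e} + b_e·X_{max e})` with coefficient `∏_{e ∈ E(G)} b_e`:
the exponent of `X_w` is the number of neighbors of `w` smaller than `w`. -/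
theorem coeff_acyclic_orientation_monomial {F : Type*} [Field F]
    {V : Type*} [Fintype V] [LinearOrder V]
    (G : SimpleGraph V) [DecidableRel G.Adj]
    (a b : Sym2 V → F) (D : V →₀ ℕ)
    (hD : ∀ w, D w = ((G.neighborFinset w).filter fun u => u < w).card) :
    coeff D (∏ e ∈ G.edgeFinset, (C (a e) * X e.inf + C (b e) * X e.sup)) =
      ∏ e ∈ G.edgeFinset, b e := by
  classical
  apply coeff_prod_linear Sym2.inf Sym2.sup a b G.edgeFinset.card G.edgeFinset rfl
  · intro e he
    induction e using Sym2.ind with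
    | _ u v =>
      have hadj : G.Adj u v := (SimpleGraph.mem_edgeFinset.mp he)
      have hne : u ≠ v := hadj.ne
      simp only [Sym2.inf_mk, Sym2.sup_mk]
      rcases lt_or_gt_of_ne hne with h | h
      · rw [inf_eq_left.mpr h.le, sup_eq_right.mpr h.le]; exact h
      · rw [inf_eq_right.mpr h.le, sup_eq_left.mpr h.le]; exact h
  · intro w
    rw [hD w]
    apply Finset.card_bij (fun u _ => s(u, w))
    · intro u hu
      obtain ⟨hnb, hlt⟩ := Finset.mem_filter.mp hu
      have hadj : G.Adj w u := (SimpleGraph.mem_neighborFinset _ _ _).mp hnb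
      refine Finset.mem_filter.mpr ⟨SimpleGraph.mem_edgeFinset.mpr hadj.symm, ?_⟩
      simp [Sym2.sup_mk, sup_eq_right.mpr hlt.le]
    · intro u1 hu1 u2 hu2 heq
      have := Sym2.eq_iff.mp heq
      rcases this with ⟨h, _⟩ | ⟨h1, h2⟩
      · exact h
      · exact h1.trans h2
    · intro e he
      obtain ⟨hee, hsup⟩ := Finset.mem_filter.mp he
      induction e using Sym2.ind with
      | _ u v =>
        have hadj : G.Adj u v := SimpleGraph.mem_edgeFinset.mp hee
        simp only [Sym2.sup_mk] at hsup
        rcases lt_or_gt_of_ne hadj.ne with h | h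
        · have hvw : v = w := by rw [← hsup, sup_eq_right.mpr h.le]
          subst hvw
          refine ⟨u, Finset.mem_filter.mpr ⟨?_, h⟩, rfl⟩
          exact (SimpleGraph.mem_neighborFinset _ _ _).mpr hadj.symm
        · have hvw : u = w := by rw [← hsup, sup_eq_left.mpr h.le]
          subst hvw
          refine ⟨v, Finset.mem_filter.mpr ⟨?_, h⟩, ?_⟩
          · exact (SimpleGraph.mem_neighborFinset _ _ _).mpr hadj
          · exact Sym2.eq_swap
end

section
/- Let F be a field, let k be a natural number, and let G be a finite simple graph on a linearly ordered vertex type V such that every vertex has at most k neighbors strictly smaller than it. Assign to each edge e of G (with endpoints u_e < v_e) elements a_e, b_e ∈ F with a_e ≠ 0 and b_e ≠ 0. Then the decorated graph polynomial D_G = ∏_{e ∈ E(G)} (a_e·X_{u_e} + b_e·X_{v_e}) has a monomial with nonzero coefficient whose total degree equals the number of edges of G and in which every variable has degree at most k. -/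
open MvPolynomial Finset

lemma sym2_mk_inf_sup {V : Type*} [LinearOrder V] (e : Sym2 V) :
    s(e.inf, e.sup) = e := Sym2.sortEquiv.symm_apply_apply e

lemma coeff_eq_zero_of_degreeOf_lt' {F : Type*} [CommSemiring F] {V : Type*}
    {p : MvPolynomial V F} {m : V →₀ ℕ} {w : V} (h : degreeOf w p < m w) :
    coeff m p = 0 := by
  by_contra hc
  exact absurd (monomial_le_degreeOf w (by rwa [mem_support_iff])) (not_le.mpr h)

lemma degreeOf_prod_aux {F : Type*} [Field F] {V : Type*} [LinearOrder V]
    (w : V) (a b : Sym2 V → F) (s : Finset (Sym2 V))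
    (h : ∀ e ∈ s, e.inf ≠ w) :
    degreeOf w (∏ e ∈ s, (C (a e) * X e.inf + C (b e) * X e.sup)) ≤
      (s.filter fun e => e.sup = w).card := by
  classical
  induction s using Finset.induction with
  | empty =>
    rw [Finset.prod_empty, ← C_1, degreeOf_C]
    simp
  | @insert x s hx ih =>
    rw [Finset.prod_insert hx]
    have hL : degreeOf w (C (a x) * X x.inf + C (b x) * X x.sup) ≤
        if x.sup = w then 1 else 0 := by
      refine le_trans (degreeOf_add_le _ _ _) ?_
      have h1 : degreeOf w (C (a x) * X x.inf) ≤ 0 := by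
        refine le_trans (degreeOf_C_mul_le _ _ _) ?_
        rw [degreeOf_X]
        simp [Ne.symm (h x (Finset.mem_insert_self x s))]
      have h2 : degreeOf w (C (b x) * X x.sup) ≤ if x.sup = w then 1 else 0 := by
        refine le_trans (degreeOf_C_mul_le _ _ _) ?_
        rw [degreeOf_X]
        split <;> simp_all [eq_comm]
      refine max_le (le_trans h1 ?_) h2
      exact Nat.zero_le _
    have ihs := ih (fun e he => h e (Finset.mem_insert_of_mem he))
    refine le_trans (degreeOf_mul_le _ _ _) ?_
    by_cases hxw : x.sup = w
    · rw [if_pos hxw] at hL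
      rw [Finset.filter_insert, if_pos hxw,
        Finset.card_insert_of_notMem (fun hc => hx (Finset.mem_of_mem_filter _ hc))]
      omega
    · rw [if_neg hxw] at hL
      rw [Finset.filter_insert, if_neg hxw]
      omega

lemma key_coeff {F : Type*} [Field F] {V : Type*} [LinearOrder V]
    (a b : Sym2 V → F) (s : Finset (Sym2 V)) (hs : ∀ e ∈ s, e.inf < e.sup) :
    coeff (∑ e ∈ s, Finsupp.single e.sup 1)
      (∏ e ∈ s, (C (a e) * X e.inf + C (b e) * X e.sup)) = ∏ e ∈ s, b e := by
  classical
  induction s using Finset.strongInduction with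
  | _ s ih =>
    rcases s.eq_empty_or_nonempty with rfl | hne
    · simp
    obtain ⟨e, he, hmax⟩ := s.exists_max_image Sym2.sup hne
    rw [← Finset.mul_prod_erase _ _ he, ← Finset.add_sum_erase _ _ he,
      ← Finset.mul_prod_erase _ _ he]
    set P := ∏ x ∈ s.erase e, (C (a x) * X x.inf + C (b x) * X x.sup) with hP
    set D' : V →₀ ℕ := ∑ x ∈ s.erase e, Finsupp.single x.sup 1 with hD'
    have hD'app : ∀ w, D' w = ((s.erase e).filter fun x => x.sup = w).card := by
      intro w
      rw [hD', ← Finsupp.applyAddHom_apply, map_sum]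
      simp only [Finsupp.applyAddHom_apply, Finsupp.single_apply, Finset.sum_boole,
        Nat.cast_id]
    have hne' : e.inf ≠ e.sup := ne_of_lt (hs e he)
    have hdeg : degreeOf e.sup P ≤ ((s.erase e).filter fun x => x.sup = e.sup).card := by
      refine degreeOf_prod_aux _ a b _ ?_
      intro x hx
      exact ne_of_lt (lt_of_lt_of_le (hs x (Finset.mem_of_mem_erase hx))
        (hmax x (Finset.mem_of_mem_erase hx)))
    have hbad : coeff (Finsupp.single e.sup 1 + D') (X e.inf * P) = 0 := by
      rw [coeff_X_mul']
      split
      · refine coeff_eq_zero_of_degreeOf_lt' (w := e.sup) ?_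
        have : (Finsupp.single e.sup 1 + D' - Finsupp.single e.inf 1 : V →₀ ℕ) e.sup =
            1 + D' e.sup := by
          rw [Finsupp.tsub_apply, Finsupp.add_apply, Finsupp.single_apply, Finsupp.single_apply]
          simp [hne', Ne.symm hne']
        rw [this, hD'app]
        omega
      · rfl
    have hgood : coeff (Finsupp.single e.sup 1 + D') (X e.sup * P) = coeff D' P :=
      coeff_X_mul _ _ _
    have hexp : (C (a e) * X e.inf + C (b e) * X e.sup) * P =
        C (a e) * (X e.inf * P) + C (b e) * (X e.sup * P) := by ring
    rw [hexp, coeff_add, coeff_C_mul, coeff_C_mul, hbad, hgood, mul_zero, zero_add,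
      ih (s.erase e) (Finset.erase_ssubset he) (fun x hx => hs x (Finset.mem_of_mem_erase hx))]

/-- If every vertex of `G` has at most `k` smaller neighbors and all decoration coefficients
are nonzero, then the decorated graph polynomial `D_G` has a non-vanishing monomial of total
degree `|E(G)|` in which every variable has degree at most `k`
(the inequality `Â_F(D_G) ≤ col(G) - 1` of the paper). -/
theorem decorated_poly_nonvanishing_monomial {F : Type*} [Field F]
    {V : Type*} [Fintype V] [LinearOrder V] (k : ℕ)
    (G : SimpleGraph V) [DecidableRel G.Adj]
    (hcol : ∀ w : V, ((G.neighborFinset w).filter fun u => u < w).card ≤ k)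
    (a b : Sym2 V → F)
    (ha : ∀ e ∈ G.edgeFinset, a e ≠ 0) (hb : ∀ e ∈ G.edgeFinset, b e ≠ 0) :
    ∃ D : V →₀ ℕ,
      coeff D (∏ e ∈ G.edgeFinset, (C (a e) * X e.inf + C (b e) * X e.sup)) ≠ 0 ∧
      (D.sum fun _ n => n) = G.edgeFinset.card ∧
      ∀ w, D w ≤ k := by
  classical
  have hproper : ∀ e ∈ G.edgeFinset, e.inf < e.sup := by
    intro e he
    induction e with
    | _ u v =>
      rw [Sym2.inf_mk, Sym2.sup_mk]
      rw [SimpleGraph.mem_edgeFinset, SimpleGraph.mem_edgeSet] at he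
      exact min_lt_max.mpr (G.ne_of_adj he)
  refine ⟨∑ e ∈ G.edgeFinset, Finsupp.single e.sup 1, ?_, ?_, ?_⟩
  · rw [key_coeff a b _ hproper]
    exact Finset.prod_ne_zero_iff.mpr hb
  · rw [Finsupp.sum_fintype _ _ (fun _ => rfl)]
    have : ∀ w : V, (∑ e ∈ G.edgeFinset, Finsupp.single e.sup 1) w =
        ∑ e ∈ G.edgeFinset, (Finsupp.single e.sup 1 : V →₀ ℕ) w := by
      intro w
      rw [← Finsupp.applyAddHom_apply, map_sum]
      rfl
    simp_rw [this]
    rw [Finset.sum_comm]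
    simp [Finsupp.single_apply]
  · intro w
    have hDw : (∑ e ∈ G.edgeFinset, Finsupp.single e.sup 1) w =
        (G.edgeFinset.filter fun e => e.sup = w).card := by
      rw [← Finsupp.applyAddHom_apply, map_sum]
      simp only [Finsupp.applyAddHom_apply, Finsupp.single_apply, Finset.sum_boole,
        Nat.cast_id]
    rw [hDw]
    refine le_trans (Finset.card_le_card_of_injOn Sym2.inf ?_ ?_) (hcol w)
    · intro e hee
      rw [Finset.mem_coe, Finset.mem_filter] at hee
      obtain ⟨he, hsup⟩ := hee
      have hmk : s(e.inf, w) = e := by rw [← hsup]; exact sym2_mk_inf_sup e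
      have hadj : G.Adj e.inf w := by
        rw [SimpleGraph.mem_edgeFinset, ← hmk, SimpleGraph.mem_edgeSet] at he
        exact he
      rw [Finset.mem_coe, Finset.mem_filter, SimpleGraph.mem_neighborFinset]
      exact ⟨hadj.symm, hsup ▸ hproper e he⟩
    · intro e1 h1 e2 h2 hinf
      simp only [Finset.coe_filter, Set.mem_setOf_eq] at h1 h2
      rw [← sym2_mk_inf_sup e1, ← sym2_mk_inf_sup e2, h1.2, h2.2, hinf]
end

section
/- Let F be a field, let k be a natural number, and let G be a finite simple graph on a linearly ordered vertex type V such that every vertex has at most k neighbors strictly smaller than it. Assign to each edge e of G (with endpoints u_e < v_e) elements a_e, b_e, c_e ∈ F with a_e ≠ 0 and b_e ≠ 0, and assign to each vertex w a finite set A_w ⊆ F with |A_w| ≥ k + 1. Then there exists a function f : V → F with f(w) ∈ A_w for every vertex w such that a_e·f(u_e) + b_e·f(v_e) + c_e ≠ 0 for every edge e of G. -/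
open Finset

noncomputable def greedyFun {F V : Type*} [Field F] [DecidableEq F] [Fintype V] [LinearOrder V]
    (G : SimpleGraph V) [DecidableRel G.Adj] (a b c : Sym2 V → F) (A : V → Finset F)
    (w : V) : F :=
  if h : (A w \ ((G.neighborFinset w).filter (fun u => u < w)).attach.image
      (fun u => (-(a s(u.1, w) * greedyFun G a b c A u.1) - c s(u.1, w)) / b s(u.1, w))).Nonempty
  then h.choose else 0
termination_by (Finset.univ.filter (· < w)).card
decreasing_by
 all_goals
  have hu : (u : V) < w := (Finset.mem_filter.mp u.2).2
  refine Finset.card_lt_card ⟨fun x hx => ?_, fun hsub => ?_⟩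
  · simp only [Finset.mem_filter, Finset.mem_univ, true_and] at hx ⊢
    exact hx.trans hu
  · have := hsub (Finset.mem_filter.mpr ⟨Finset.mem_univ _, hu⟩)
    simp at this

theorem greedyFun_mem {F V : Type*} [Field F] [DecidableEq F] [Fintype V] [LinearOrder V] (k : ℕ)
    (G : SimpleGraph V) [DecidableRel G.Adj]
    (hcol : ∀ w : V, ((G.neighborFinset w).filter fun u => u < w).card ≤ k)
    (a b c : Sym2 V → F) (A : V → Finset F) (hA : ∀ w, k + 1 ≤ (A w).card) (w : V) :
    greedyFun G a b c A w ∈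
      A w \ (((G.neighborFinset w).filter (fun u => u < w)).attach.image
      fun u => (-(a s(u.1, w) * greedyFun G a b c A u.1) - c s(u.1, w)) / b s(u.1, w)) := by
  set forb := ((G.neighborFinset w).filter (fun u => u < w)).attach.image
      fun u => (-(a s(u.1, w) * greedyFun G a b c A u.1) - c s(u.1, w)) / b s(u.1, w) with hforb
  have hcard : forb.card ≤ k := by
    calc forb.card ≤ _ := Finset.card_image_le
    _ = _ := Finset.card_attach
    _ ≤ k := hcol w
  have h : (A w \ forb).Nonempty := by
    rw [← Finset.card_pos]
    have := Finset.le_card_sdiff forb (A w)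
    have := hA w
    omega
  rw [greedyFun, ← hforb, dif_pos h]
  exact h.choose_spec

/-- Field choosability for `k`-degenerately ordered graphs: if every vertex of `G` has at most
`k` smaller neighbors, the decoration coefficients `a e, b e` are nonzero, and each vertex `w`
has a list `A w` of at least `k + 1` elements of `F`, then there is a coloring `f` from the
lists with `a_e·f(min e) + b_e·f(max e) + c_e ≠ 0` for every edge `e`. -/
theorem field_choosable_of_degenerate {F : Type*} [Field F]
    {V : Type*} [Fintype V] [LinearOrder V] (k : ℕ)
    (G : SimpleGraph V) [DecidableRel G.Adj]
    (hcol : ∀ w : V, ((G.neighborFinset w).filter fun u => u < w).card ≤ k)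
    (a b c : Sym2 V → F)
    (ha : ∀ e ∈ G.edgeFinset, a e ≠ 0) (hb : ∀ e ∈ G.edgeFinset, b e ≠ 0)
    (A : V → Finset F) (hA : ∀ w, k + 1 ≤ (A w).card) :
    ∃ f : V → F, (∀ w, f w ∈ A w) ∧
      ∀ e ∈ G.edgeFinset, a e * f e.inf + b e * f e.sup + c e ≠ 0 := by
  classical
  refine ⟨greedyFun G a b c A,
    fun w => (Finset.mem_sdiff.mp (greedyFun_mem k G hcol a b c A hA w)).1, ?_⟩
  intro e he
  rw [SimpleGraph.mem_edgeFinset] at he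
  induction e using Sym2.ind with
  | _ x y =>
    rw [SimpleGraph.mem_edgeSet] at he
    wlog hxy : x < y generalizing x y
    · rw [Sym2.eq_swap]
      exact this y x he.symm ((he.ne'.lt_or_gt).resolve_right hxy)
    have hb' : b s(x, y) ≠ 0 := hb _ (SimpleGraph.mem_edgeFinset.mpr he)
    have hinf : (s(x, y) : Sym2 V).inf = x := by
      rw [Sym2.inf_mk, inf_eq_left.mpr hxy.le]
    have hsup : (s(x, y) : Sym2 V).sup = y := by
      rw [Sym2.sup_mk, sup_eq_right.mpr hxy.le]
    rw [hinf, hsup]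
    have hmem := greedyFun_mem k G hcol a b c A hA y
    have hx : x ∈ (G.neighborFinset y).filter (fun u => u < y) :=
      Finset.mem_filter.mpr ⟨(SimpleGraph.mem_neighborFinset _ _ _).mpr he.symm, hxy⟩
    intro h0
    apply (Finset.mem_sdiff.mp hmem).2
    refine Finset.mem_image.mpr ⟨⟨x, hx⟩, Finset.mem_attach _ _, ?_⟩
    show (-(a s(x, y) * greedyFun G a b c A x) - c s(x, y)) / b s(x, y) =
      greedyFun G a b c A y
    rw [div_eq_iff hb']
    linear_combination -h0
end

section
/- Let F be a field, let k ≥ 1 be a natural number, and let G be a finite simple graph with n vertices and m edges on a linearly ordered vertex type V such that every vertex has at most k neighbors strictly smaller than it. Assign to each edge e of G (with endpoints u_e < v_e) elements a_e, b_e, c_e ∈ F with a_e ≠ 0 and b_e ≠ 0, and assign to each vertex w a finite set A_w ⊆ F with |A_w| = k + 1. Then the number of functions f : V → F with f(w) ∈ A_w for every vertex w and with a_e·f(u_e) + b_e·f(v_e) + c_e ≠ 0 for every edge e of G is at least (k+1)^((k·n - m)/k), with real exponentiation. -/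
open Finset

section Aux

variable {F : Type*} [Field F] [DecidableEq F]
    {V : Type*} [Fintype V] [LinearOrder V] [DecidableEq V]
    (G : SimpleGraph V) [DecidableRel G.Adj] (a b c : Sym2 V → F) (A : V → Finset F)

/-- `f` satisfies all edge constraints for edges fully inside `s`. -/
def CFCgood (s : Finset V) (f : V → F) : Prop :=
  ∀ e ∈ G.edgeFinset, (∀ v ∈ e, v ∈ s) → a e * f e.inf + b e * f e.sup + c e ≠ 0

instance CFCgoodDec (s : Finset V) : DecidablePred (CFCgood G a b c s) := fun f => by
  unfold CFCgood; infer_instance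

/-- Number of partial colorings: functions in `piFinset A` good on `s`. -/
def CFCN (s : Finset V) : ℕ :=
  ((Fintype.piFinset A).filter (CFCgood G a b c s)).card

lemma cfc_good_update {s : Finset V} {w : V} (hw : w ∉ s) (f : V → F) (x : F) :
    CFCgood G a b c s (Function.update f w x) ↔ CFCgood G a b c s f := by
  unfold CFCgood
  refine forall₂_congr fun e he => imp_congr_right fun hsub => ?_
  have h1 : e.inf ∈ e := by
    induction e using Sym2.ind with
    | _ u v => rw [Sym2.inf_mk]; rcases min_choice u v with h | h <;> rw [h] <;> simp
  have h2 : e.sup ∈ e := by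
    induction e using Sym2.ind with
    | _ u v => rw [Sym2.sup_mk]; rcases max_choice u v with h | h <;> rw [h] <;> simp
  have hi : e.inf ≠ w := fun h => hw (h ▸ hsub _ h1)
  have hs : e.sup ≠ w := fun h => hw (h ▸ hsub _ h2)
  rw [Function.update_of_ne hi, Function.update_of_ne hs]

lemma cfc_mem_piFinset_update {f : V → F} (hf : f ∈ Fintype.piFinset A) {w : V} {x : F}
    (hx : x ∈ A w) : Function.update f w x ∈ Fintype.piFinset A := by
  rw [Fintype.mem_piFinset] at hf ⊢
  intro v
  rcases eq_or_ne v w with rfl | h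
  · simpa using hx
  · rw [Function.update_of_ne h]; exact hf v

/-- Pointwise extension bound: the number of allowed colors of `w` is at least
`k + 1 - d` where `d` is the back-degree of `w`. -/
lemma cfc_card_allowed (k : ℕ)
    (ha : ∀ e ∈ G.edgeFinset, a e ≠ 0) (hb : ∀ e ∈ G.edgeFinset, b e ≠ 0)
    (hA : ∀ w, (A w).card = k + 1)
    {s' : Finset V} {w : V} (hw : w ∉ s') (hlt : ∀ u ∈ s', u < w)
    {g : V → F} (hg : CFCgood G a b c s' g) :
    k + 1 - ((G.neighborFinset w).filter fun u => u < w).card ≤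
      ((A w).filter fun x => CFCgood G a b c (insert w s') (Function.update g w x)).card := by
  classical
  set D := (G.neighborFinset w).filter fun u => u < w with hD
  set Bad : Finset F := D.image fun u => (-(a s(u, w) * g u + c s(u, w))) / b s(u, w) with hBad
  have hsub : A w \ Bad ⊆
      (A w).filter fun x => CFCgood G a b c (insert w s') (Function.update g w x) := by
    intro x hx
    rw [Finset.mem_sdiff] at hx
    rw [Finset.mem_filter]
    refine ⟨hx.1, ?_⟩
    intro e he hesub
    by_cases hwe : w ∈ e
    · obtain ⟨u, rfl⟩ := Sym2.mem_iff_exists.1 hwe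
      have hadj : G.Adj w u := by
        rwa [SimpleGraph.mem_edgeFinset, SimpleGraph.mem_edgeSet] at he
      have hne : w ≠ u := G.ne_of_adj hadj
      have hu : u ∈ s' := by
        have := hesub u (by simp)
        rcases Finset.mem_insert.1 this with h | h
        · exact absurd h.symm hne
        · exact h
      have huw : u < w := hlt u hu
      have hinf : (s(w, u)).inf = u := by
        rw [Sym2.inf_mk]; exact min_eq_right huw.le
      have hsup : (s(w, u)).sup = w := by
        rw [Sym2.sup_mk]; exact max_eq_left huw.le
      rw [hinf, hsup, Function.update_self, Function.update_of_ne (ne_of_lt huw)]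
      intro habs
      apply hx.2
      rw [hBad, Finset.mem_image]
      refine ⟨u, ?_, ?_⟩
      · rw [hD, Finset.mem_filter, SimpleGraph.mem_neighborFinset]
        exact ⟨hadj, huw⟩
      · have hswu : s(u, w) = s(w, u) := Sym2.eq_swap
        rw [hswu]
        have hbne : b s(w, u) ≠ 0 := hb _ he
        rw [div_eq_iff hbne]
        linear_combination -habs
    · have hesub' : ∀ v ∈ e, v ∈ s' := by
        intro v hv
        rcases Finset.mem_insert.1 (hesub v hv) with h | h
        · exact absurd (h ▸ hv) hwe
        · exact h
      have h1 : e.inf ∈ e := by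
        induction e using Sym2.ind with
        | _ u v => rw [Sym2.inf_mk]; rcases min_choice u v with h | h <;> rw [h] <;> simp
      have h2 : e.sup ∈ e := by
        induction e using Sym2.ind with
        | _ u v => rw [Sym2.sup_mk]; rcases max_choice u v with h | h <;> rw [h] <;> simp
      have hi : e.inf ≠ w := fun h => hwe (h ▸ h1)
      have hs2 : e.sup ≠ w := fun h => hwe (h ▸ h2)
      rw [Function.update_of_ne hi, Function.update_of_ne hs2]
      exact hg e he hesub'
  calc k + 1 - D.card ≤ (A w).card - Bad.card := by
        have h1 : Bad.card ≤ D.card := Finset.card_image_le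
        rw [hA w]
        omega
    _ ≤ (A w \ Bad).card := Finset.le_card_sdiff _ _
    _ ≤ _ := Finset.card_le_card hsub

/-- Key step: adding a new maximal vertex `w` to `s'`. -/
lemma cfc_step (k : ℕ)
    (ha : ∀ e ∈ G.edgeFinset, a e ≠ 0) (hb : ∀ e ∈ G.edgeFinset, b e ≠ 0)
    (hA : ∀ w, (A w).card = k + 1)
    {s' : Finset V} {w : V} (hw : w ∉ s') (hlt : ∀ u ∈ s', u < w) :
    (k + 1 - ((G.neighborFinset w).filter fun u => u < w).card) * CFCN G a b c A s' ≤
      (k + 1) * CFCN G a b c A (insert w s') := by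
  classical
  obtain ⟨x₀, hx₀⟩ : (A w).Nonempty := by
    rw [← Finset.card_pos, hA w]; omega
  set d := ((G.neighborFinset w).filter fun u => u < w).card with hd
  set B := (Fintype.piFinset A).filter
    (fun g => CFCgood G a b c s' g ∧ g w = x₀) with hB
  have hupdmem : ∀ g ∈ B, ∀ x ∈ A w, Function.update g w x ∈ Fintype.piFinset A := by
    intro g hg x hx
    rw [hB, Finset.mem_filter] at hg
    exact cfc_mem_piFinset_update A hg.1 hx
  -- N s' = (k+1) * B.card
  have h1 : CFCN G a b c A s' = (k + 1) * B.card := by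
    unfold CFCN
    have hfib := Finset.card_eq_sum_card_fiberwise
      (f := fun f => Function.update f w x₀) (t := B)
      (s := (Fintype.piFinset A).filter (CFCgood G a b c s'))
      (by
        intro f hf
        simp only [Finset.mem_coe, Finset.mem_filter] at hf
        rw [hB, Finset.mem_coe, Finset.mem_filter]
        refine ⟨cfc_mem_piFinset_update A hf.1 hx₀, ?_, by simp⟩
        rw [cfc_good_update G a b c hw]; exact hf.2)
    rw [hfib]
    have hcongr : ∀ g ∈ B, (((Fintype.piFinset A).filter (CFCgood G a b c s')).filter
        fun f => Function.update f w x₀ = g).card = k + 1 := by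
      intro g hg
      have hgB := hg
      rw [hB, Finset.mem_filter] at hgB
      rw [← hA w]
      refine Finset.card_bij' (fun f _ => f w) (fun x _ => Function.update g w x)
        ?_ ?_ ?_ ?_
      · intro f hf
        simp only [Finset.mem_filter] at hf
        exact (Fintype.mem_piFinset.1 hf.1.1) w
      · intro x hx
        simp only [Finset.mem_filter]
        refine ⟨⟨cfc_mem_piFinset_update A hgB.1 hx, ?_⟩, ?_⟩
        · rw [cfc_good_update G a b c hw]; exact hgB.2.1
        · funext v
          rcases eq_or_ne v w with rfl | h
          · simp [hgB.2.2]
          · simp [Function.update_of_ne h]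
      · intro f hf'
        simp only [Finset.mem_filter] at hf'
        show Function.update g w (f w) = f
        funext v
        rcases eq_or_ne v w with rfl | h
        · rw [Function.update_self]
        · rw [Function.update_of_ne h, ← hf'.2, Function.update_of_ne h]
      · intro x hx
        simp
    rw [Finset.sum_congr rfl hcongr, Finset.sum_const, smul_eq_mul, mul_comm]
  -- N (insert w s') ≥ (k+1-d) * B.card
  have h2 : (k + 1 - d) * B.card ≤ CFCN G a b c A (insert w s') := by
    unfold CFCN
    have hfib := Finset.card_eq_sum_card_fiberwise
      (f := fun f => Function.update f w x₀) (t := B)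
      (s := (Fintype.piFinset A).filter (CFCgood G a b c (insert w s')))
      (by
        intro f hf
        simp only [Finset.mem_coe, Finset.mem_filter] at hf
        rw [hB, Finset.mem_coe, Finset.mem_filter]
        refine ⟨cfc_mem_piFinset_update A hf.1 hx₀, ?_, by simp⟩
        rw [cfc_good_update G a b c hw]
        intro e he hesub
        exact hf.2 e he fun v hv => Finset.mem_insert_of_mem (hesub v hv))
    rw [hfib]
    calc (k + 1 - d) * B.card = ∑ _g ∈ B, (k + 1 - d) := by
          rw [Finset.sum_const, smul_eq_mul, mul_comm]
      _ ≤ _ := by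
          apply Finset.sum_le_sum
          intro g hg
          have hgB := hg
          rw [hB, Finset.mem_filter] at hgB
          have key := cfc_card_allowed G a b c A k ha hb hA hw hlt hgB.2.1
          rw [← hd] at key
          refine le_trans key (le_of_eq ?_)
          refine Finset.card_bij' (fun x _ => Function.update g w x) (fun f _ => f w)
            ?_ ?_ ?_ ?_
          · intro x hx
            simp only [Finset.mem_filter] at hx ⊢
            refine ⟨⟨cfc_mem_piFinset_update A hgB.1 hx.1, hx.2⟩, ?_⟩
            funext v
            rcases eq_or_ne v w with rfl | h
            · simp [hgB.2.2]
            · simp [Function.update_of_ne h]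
          · intro f hf
            simp only [Finset.mem_filter] at hf ⊢
            obtain ⟨⟨hf1, hf2⟩, hf3⟩ := hf
            refine ⟨(Fintype.mem_piFinset.1 hf1) w, ?_⟩
            have hface : Function.update g w (f w) = f := by
              rw [← hf3]
              funext v
              rcases eq_or_ne v w with rfl | h
              · simp
              · simp [Function.update_of_ne h]
            rw [hface]; exact hf2
          · intro x hx
            simp
          · intro f hf'
            simp only [Finset.mem_filter] at hf'
            show Function.update g w (f w) = f
            funext v
            rcases eq_or_ne v w with rfl | h
            · rw [Function.update_self]
            · rw [Function.update_of_ne h, ← hf'.2, Function.update_of_ne h]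
  calc (k + 1 - d) * CFCN G a b c A s' = (k + 1) * ((k + 1 - d) * B.card) := by
        rw [h1]; ring
    _ ≤ (k + 1) * CFCN G a b c A (insert w s') := Nat.mul_le_mul_left _ h2

/-- Main induction: lower bound for partial colorings. -/
lemma cfc_main (k : ℕ)
    (ha : ∀ e ∈ G.edgeFinset, a e ≠ 0) (hb : ∀ e ∈ G.edgeFinset, b e ≠ 0)
    (hA : ∀ w, (A w).card = k + 1) :
    ∀ s : Finset V,
      (∏ w ∈ s, (k + 1 - ((G.neighborFinset w).filter fun u => u < w).card)) *
        (k + 1) ^ (sᶜ.card) ≤ CFCN G a b c A s := by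
  intro s
  induction s using Finset.strongInduction with
  | _ s ih =>
    rcases s.eq_empty_or_nonempty with rfl | hs
    · have hgood : ∀ f ∈ Fintype.piFinset A, CFCgood G a b c ∅ f := by
        intro f _ e he hesub
        exfalso
        induction e using Sym2.ind with
        | _ u v => exact absurd (hesub u (by simp)) (by simp)
      unfold CFCN
      rw [Finset.filter_true_of_mem hgood, Fintype.card_piFinset]
      simp only [Finset.prod_empty, one_mul, Finset.compl_empty]
      rw [Finset.prod_congr rfl fun w _ => hA w, Finset.prod_const, Finset.card_univ]
    · set w := s.max' hs with hwdef
      have hwmem : w ∈ s := s.max'_mem hs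
      set s' := s.erase w with hs'
      have hws' : w ∉ s' := Finset.notMem_erase _ _
      have hlt : ∀ u ∈ s', u < w := fun u hu =>
        lt_of_le_of_ne (s.le_max' u (Finset.mem_of_mem_erase hu))
          (Finset.ne_of_mem_erase hu)
      have hins : insert w s' = s := Finset.insert_erase hwmem
      have hss : s' ⊂ s := Finset.erase_ssubset hwmem
      have IH := ih s' hss
      have hstep := cfc_step G a b c A k ha hb hA hws' hlt
      rw [hins] at hstep
      have hcompl : s'ᶜ.card = sᶜ.card + 1 := by
        have h1 : s.card ≤ Fintype.card V := Finset.card_le_univ s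
        have h2 : 1 ≤ s.card := Finset.card_pos.2 hs
        have h3 : s'.card = s.card - 1 := by rw [hs', Finset.card_erase_of_mem hwmem]
        rw [Finset.card_compl, Finset.card_compl, h3]
        omega
      set d := ((G.neighborFinset w).filter fun u => u < w).card with hd
      have hprod : (∏ v ∈ s, (k + 1 - ((G.neighborFinset v).filter fun u => u < v).card)) =
          (k + 1 - d) * ∏ v ∈ s', (k + 1 - ((G.neighborFinset v).filter fun u => u < v).card) := by
        rw [hs', ← Finset.mul_prod_erase s _ hwmem]
      refine Nat.le_of_mul_le_mul_left ?_ (Nat.succ_pos k)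
      calc (k + 1) * ((∏ v ∈ s, (k + 1 - ((G.neighborFinset v).filter fun u => u < v).card)) *
              (k + 1) ^ (sᶜ.card))
          = (k + 1 - d) * ((∏ v ∈ s', (k + 1 - ((G.neighborFinset v).filter fun u => u < v).card)) *
              (k + 1) ^ (s'ᶜ.card)) := by
            rw [hprod, hcompl]; ring
        _ ≤ (k + 1 - d) * CFCN G a b c A s' := Nat.mul_le_mul_left _ IH
        _ ≤ (k + 1) * CFCN G a b c A s := hstep

/-- The sum of back-degrees is at most the number of edges. -/
lemma cfc_sum_backdeg_le :
    (∑ w : V, ((G.neighborFinset w).filter fun u => u < w).card) ≤ G.edgeFinset.card := by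
  classical
  rw [← Finset.card_sigma]
  apply Finset.card_le_card_of_injOn (fun p => s(p.2, p.1))
  · intro p hp
    rw [Finset.mem_coe, Finset.mem_sigma] at hp
    obtain ⟨-, hp2⟩ := hp
    rw [Finset.mem_filter, SimpleGraph.mem_neighborFinset] at hp2
    rw [Finset.mem_coe, SimpleGraph.mem_edgeFinset, SimpleGraph.mem_edgeSet]
    exact hp2.1.symm
  · rintro ⟨pw, pu⟩ hp ⟨qw, qu⟩ hq hpq
    rw [Finset.mem_coe, Finset.mem_sigma] at hp hq
    have hp2 := (Finset.mem_filter.1 hp.2).2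
    have hq2 := (Finset.mem_filter.1 hq.2).2
    simp only [Sym2.eq, Sym2.rel_iff', Prod.mk.injEq, Prod.swap_prod_mk] at hpq
    rcases hpq with ⟨h1, h2⟩ | ⟨h1, h2⟩
    · subst h1; subst h2; rfl
    · exfalso
      subst h1; subst h2
      exact absurd (hp2.trans hq2) (lt_irrefl _)

end Aux

/-- Pointwise analytic inequality: `(k+1)^((k-d)/k) ≤ k+1-d` for `d ≤ k`. -/
lemma cfc_pointwise {k d : ℕ} (hk : 1 ≤ k) (hd : d ≤ k) :
    ((k : ℝ) + 1) ^ (((k : ℝ) - (d : ℝ)) / (k : ℝ)) ≤ (k : ℝ) + 1 - (d : ℝ) := by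
  have hk0 : (0 : ℝ) < k := by exact_mod_cast hk
  set t : ℝ := (d : ℝ) / (k : ℝ) with ht
  have ht0 : 0 ≤ t := div_nonneg (Nat.cast_nonneg d) hk0.le
  have ht1 : t ≤ 1 := by
    rw [ht, div_le_one hk0]
    exact_mod_cast hd
  have hexp : ((k : ℝ) - (d : ℝ)) / (k : ℝ) = 1 - t := by
    rw [ht]; field_simp
  have key := Real.geom_mean_le_arith_mean2_weighted (by linarith : (0:ℝ) ≤ 1 - t) ht0
    (by positivity : (0:ℝ) ≤ (k : ℝ) + 1) (zero_le_one) (by ring)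
  rw [Real.one_rpow, mul_one] at key
  rw [mul_one] at key
  have htk : t * (k : ℝ) = (d : ℝ) := by
    rw [ht]; field_simp
  rw [hexp]
  calc ((k : ℝ) + 1) ^ (1 - t) ≤ (1 - t) * ((k : ℝ) + 1) + t := by linarith [key]
    _ = (k : ℝ) + 1 - t * (k : ℝ) := by ring
    _ = (k : ℝ) + 1 - (d : ℝ) := by rw [htk]

/-- Counting field colorings (the mechanism of Corollary 12 of the paper): under the
hypotheses of field choosability with lists of size exactly `k + 1`, the number of colorings
is at least `(k+1) ^ ((k·n - m)/k)`, where `n` is the number of vertices and `m` the number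
of edges of `G`. -/
theorem card_field_colorings_of_degenerate {F : Type*} [Field F] [DecidableEq F]
    {V : Type*} [Fintype V] [LinearOrder V] [DecidableEq V] (k : ℕ) (hk : 1 ≤ k)
    (G : SimpleGraph V) [DecidableRel G.Adj]
    (hcol : ∀ w : V, ((G.neighborFinset w).filter fun u => u < w).card ≤ k)
    (a b c : Sym2 V → F)
    (ha : ∀ e ∈ G.edgeFinset, a e ≠ 0) (hb : ∀ e ∈ G.edgeFinset, b e ≠ 0)
    (A : V → Finset F) (hA : ∀ w, (A w).card = k + 1)
    (n m : ℕ) (hn : n = Fintype.card V) (hm : m = G.edgeFinset.card) :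
    ((k : ℝ) + 1) ^ (((k * n : ℝ) - (m : ℝ)) / (k : ℝ)) ≤
      (((Fintype.piFinset A).filter fun f =>
        ∀ e ∈ G.edgeFinset, a e * f e.inf + b e * f e.sup + c e ≠ 0).card : ℝ) := by
  classical
  have hk0 : (0 : ℝ) < k := by exact_mod_cast hk
  set d : V → ℕ := fun w => ((G.neighborFinset w).filter fun u => u < w).card with hd
  -- combinatorial bound
  have hmain := cfc_main G a b c A k ha hb hA Finset.univ
  rw [Finset.compl_univ, Finset.card_empty, pow_zero, mul_one] at hmain
  have hfilter : ((Fintype.piFinset A).filter fun f =>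
      ∀ e ∈ G.edgeFinset, a e * f e.inf + b e * f e.sup + c e ≠ 0) =
      ((Fintype.piFinset A).filter (CFCgood G a b c Finset.univ)) := by
    apply Finset.filter_congr
    intro f _
    unfold CFCgood
    constructor
    · intro h e he _; exact h e he
    · intro h e he; exact h e he fun v _ => Finset.mem_univ v
  rw [hfilter]
  have hN : (∏ w : V, (k + 1 - d w) : ℕ) ≤
      ((Fintype.piFinset A).filter (CFCgood G a b c Finset.univ)).card := hmain
  -- the real chain
  have hsum : (∑ w : V, d w) ≤ m := hm ▸ cfc_sum_backdeg_le G
  have step1 : ((k : ℝ) + 1) ^ (((k * n : ℝ) - (m : ℝ)) / (k : ℝ)) ≤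
      ((k : ℝ) + 1) ^ (((k * n : ℝ) - ((∑ w : V, d w : ℕ) : ℝ)) / (k : ℝ)) := by
    apply Real.rpow_le_rpow_of_exponent_le (by linarith)
    have hcast : ((∑ w : V, d w : ℕ) : ℝ) ≤ (m : ℝ) := by exact_mod_cast hsum
    apply div_le_div_of_nonneg_right (by linarith) hk0.le
  have step2 : ((k : ℝ) + 1) ^ (((k * n : ℝ) - ((∑ w : V, d w : ℕ) : ℝ)) / (k : ℝ)) =
      ∏ w : V, ((k : ℝ) + 1) ^ (((k : ℝ) - (d w : ℝ)) / (k : ℝ)) := by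
    rw [← Real.rpow_sum_of_pos (by linarith : (0:ℝ) < (k:ℝ) + 1)]
    congr 1
    rw [← Finset.sum_div]
    congr 1
    push_cast
    rw [Finset.sum_sub_distrib, Finset.sum_const, Finset.card_univ, hn]
    push_cast
    ring
  have step3 : (∏ w : V, ((k : ℝ) + 1) ^ (((k : ℝ) - (d w : ℝ)) / (k : ℝ))) ≤
      ∏ w : V, ((k : ℝ) + 1 - (d w : ℝ)) := by
    apply Finset.prod_le_prod
    · intro w _
      positivity
    · intro w _
      exact cfc_pointwise hk (hcol w)
  have step4 : (∏ w : V, ((k : ℝ) + 1 - (d w : ℝ))) = ((∏ w : V, (k + 1 - d w) : ℕ) : ℝ) := by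
    push_cast
    apply Finset.prod_congr rfl
    intro w _
    have : d w ≤ k := hcol w
    push_cast [Nat.cast_sub (by omega : d w ≤ k + 1)]
    ring
  calc ((k : ℝ) + 1) ^ (((k * n : ℝ) - (m : ℝ)) / (k : ℝ))
      ≤ ((k : ℝ) + 1) ^ (((k * n : ℝ) - ((∑ w : V, d w : ℕ) : ℝ)) / (k : ℝ)) := step1
    _ = ∏ w : V, ((k : ℝ) + 1) ^ (((k : ℝ) - (d w : ℝ)) / (k : ℝ)) := step2
    _ ≤ ∏ w : V, ((k : ℝ) + 1 - (d w : ℝ)) := step3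
    _ = ((∏ w : V, (k + 1 - d w) : ℕ) : ℝ) := step4
    _ ≤ _ := by exact_mod_cast hN
end

section
/- Let F be a field, let s ≥ 2 be a natural number, and let G be a finite simple graph with n vertices and m edges on a linearly ordered vertex type V, with m ≤ n·(s - 1). Assign to each edge e of G (with endpoints u_e < v_e) elements a_e, b_e, c_e ∈ F, and assign to each vertex w a finite set A_w ⊆ F with |A_w| = s. Suppose there exists at least one function f : V → F with f(w) ∈ A_w for every vertex w and a_e·f(u_e) + b_e·f(v_e) + c_e ≠ 0 for every edge e. Then the number of such functions is at least s^((n·(s-1) - m)/(s-1)), with real exponentiation. -/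
open Finset MvPolynomial

namespace AFWeak

variable {F : Type*} [Field F] [DecidableEq F]

/-- Weight condition: the `j`-th coefficient has total degree at most `d - j`. -/
def DW {n : ℕ} (d : ℕ) (Q : Polynomial (MvPolynomial (Fin n) F)) : Prop :=
  ∀ j, Q.coeff j ≠ 0 → (Q.coeff j).totalDegree + j ≤ d

lemma dw_sub_helper {n : ℕ} {p q : MvPolynomial (Fin n) F} {j d : ℕ}
    (hp : p ≠ 0 → p.totalDegree + j ≤ d) (hq : q ≠ 0 → q.totalDegree + j ≤ d)
    (hpq : p - q ≠ 0) : (p - q).totalDegree + j ≤ d := by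
  rcases eq_or_ne p 0 with rfl | hp0
  · rw [zero_sub, totalDegree_neg]
    exact hq (by simpa using hpq)
  rcases eq_or_ne q 0 with rfl | hq0
  · rw [sub_zero]; exact hp hp0
  have := totalDegree_sub p q
  have h1 := hp hp0
  have h2 := hq hq0
  omega

/-- Reduction of a polynomial modulo a monic polynomial `v` of degree `s` with constant
coefficients, preserving the degree-weight condition. -/
lemma reduce_aux {n s d : ℕ} (hs : 0 < s) (v : Polynomial F) (hv : v.Monic)
    (hvd : v.natDegree = s) :
    ∀ N (Q : Polynomial (MvPolynomial (Fin n) F)), Q.natDegree ≤ N → DW d Q →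
    ∃ R W : Polynomial (MvPolynomial (Fin n) F), R.natDegree < s ∧ DW d R ∧
      Q = R + (v.map MvPolynomial.C) * W := by
  intro N
  induction N using Nat.strong_induction_on with
  | _ N ih =>
    intro Q hQN hQ
    by_cases h : Q.natDegree < s
    · exact ⟨Q, 0, h, hQ, by ring⟩
    push_neg at h
    have hQ0 : Q ≠ 0 := by
      intro h0; rw [h0, Polynomial.natDegree_zero] at h; omega
    set n₀ := Q.natDegree with hn₀
    set c := Q.leadingCoeff with hc
    have hc0 : c ≠ 0 := Polynomial.leadingCoeff_ne_zero.mpr hQ0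
    have hvC : (v.map (MvPolynomial.C : F →+* MvPolynomial (Fin n) F)).Monic :=
      hv.map _
    have hvC0 : (v.map (MvPolynomial.C : F →+* MvPolynomial (Fin n) F)) ≠ 0 := hvC.ne_zero
    have hvCd : (v.map (MvPolynomial.C : F →+* MvPolynomial (Fin n) F)).natDegree = s := by
      rw [hv.natDegree_map]; exact hvd
    set M : Polynomial (MvPolynomial (Fin n) F) :=
      (v.map MvPolynomial.C) * (Polynomial.C c * Polynomial.X ^ (n₀ - s)) with hM
    have hcx0 : (Polynomial.C c * Polynomial.X ^ (n₀ - s) :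
        Polynomial (MvPolynomial (Fin n) F)) ≠ 0 :=
      mul_ne_zero (Polynomial.C_ne_zero.mpr hc0) (pow_ne_zero _ Polynomial.X_ne_zero)
    have hM0 : M ≠ 0 := mul_ne_zero hvC0 hcx0
    have hMdeg : M.natDegree = n₀ := by
      rw [hM, Polynomial.natDegree_mul hvC0 hcx0, hvCd,
        Polynomial.natDegree_C_mul_X_pow _ _ hc0]
      omega
    have hMlc : M.leadingCoeff = c := by
      rw [hM, Polynomial.leadingCoeff_mul, hvC.leadingCoeff, one_mul,
        Polynomial.leadingCoeff_C_mul_X_pow]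
    have hdlt : (Q - M).degree < Q.degree := by
      apply Polynomial.degree_sub_lt _ hQ0 (by rw [hMlc])
      rw [Polynomial.degree_eq_natDegree hQ0, Polynomial.degree_eq_natDegree hM0, hMdeg]
    have hQ'deg : (Q - M).natDegree < n₀ := by
      rcases eq_or_ne (Q - M) 0 with h0 | h0
      · rw [h0, Polynomial.natDegree_zero]; omega
      · exact Polynomial.natDegree_lt_natDegree h0 hdlt
    -- DW for Q - M
    have hcd : c.totalDegree + n₀ ≤ d := hQ n₀ (by rwa [Polynomial.coeff_natDegree])
    have hMcoeff : ∀ j, M.coeff j ≠ 0 → (M.coeff j).totalDegree + j ≤ d := by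
      intro j hj
      by_cases hjn : n₀ < j
      · exact absurd (Polynomial.coeff_eq_zero_of_natDegree_lt (by omega : M.natDegree < j)) hj
      push_neg at hjn
      by_cases hjm : n₀ - s ≤ j
      · have hMj : M.coeff j = MvPolynomial.C (v.coeff (j - (n₀ - s))) * c := by
          rw [hM, ← mul_assoc, Polynomial.coeff_mul_X_pow', if_pos hjm,
            Polynomial.coeff_mul_C, Polynomial.coeff_map]
        have : (M.coeff j).totalDegree ≤ c.totalDegree := by
          rw [hMj]
          exact le_trans (totalDegree_mul _ _) (by simp [totalDegree_C])
        omega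
      · exfalso
        apply hj
        rw [hM, ← mul_assoc, Polynomial.coeff_mul_X_pow', if_neg hjm]
    have hDW' : DW d (Q - M) := by
      intro j hj
      rw [Polynomial.coeff_sub] at hj ⊢
      exact dw_sub_helper (hQ j) (hMcoeff j) hj
    obtain ⟨R, W', hR1, hR2, hR3⟩ :=
      ih (Q - M).natDegree (by omega) (Q - M) le_rfl hDW'
    refine ⟨R, W' + Polynomial.C c * Polynomial.X ^ (n₀ - s), hR1, hR2, ?_⟩
    have : Q = (Q - M) + M := by ring
    rw [this, hR3, hM]; ring


/-- Key numeric inequality: `s ^ (1 - k/(s-1)) ≤ s - k` for `k ≤ s - 1`. -/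
lemma key_ineq {s k : ℕ} (hs : 2 ≤ s) (hk : k ≤ s - 1) :
    (s : ℝ) ^ (1 - (k : ℝ) / ((s : ℝ) - 1)) ≤ (s : ℝ) - (k : ℝ) := by
  have hs1 : (1 : ℝ) < s := by exact_mod_cast Nat.one_lt_cast.mpr (by omega)
  have hks : (k : ℝ) ≤ (s : ℝ) - 1 := by
    have : (k : ℝ) ≤ ((s - 1 : ℕ) : ℝ) := Nat.cast_le.mpr hk
    have h2 : ((s - 1 : ℕ) : ℝ) = (s : ℝ) - 1 := by
      push_cast [Nat.cast_sub (by omega : 1 ≤ s)]; ring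
    linarith
  have hden : (0 : ℝ) < (s : ℝ) - 1 := by linarith
  set w₂ : ℝ := (k : ℝ) / ((s : ℝ) - 1) with hw₂def
  have hw₂ : 0 ≤ w₂ := by positivity
  have hw₁ : 0 ≤ 1 - w₂ := by
    rw [sub_nonneg, hw₂def, div_le_one hden]; exact hks
  have hgm := Real.geom_mean_le_arith_mean2_weighted hw₁ hw₂
    (by positivity : (0:ℝ) ≤ (s:ℝ)) zero_le_one (by ring)
  calc (s : ℝ) ^ (1 - w₂) = (s : ℝ) ^ (1 - w₂) * (1 : ℝ) ^ w₂ := by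
        rw [Real.one_rpow, mul_one]
    _ ≤ (1 - w₂) * (s : ℝ) + w₂ * 1 := hgm
    _ = (s : ℝ) - (k : ℝ) := by
        rw [hw₂def]; field_simp; ring

/-- Weak Alon–Füredi over a grid indexed by `Fin n`. -/
lemma alon_furedi {s : ℕ} (hs : 2 ≤ s) :
    ∀ (n : ℕ) (A : Fin n → Finset F), (∀ i, (A i).card = s) →
    ∀ (P : MvPolynomial (Fin n) F) (d : ℕ), P.totalDegree ≤ d →
    (∃ x ∈ Fintype.piFinset A, eval x P ≠ 0) →
    (s : ℝ) ^ ((n : ℝ) - (d : ℝ) / ((s : ℝ) - 1)) ≤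
      (((Fintype.piFinset A).filter fun x => eval x P ≠ 0).card : ℝ) := by
  have hs1 : (1 : ℝ) < s := by exact_mod_cast Nat.one_lt_cast.mpr (by omega)
  intro n
  induction n with
  | zero =>
    intro A hA P d hd ⟨x, hx, hx0⟩
    have hcard : 1 ≤ (((Fintype.piFinset A).filter fun x => eval x P ≠ 0).card : ℝ) := by
      have : x ∈ (Fintype.piFinset A).filter fun x => eval x P ≠ 0 :=
        mem_filter.mpr ⟨hx, hx0⟩
      exact_mod_cast Finset.card_pos.mpr ⟨x, this⟩
    refine le_trans ?_ hcard
    apply Real.rpow_le_one_of_one_le_of_nonpos hs1.le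
    have : (0:ℝ) ≤ (d : ℝ) / ((s : ℝ) - 1) := div_nonneg (by positivity) (by linarith)
    simp only [Nat.cast_zero]
    linarith
  | succ n IH =>
    intro A hA P d hd ⟨z, hz, hz0⟩
    set A' : Fin n → Finset F := fun i => A i.succ with hA'def
    have hA' : ∀ i, (A' i).card = s := fun i => hA i.succ
    set Q := finSuccEquiv F n P with hQdef
    have hDW : DW d Q := fun j hj =>
      le_trans (totalDegree_coeff_finSuccEquiv_add_le P j hj) hd
    -- the vanishing polynomial of A 0
    set v : Polynomial F := ∏ t ∈ A 0, (Polynomial.X - Polynomial.C t) with hvdef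
    have hv : v.Monic := Polynomial.monic_prod_of_monic _ _ fun t _ => Polynomial.monic_X_sub_C t
    have hvd : v.natDegree = s := by
      rw [hvdef, Polynomial.natDegree_prod _ _ (fun t _ => Polynomial.X_sub_C_ne_zero t)]
      simp [hA 0]
    obtain ⟨R, W, hRdeg, hRDW, hQRW⟩ := reduce_aux (by omega : 0 < s) v hv hvd
      Q.natDegree Q le_rfl hDW
    -- key evaluation identity
    have hkey : ∀ (t : F), t ∈ A 0 → ∀ (x : Fin n → F),
        eval (Fin.cons t x : Fin (n+1) → F) P =
          (R.map (MvPolynomial.eval x)).eval t := by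
      intro t ht x
      rw [eval_eq_eval_mv_eval', ← hQdef, hQRW]
      have hmap : (v.map (MvPolynomial.C : F →+* MvPolynomial (Fin n) F)).map
          (MvPolynomial.eval x) = v := by
        rw [Polynomial.map_map]
        have : (MvPolynomial.eval x).comp (MvPolynomial.C : F →+* MvPolynomial (Fin n) F)
            = RingHom.id F := by
          ext r; simp
        rw [this, Polynomial.map_id]
      rw [Polynomial.map_add, Polynomial.map_mul, hmap, Polynomial.eval_add,
        Polynomial.eval_mul]
      have hv0 : v.eval t = 0 := by
        rw [hvdef, Polynomial.eval_prod]
        exact Finset.prod_eq_zero ht (by simp)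
      rw [hv0, zero_mul, add_zero]
    -- decompose the witness
    have hz' : z = Fin.cons (z 0) (Fin.tail z) := (Fin.cons_self_tail z).symm
    have hz0mem : z 0 ∈ A 0 := (Fintype.mem_piFinset.mp hz) 0
    have hztail : Fin.tail z ∈ Fintype.piFinset A' :=
      Fintype.mem_piFinset.mpr fun i => (Fintype.mem_piFinset.mp hz) i.succ
    have hzR : (R.map (MvPolynomial.eval (Fin.tail z))).eval (z 0) ≠ 0 := by
      rw [← hkey (z 0) hz0mem (Fin.tail z), ← hz']; exact hz0
    -- the set of relevant coefficient indices
    set K : Finset ℕ := (Finset.range s).filter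
      (fun j => ∃ x ∈ Fintype.piFinset A', eval x (R.coeff j) ≠ 0) with hKdef
    have hcoeff_zero : ∀ j, s ≤ j → R.coeff j = 0 := fun j hj =>
      Polynomial.coeff_eq_zero_of_natDegree_lt (lt_of_lt_of_le hRdeg hj)
    have hKne : K.Nonempty := by
      have : (R.map (MvPolynomial.eval (Fin.tail z))) ≠ 0 := by
        intro h0; rw [h0] at hzR; simp at hzR
      obtain ⟨j, hj⟩ : ∃ j, (R.map (MvPolynomial.eval (Fin.tail z))).coeff j ≠ 0 := by
        by_contra hno
        push_neg at hno
        exact this (Polynomial.ext fun j => by simp [hno j])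
      rw [Polynomial.coeff_map] at hj
      refine ⟨j, mem_filter.mpr ⟨Finset.mem_range.mpr ?_, ⟨Fin.tail z, hztail, hj⟩⟩⟩
      by_contra hjs
      rw [hcoeff_zero j (by omega)] at hj
      simp at hj
    set k := K.max' hKne with hkdef
    have hkK : k ∈ K := K.max'_mem hKne
    have hks : k < s := Finset.mem_range.mp (mem_filter.mp hkK).1
    obtain ⟨y, hy, hy0⟩ := (mem_filter.mp hkK).2
    have hmax : ∀ j, k < j → ∀ x ∈ Fintype.piFinset A', eval x (R.coeff j) = 0 := by
      intro j hj x hx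
      by_contra h0
      by_cases hjs : j < s
      · exact absurd (K.le_max' j (mem_filter.mpr ⟨Finset.mem_range.mpr hjs, ⟨x, hx, h0⟩⟩))
          (by omega)
      · rw [hcoeff_zero j (by omega)] at h0; simp at h0
    -- apply IH to R.coeff k
    have hRk0 : R.coeff k ≠ 0 := fun h0 => by rw [h0] at hy0; simp at hy0
    set d' := (R.coeff k).totalDegree with hd'def
    have hd'k : d' + k ≤ d := hRDW k hRk0
    set U' := (Fintype.piFinset A').filter (fun x => eval x (R.coeff k) ≠ 0) with hU'def
    have hIH : (s : ℝ) ^ ((n : ℝ) - (d' : ℝ) / ((s : ℝ) - 1)) ≤ (U'.card : ℝ) :=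
      IH A' hA' (R.coeff k) d' le_rfl ⟨y, hy, hy0⟩
    -- fiber counting
    have hfiber : ∀ x ∈ U',
        (s - k : ℕ) ≤ (((A 0).filter
          (fun t => (R.map (MvPolynomial.eval x)).eval t ≠ 0)).card) := by
      intro x hxU
      obtain ⟨hxA, hxk⟩ := mem_filter.mp hxU
      set qx := R.map (MvPolynomial.eval x) with hqxdef
      have hqx0 : qx ≠ 0 := by
        intro h0
        have : qx.coeff k = 0 := by rw [h0]; simp
        rw [hqxdef, Polynomial.coeff_map] at this
        exact hxk this
      have hqxdeg : qx.natDegree ≤ k := by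
        rw [Polynomial.natDegree_le_iff_coeff_eq_zero]
        intro j hj
        rw [hqxdef, Polynomial.coeff_map, hmax j hj x hxA]
      have hbad : ((A 0).filter (fun t => qx.eval t = 0)).card ≤ k := by
        have hsub : (A 0).filter (fun t => qx.eval t = 0) ⊆ qx.roots.toFinset := by
          intro t ht
          obtain ⟨_, ht2⟩ := mem_filter.mp ht
          rw [Multiset.mem_toFinset, Polynomial.mem_roots hqx0]
          exact ht2
        calc ((A 0).filter (fun t => qx.eval t = 0)).card
            ≤ qx.roots.toFinset.card := Finset.card_le_card hsub
          _ ≤ Multiset.card qx.roots := qx.roots.toFinset_card_le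
          _ ≤ qx.natDegree := qx.card_roots'
          _ ≤ k := hqxdeg
      have hsplit := Finset.card_filter_add_card_filter_not
        (s := A 0) (p := fun t => qx.eval t = 0)
      have hA0 : (A 0).card = s := hA 0
      have heq : ((A 0).filter (fun a => ¬ qx.eval a = 0)).card =
          ((A 0).filter (fun t => qx.eval t ≠ 0)).card := by
        congr 1
      omega
    -- assemble the count
    set S := (Fintype.piFinset A).filter (fun x : Fin (n+1) → F => eval x P ≠ 0) with hSdef
    set B : (Fin n → F) → Finset (Fin (n+1) → F) := fun x =>
      ((A 0).filter (fun t => (R.map (MvPolynomial.eval x)).eval t ≠ 0)).image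
        (fun t => Fin.cons t x) with hBdef
    have hdisj : ∀ x ∈ U', ∀ x' ∈ U', x ≠ x' → Disjoint (B x) (B x') := by
      intro x _ x' _ hxx'
      rw [Finset.disjoint_left]
      intro w hw hw'
      obtain ⟨t, _, rfl⟩ := Finset.mem_image.mp hw
      obtain ⟨t', _, he⟩ := Finset.mem_image.mp hw'
      apply hxx'
      have := congrArg Fin.tail he
      simpa [Fin.tail_cons] using this.symm
    have hsub : U'.biUnion B ⊆ S := by
      intro w hw
      obtain ⟨x, hxU, hwB⟩ := Finset.mem_biUnion.mp hw
      obtain ⟨t, htmem, rfl⟩ := Finset.mem_image.mp hwB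
      obtain ⟨ht0, ht1⟩ := mem_filter.mp htmem
      refine mem_filter.mpr ⟨?_, ?_⟩
      · apply Fintype.mem_piFinset.mpr
        intro i
        refine Fin.cases ?_ ?_ i
        · simpa using ht0
        · intro j
          simpa using (Fintype.mem_piFinset.mp (mem_filter.mp hxU).1) j
      · rw [hkey t ht0 x]; exact ht1
    have hcount : U'.card * (s - k) ≤ S.card := by
      calc U'.card * (s - k) = ∑ _x ∈ U', (s - k) := by rw [Finset.sum_const, smul_eq_mul]
        _ ≤ ∑ x ∈ U', (B x).card := Finset.sum_le_sum (fun x hx => by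
            rw [hBdef]
            rw [Finset.card_image_of_injective _ (fun t t' h => by
              have := congrFun h 0
              simpa using this)]
            exact hfiber x hx)
        _ = (U'.biUnion B).card := (Finset.card_biUnion hdisj).symm
        _ ≤ S.card := Finset.card_le_card hsub
    -- real arithmetic endgame
    have hden : (0:ℝ) < (s:ℝ) - 1 := by linarith
    have hkR : (k:ℝ) < (s:ℝ) := by exact_mod_cast hks
    have hsk : (0:ℝ) < (s:ℝ) - (k:ℝ) := by linarith
    have hkey2 : (s:ℝ) ^ (1 - (k:ℝ)/((s:ℝ)-1)) ≤ (s:ℝ) - (k:ℝ) :=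
      key_ineq hs (by omega)
    have hmono : (s:ℝ) ^ ((n:ℝ) - ((d:ℝ) - (k:ℝ))/((s:ℝ)-1)) ≤
        (s:ℝ) ^ ((n:ℝ) - (d':ℝ)/((s:ℝ)-1)) := by
      apply Real.rpow_le_rpow_of_exponent_le hs1.le
      have h1 : (d':ℝ) ≤ (d:ℝ) - (k:ℝ) := by
        have : ((d' + k : ℕ) : ℝ) ≤ (d : ℝ) := Nat.cast_le.mpr hd'k
        push_cast at this
        linarith
      have h2 : (d':ℝ)/((s:ℝ)-1) ≤ ((d:ℝ) - (k:ℝ))/((s:ℝ)-1) :=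
        by gcongr
      linarith
    have hspos : (0:ℝ) < (s:ℝ) := by linarith
    have hcast : (((n+1 : ℕ)) : ℝ) = (n:ℝ) + 1 := by push_cast; ring
    rw [hcast]
    calc (s:ℝ) ^ (((n:ℝ)+1) - (d:ℝ)/((s:ℝ)-1))
        = (s:ℝ) ^ (1 - (k:ℝ)/((s:ℝ)-1)) *
            (s:ℝ) ^ ((n:ℝ) - ((d:ℝ)-(k:ℝ))/((s:ℝ)-1)) := by
          rw [← Real.rpow_add hspos]
          congr 1
          field_simp
          ring
      _ ≤ ((s:ℝ) - (k:ℝ)) * (s:ℝ)^((n:ℝ) - (d':ℝ)/((s:ℝ)-1)) :=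
          mul_le_mul hkey2 hmono (Real.rpow_nonneg hspos.le _) hsk.le
      _ ≤ ((s:ℝ) - (k:ℝ)) * (U'.card : ℝ) := by
          apply mul_le_mul_of_nonneg_left hIH hsk.le
      _ = ((U'.card * (s - k) : ℕ) : ℝ) := by
          push_cast [Nat.cast_sub hks.le]
          ring
      _ ≤ (S.card : ℝ) := Nat.cast_le.mpr hcount

end AFWeak

/-- The weak Alon–Füredi theorem applied to the labeled decorated graph polynomial: if `G`
has `n` vertices and `m ≤ n·(s-1)` edges, all lists have size `s ≥ 2`, and at least one
coloring avoiding all edge constraints exists, then the number of such colorings is at least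
`s ^ ((n·(s-1) - m)/(s-1))`. -/
theorem card_field_colorings_of_exists {F : Type*} [Field F] [DecidableEq F]
    {V : Type*} [Fintype V] [LinearOrder V] [DecidableEq V] (s : ℕ) (hs : 2 ≤ s)
    (G : SimpleGraph V) [DecidableRel G.Adj]
    (a b c : Sym2 V → F)
    (A : V → Finset F) (hA : ∀ w, (A w).card = s)
    (n m : ℕ) (hn : n = Fintype.card V) (hm : m = G.edgeFinset.card)
    (hmn : m ≤ n * (s - 1))
    (hex : ∃ f : V → F, (∀ w, f w ∈ A w) ∧
      ∀ e ∈ G.edgeFinset, a e * f e.inf + b e * f e.sup + c e ≠ 0) :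
    (s : ℝ) ^ ((((n * (s - 1) : ℕ) : ℝ) - (m : ℝ)) / ((s : ℝ) - 1)) ≤
      (((Fintype.piFinset A).filter fun f =>
        ∀ e ∈ G.edgeFinset, a e * f e.inf + b e * f e.sup + c e ≠ 0).card : ℝ) := by
  have hs1 : (1 : ℝ) < s := by exact_mod_cast Nat.one_lt_cast.mpr (by omega)
  have hden : (0:ℝ) < (s:ℝ) - 1 := by linarith
  obtain ⟨f₀, hf₀A, hf₀e⟩ := hex
  let eqv : V ≃ Fin n := Fintype.equivFinOfCardEq hn.symm
  set A' : Fin n → Finset F := fun i => A (eqv.symm i) with hA'def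
  set P : MvPolynomial (Fin n) F := ∏ ed ∈ G.edgeFinset,
    (MvPolynomial.C (a ed) * MvPolynomial.X (eqv ed.inf) +
     MvPolynomial.C (b ed) * MvPolynomial.X (eqv ed.sup) + MvPolynomial.C (c ed)) with hPdef
  have hterm : ∀ ed : Sym2 V,
      (MvPolynomial.C (a ed) * MvPolynomial.X (eqv ed.inf) +
       MvPolynomial.C (b ed) * MvPolynomial.X (eqv ed.sup) +
       MvPolynomial.C (c ed)).totalDegree ≤ 1 := by
    intro ed
    have h1 : ∀ (r : F) (i : Fin n),
        (MvPolynomial.C r * MvPolynomial.X i : MvPolynomial (Fin n) F).totalDegree ≤ 1 :=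
      fun r i => le_trans (totalDegree_mul _ _)
        (by simp [totalDegree_C, totalDegree_X])
    refine le_trans (totalDegree_add _ _) (max_le (le_trans (totalDegree_add _ _)
      (max_le (h1 _ _) (h1 _ _))) (by simp [totalDegree_C]))
  have hPdeg : P.totalDegree ≤ m := by
    rw [hPdef, hm]
    refine le_trans (totalDegree_finset_prod _ _) ?_
    refine le_trans (Finset.sum_le_sum (fun ed _ => hterm ed)) ?_
    rw [Finset.sum_const, smul_eq_mul, mul_one]
  have hPeval : ∀ x : Fin n → F, MvPolynomial.eval x P =
      ∏ ed ∈ G.edgeFinset, (a ed * x (eqv ed.inf) + b ed * x (eqv ed.sup) + c ed) := by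
    intro x
    rw [hPdef, map_prod]
    exact Finset.prod_congr rfl fun ed _ => by simp
  have hnz_iff : ∀ x : Fin n → F, (MvPolynomial.eval x P ≠ 0) ↔
      ∀ ed ∈ G.edgeFinset, a ed * x (eqv ed.inf) + b ed * x (eqv ed.sup) + c ed ≠ 0 := by
    intro x
    rw [hPeval x, Finset.prod_ne_zero_iff]
  have hx0mem : (fun i => f₀ (eqv.symm i)) ∈ Fintype.piFinset A' :=
    Fintype.mem_piFinset.mpr fun i => hf₀A _
  have hx0nz : MvPolynomial.eval (fun i => f₀ (eqv.symm i)) P ≠ 0 := by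
    rw [hnz_iff]
    intro ed hed
    simpa [Equiv.symm_apply_apply] using hf₀e ed hed
  have hAF := AFWeak.alon_furedi hs n A' (fun i => hA _) P m hPdeg
    ⟨_, hx0mem, hx0nz⟩
  have hcardeq : ((Fintype.piFinset A').filter fun x => MvPolynomial.eval x P ≠ 0).card =
      ((Fintype.piFinset A).filter fun f =>
        ∀ e ∈ G.edgeFinset, a e * f e.inf + b e * f e.sup + c e ≠ 0).card := by
    apply Finset.card_bij (fun x _ => fun w => x (eqv w))
    · intro x hx
      obtain ⟨hx1, hx2⟩ := mem_filter.mp hx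
      refine mem_filter.mpr ⟨Fintype.mem_piFinset.mpr fun w => ?_, ?_⟩
      · have := Fintype.mem_piFinset.mp hx1 (eqv w)
        simpa [hA'def, Equiv.symm_apply_apply] using this
      · intro ed hed
        exact (hnz_iff x).mp hx2 ed hed
    · intro x hx x' hx' h
      funext i
      have := congrFun h (eqv.symm i)
      simpa [Equiv.apply_symm_apply] using this
    · intro f hf
      obtain ⟨hf1, hf2⟩ := mem_filter.mp hf
      refine ⟨fun i => f (eqv.symm i), mem_filter.mpr ⟨Fintype.mem_piFinset.mpr
        (fun i => Fintype.mem_piFinset.mp hf1 _), ?_⟩, ?_⟩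
      · rw [hnz_iff]
        intro ed hed
        rw [Equiv.symm_apply_apply, Equiv.symm_apply_apply]
        exact hf2 ed hed
      · funext w
        show f (eqv.symm (eqv w)) = f w
        rw [Equiv.symm_apply_apply]
  have hexp : (((n * (s - 1) : ℕ) : ℝ) - (m:ℝ)) / ((s:ℝ) - 1) =
      (n:ℝ) - (m:ℝ)/((s:ℝ)-1) := by
    have h1 : ((n * (s-1) : ℕ):ℝ) = (n:ℝ) * ((s:ℝ)-1) := by
      have hs' : 1 ≤ s := le_trans one_le_two hs
      rw [Nat.cast_mul, Nat.cast_sub hs', Nat.cast_one]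
    rw [h1, sub_div, mul_div_assoc, div_self (ne_of_gt hden), mul_one]
  rw [hexp, ← hcardeq]
  exact hAF
end

section
/- Let G be a connected finite simple graph on n vertices with maximum degree Δ ≥ 3, and suppose G is not a complete graph. Then the number of proper colorings of G with Δ colors is at least (√Δ)^(n·(1 - 1/(Δ-1))), equivalently at least Δ^(n·(Δ-2)/(2·(Δ-1))), with real exponentiation. -/
set_option linter.unusedSectionVars false
set_option maxHeartbeats 1600000

open Finset

namespace BrooksQuant

section GraphPart

variable {V : Type*} [Fintype V] [DecidableEq V]

/-- Greedy coloring along an injective ordering. -/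
lemma greedy_coloring (G : SimpleGraph V) (q : ℕ) (hq : 0 < q) (ord : V → ℕ)
    (hinj : Function.Injective ord)
    (hless : ∀ v : V, ∃ s : Finset V,
      (∀ u, G.Adj v u → ord u < ord v → u ∈ s) ∧ s.card < q) :
    ∃ f : V → Fin q, ∀ v w, G.Adj v w → f v ≠ f w := by
  classical
  have main : ∀ k : ℕ, ∃ f : V → Fin q,
      ∀ v w, G.Adj v w → ord v < k → ord w < k → f v ≠ f w := by
    intro k
    induction k with
    | zero => exact ⟨fun _ => ⟨0, hq⟩, fun v w _ hv _ => by omega⟩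
    | succ k ih =>
      obtain ⟨f, hf⟩ := ih
      by_cases hex : ∃ v, ord v = k
      · obtain ⟨v, hv⟩ := hex
        obtain ⟨s, hscov, hscard⟩ := hless v
        have hcompl : ((s.image f)ᶜ : Finset (Fin q)).Nonempty := by
          rw [← Finset.card_pos, Finset.card_compl, Fintype.card_fin]
          have h1 : (s.image f).card ≤ s.card := Finset.card_image_le
          omega
        obtain ⟨c, hc⟩ := hcompl
        have hcnot : c ∉ s.image f := Finset.mem_compl.mp hc
        refine ⟨Function.update f v c, ?_⟩
        intro a b hadj ha hb
        by_cases hav : a = v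
        · subst hav
          have hbv : b ≠ a := fun h => (G.irrefl (h ▸ hadj))
          rw [Function.update_self, Function.update_of_ne hbv]
          have hbo : ord b < ord a := by
            rcases lt_or_eq_of_le (Nat.lt_succ_iff.mp hb) with h | h
            · rw [hv]; exact h
            · exact absurd (hinj (h.trans hv.symm)) hbv
          intro heq
          exact hcnot (heq ▸ Finset.mem_image_of_mem f (hscov b hadj hbo))
        · by_cases hbv : b = v
          · subst hbv
            rw [Function.update_self, Function.update_of_ne hav]
            have hao : ord a < ord b := by
              rcases lt_or_eq_of_le (Nat.lt_succ_iff.mp ha) with h | h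
              · rw [hv]; exact h
              · exact absurd (hinj (h.trans hv.symm)) hav
            intro heq
            exact hcnot (heq.symm ▸ Finset.mem_image_of_mem f (hscov a hadj.symm hao))
          · rw [Function.update_of_ne hav, Function.update_of_ne hbv]
            have h1 : ord a < k := by
              rcases lt_or_eq_of_le (Nat.lt_succ_iff.mp ha) with h | h
              · exact h
              · exact absurd (hinj (h.trans hv.symm)) hav
            have h2 : ord b < k := by
              rcases lt_or_eq_of_le (Nat.lt_succ_iff.mp hb) with h | h
              · exact h
              · exact absurd (hinj (h.trans hv.symm)) hbv
            exact hf a b hadj h1 h2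
      · push_neg at hex
        refine ⟨f, fun v w hadj hv hw => hf v w hadj ?_ ?_⟩
        · have := hex v; omega
        · have := hex w; omega
  obtain ⟨f, hf⟩ := main (Finset.univ.sup ord + 1)
  refine ⟨f, fun v w hadj => hf v w hadj ?_ ?_⟩
  · exact Nat.lt_succ_of_le (Finset.le_sup (Finset.mem_univ v))
  · exact Nat.lt_succ_of_le (Finset.le_sup (Finset.mem_univ w))

/-! ### Walks within a set of vertices -/

variable (G : SimpleGraph V)

/-- There is a walk from `u` to `v` all of whose vertices lie in `S`. -/
def SWalk (S : Set V) (u v : V) : Prop :=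
  ∃ p : G.Walk u v, ∀ x ∈ p.support, x ∈ S

variable {G}

lemma SWalk.mem_left {S : Set V} {u v : V} (h : SWalk G S u v) : u ∈ S :=
  h.choose_spec u h.choose.start_mem_support

lemma SWalk.mem_right {S : Set V} {u v : V} (h : SWalk G S u v) : v ∈ S :=
  h.choose_spec v h.choose.end_mem_support

lemma swalk_refl {S : Set V} {u : V} (hu : u ∈ S) : SWalk G S u u :=
  ⟨SimpleGraph.Walk.nil, by simp [hu]⟩

lemma SWalk.symm {S : Set V} {u v : V} (h : SWalk G S u v) : SWalk G S v u := by
  obtain ⟨p, hp⟩ := h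
  exact ⟨p.reverse, fun x hx => hp x (by rwa [SimpleGraph.Walk.support_reverse,
    List.mem_reverse] at hx)⟩

lemma SWalk.trans {S : Set V} {u v w : V} (h : SWalk G S u v) (h' : SWalk G S v w) :
    SWalk G S u w := by
  obtain ⟨p, hp⟩ := h
  obtain ⟨p', hp'⟩ := h'
  refine ⟨p.append p', fun x hx => ?_⟩
  rw [SimpleGraph.Walk.mem_support_append_iff] at hx
  rcases hx with hx | hx
  · exact hp x hx
  · exact hp' x hx

lemma swalk_adj {S : Set V} {u v : V} (h : G.Adj u v) (hu : u ∈ S) (hv : v ∈ S) :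
    SWalk G S u v :=
  ⟨SimpleGraph.Walk.cons h SimpleGraph.Walk.nil, by simp [hu, hv]⟩

lemma SWalk.mono {S S' : Set V} (hss : S ⊆ S') {u v : V} (h : SWalk G S u v) :
    SWalk G S' u v := by
  obtain ⟨p, hp⟩ := h
  exact ⟨p, fun x hx => hss (hp x hx)⟩

lemma swalk_of_mem_support {S : Set V} {u v : V} (p : G.Walk u v)
    (hp : ∀ x ∈ p.support, x ∈ S) {z : V} (hz : z ∈ p.support) : SWalk G S u z :=
  ⟨p.takeUntil z hz, fun x hx => hp x (SimpleGraph.Walk.support_takeUntil_subset p hz hx)⟩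

/-- Walk exit lemma: a walk starting in `A` either stays in `A` or first leaves it
through some edge. -/
lemma walk_exit {u t : V} (p : G.Walk u t) (A : Set V) :
    u ∈ A → ((∀ x ∈ p.support, x ∈ A) ∨
      ∃ c w : V, SWalk G A u c ∧ G.Adj c w ∧ w ∉ A ∧ w ∈ p.support) := by
  induction p with
  | nil =>
    intro hu
    left
    simp [hu]
  | @cons u' v' t' h p ih =>
    intro hu
    by_cases hv : v' ∈ A
    · rcases ih hv with hall | ⟨c, w, hsw, hadj, hw, hwsupp⟩
      · left
        intro x hx
        rw [SimpleGraph.Walk.support_cons, List.mem_cons] at hx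
        rcases hx with rfl | hx
        · exact hu
        · exact hall x hx
      · right
        exact ⟨c, w, (swalk_adj h hu hv).trans hsw, hadj, hw,
          by rw [SimpleGraph.Walk.support_cons]; exact List.mem_cons_of_mem _ hwsupp⟩
    · right
      refine ⟨u', v', swalk_refl hu, h, hv, ?_⟩
      rw [SimpleGraph.Walk.support_cons]
      exact List.mem_cons_of_mem _ p.start_mem_support

/-- A "distance to the root within `A`" function with downhill neighbours. -/
lemma exists_downhill (G : SimpleGraph V) (A : Set V) (r : V)
    (hA : ∀ w ∈ A, SWalk G A w r) :
    ∃ D : V → ℕ, ∀ w ∈ A, w ≠ r → ∃ u ∈ A, G.Adj w u ∧ D u < D w := by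
  classical
  have hex : ∀ w : V, w ∈ A → ∃ n : ℕ, ∃ p : G.Walk w r, p.length = n ∧
      ∀ x ∈ p.support, x ∈ A := by
    intro w hw
    obtain ⟨p, hp⟩ := hA w hw
    exact ⟨p.length, p, rfl, hp⟩
  set D : V → ℕ := fun w => if h : w ∈ A then Nat.find (hex w h) else 0 with hD
  refine ⟨D, fun w hw hwr => ?_⟩
  obtain ⟨p, hlen, hsupp⟩ := Nat.find_spec (hex w hw)
  cases p with
  | nil => exact absurd rfl hwr
  | @cons _ v _ h p' =>
    have hv : v ∈ A := by
      apply hsupp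
      rw [SimpleGraph.Walk.support_cons]
      exact List.mem_cons_of_mem _ p'.start_mem_support
    refine ⟨v, hv, h, ?_⟩
    have hsupp' : ∀ x ∈ p'.support, x ∈ A := by
      intro x hx
      apply hsupp
      rw [SimpleGraph.Walk.support_cons]
      exact List.mem_cons_of_mem _ hx
    have hDv : D v ≤ p'.length := by
      rw [hD]
      simp only [hv, dif_pos]
      exact Nat.find_le ⟨p', rfl, hsupp'⟩
    have hDw : D w = p'.length + 1 := by
      rw [hD]
      simp only [hw, dif_pos]
      rw [← hlen]
      simp [SimpleGraph.Walk.length_cons]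
    omega


lemma triple_lemma (G : SimpleGraph V) [DecidableRel G.Adj] (hconn : G.Connected)
    (hdeg3 : ∀ v : V, 3 ≤ G.degree v)
    (h2 : ∀ z u w : V, u ≠ z → w ≠ z → SWalk G ({z}ᶜ : Set V) u w)
    (hnc : G ≠ ⊤) :
    ∃ x a b : V, G.Adj x a ∧ G.Adj x b ∧ ¬ G.Adj a b ∧ a ≠ b ∧
      ∀ w, w ≠ a → w ≠ b → SWalk G ({a, b}ᶜ : Set V) w x := by
  classical
  by_cases hcase : ∀ x y u w : V, u ∉ ({x, y} : Set V) → w ∉ ({x, y} : Set V) →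
      SWalk G ({x, y}ᶜ : Set V) u w
  · -- Case I: removing any two vertices keeps things connected; use a distance-2 triple
    obtain ⟨u₀, w₀, hne, hnadj⟩ : ∃ u w : V, u ≠ w ∧ ¬ G.Adj u w := by
      by_contra h
      push_neg at h
      apply hnc
      ext u w
      simp only [SimpleGraph.top_adj]
      exact ⟨fun h' => h'.ne, fun h' => h u w h'⟩
    have hreach : ∃ n : ℕ, ∃ p : G.Walk u₀ w₀, p.length = n := by
      obtain ⟨p⟩ := hconn.preconnected u₀ w₀
      exact ⟨p.length, p, rfl⟩
    set n₀ := Nat.find hreach with hn₀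
    obtain ⟨p, hplen⟩ := Nat.find_spec hreach
    have hmin : ∀ p' : G.Walk u₀ w₀, n₀ ≤ p'.length := fun p' =>
      Nat.find_le ⟨p', rfl⟩
    cases p with
    | nil => exact absurd rfl hne
    | @cons _ v₁ _ h₁ p' =>
      cases p' with
      | nil => exact absurd h₁ hnadj
      | @cons _ v₂ _ h₂ p'' =>
        -- u₀ - v₁ - v₂ - ... - w₀
        have hlen : p''.length + 2 = n₀ := by
          rw [hn₀, ← hplen]
          simp [SimpleGraph.Walk.length_cons]
        have hab : u₀ ≠ v₂ := by
          rintro rfl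
          have := hmin p''
          omega
        have hnadj2 : ¬ G.Adj u₀ v₂ := by
          intro hadj
          have := hmin (SimpleGraph.Walk.cons hadj p'')
          simp [SimpleGraph.Walk.length_cons] at this
          omega
        refine ⟨v₁, u₀, v₂, h₁.symm, h₂, hnadj2, hab, ?_⟩
        intro w hwa hwb
        have hv₁ : v₁ ∉ ({u₀, v₂} : Set V) := by
          simp only [Set.mem_insert_iff, Set.mem_singleton_iff]
          push_neg
          exact ⟨h₁.ne', h₂.ne⟩
        exact hcase u₀ v₂ w v₁ (by simp [hwa, hwb]) hv₁
  · -- Case II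
    push_neg at hcase
    obtain ⟨x, y, u₀, w₀, hu₀, hw₀, hnsw⟩ := hcase
    set S : Set V := ({x, y}ᶜ : Set V) with hS
    have hSmem : ∀ z, z ∈ S ↔ z ≠ x ∧ z ≠ y := by
      intro z; simp [hS]
    have hu₀S : u₀ ∈ S := hu₀
    have hw₀S : w₀ ∈ S := hw₀
    have hxy : x ≠ y := by
      rintro rfl
      refine hnsw (SWalk.mono ?_ (h2 x u₀ w₀ ((hSmem u₀).mp hu₀S).1 ((hSmem w₀).mp hw₀S).1))
      intro z hz
      simpa [hS, Set.pair_eq_singleton] using hz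
    have hxS : x ∉ S := by simp [hS]
    have hyS : y ∉ S := by simp [hS]
    -- components
    set Cu : Set V := {t | SWalk G S u₀ t} with hCu
    set Cw : Set V := {t | SWalk G S w₀ t} with hCw
    have hdisj : ∀ t, t ∈ Cu → t ∈ Cw → False := by
      intro t h1 h2'
      exact hnsw (h1.trans h2'.symm)
    have hCuS : Cu ⊆ S := fun t ht => ht.mem_right
    have hCwS : Cw ⊆ S := fun t ht => ht.mem_right
    -- each component has a neighbor of x and of y
    have hnbrx : ∀ t, t ∈ S → ∃ c, SWalk G S t c ∧ G.Adj c x := by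
      intro t ht
      obtain ⟨hx', hy'⟩ := (hSmem t).mp ht
      obtain ⟨p, hp⟩ := h2 y t x hy' hxy
      rcases walk_exit p S ht with hall | ⟨c, w, hsw, hadj, hw, hwsupp⟩
      · exact absurd (hall x p.end_mem_support) hxS
      · have hwy : w ≠ y := by
          intro h
          exact (hp w hwsupp) (by simp [h])
        have hwx : w = x ∨ w = y := by
          by_contra hc
          push_neg at hc
          exact hw ((hSmem w).mpr hc)
        rcases hwx with rfl | rfl
        · exact ⟨c, hsw, hadj⟩
        · exact absurd rfl hwy
    have hnbry : ∀ t, t ∈ S → ∃ c, SWalk G S t c ∧ G.Adj c y := by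
      intro t ht
      obtain ⟨hx', hy'⟩ := (hSmem t).mp ht
      obtain ⟨p, hp⟩ := h2 x t y hx' (Ne.symm hxy)
      rcases walk_exit p S ht with hall | ⟨c, w, hsw, hadj, hw, hwsupp⟩
      · exact absurd (hall y p.end_mem_support) hyS
      · have hwx : w ≠ x := by
          intro h
          exact (hp w hwsupp) (by simp [h])
        have hwy : w = x ∨ w = y := by
          by_contra hc
          push_neg at hc
          exact hw ((hSmem w).mpr hc)
        rcases hwy with rfl | rfl
        · exact absurd rfl hwx
        · exact ⟨c, hsw, hadj⟩
    -- minimal-length walks through a component, from a neighbor of x to a neighbor of y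
    have hthru : ∀ t, t ∈ S → ∃ n : ℕ, ∃ c d : V, ∃ p : G.Walk c d,
        G.Adj x c ∧ G.Adj d y ∧ (∀ z ∈ p.support, SWalk G S t z) ∧ p.length = n := by
      intro t ht
      obtain ⟨c, hc, hcx⟩ := hnbrx t ht
      obtain ⟨d, hd, hdy⟩ := hnbry t ht
      obtain ⟨p, hp⟩ := hc.symm.trans hd
      refine ⟨p.length, c, d, p, hcx.symm, hdy, ?_, rfl⟩
      intro z hz
      exact hc.trans (swalk_of_mem_support p hp hz)
    obtain ⟨c₁, d₁, p₁, hc₁, hd₁, hp₁, hlen₁⟩ := Nat.find_spec (hthru u₀ hu₀S)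
    obtain ⟨c₂, d₂, p₂, hc₂, hd₂, hp₂, hlen₂⟩ := Nat.find_spec (hthru w₀ hw₀S)
    have hc₁Cu : c₁ ∈ Cu := hp₁ c₁ p₁.start_mem_support
    have hd₁Cu : d₁ ∈ Cu := hp₁ d₁ p₁.end_mem_support
    have hc₂Cw : c₂ ∈ Cw := hp₂ c₂ p₂.start_mem_support
    -- find the pair (a, b) with a walk from x to y avoiding them
    suffices hfound : ∃ a b : V, G.Adj x a ∧ G.Adj x b ∧ a ∈ Cu ∧ b ∈ Cw ∧
        SWalk G ({a, b}ᶜ : Set V) x y by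
      obtain ⟨a, b, hxa, hxb, haCu, hbCw, hWxy⟩ := hfound
      have haS : a ∈ S := hCuS haCu
      have hbS : b ∈ S := hCwS hbCw
      have hTmem : ∀ z, z ∈ ({a, b}ᶜ : Set V) ↔ z ≠ a ∧ z ≠ b := by
        intro z; simp
      have hxT : x ∈ ({a, b}ᶜ : Set V) := (hTmem x).mpr
        ⟨fun h => hxS (h ▸ haS), fun h => hxS (h ▸ hbS)⟩
      have hyT : y ∈ ({a, b}ᶜ : Set V) := (hTmem y).mpr
        ⟨fun h => hyS (h ▸ haS), fun h => hyS (h ▸ hbS)⟩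
      have hnadj : ¬ G.Adj a b := by
        intro h
        exact hnsw ((haCu.trans (swalk_adj h haS hbS)).trans hbCw.symm)
      have habne : a ≠ b := fun h => hdisj a haCu (h ▸ hbCw)
      refine ⟨x, a, b, hxa, hxb, hnadj, habne, ?_⟩
      intro w hwa hwb
      by_cases hwx : w = x
      · subst hwx; exact swalk_refl hxT
      by_cases hwy : w = y
      · subst hwy; exact hWxy.symm
      have hwS : w ∈ S := (hSmem w).mpr ⟨hwx, hwy⟩
      have hA : ∀ z, z ∈ ({a, b, x, y}ᶜ : Set V) ↔ z ≠ a ∧ z ≠ b ∧ z ≠ x ∧ z ≠ y := by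
        intro z; simp
      have hAsubS : ({a, b, x, y}ᶜ : Set V) ⊆ S := by
        intro z hz
        obtain ⟨-, -, h3, h4⟩ := (hA z).mp hz
        exact (hSmem z).mpr ⟨h3, h4⟩
      have hAsubT : ({a, b, x, y}ᶜ : Set V) ⊆ ({a, b}ᶜ : Set V) := by
        intro z hz
        obtain ⟨h1', h2', -, -⟩ := (hA z).mp hz
        exact (hTmem z).mpr ⟨h1', h2'⟩
      have hwA : w ∈ ({a, b, x, y}ᶜ : Set V) := (hA w).mpr ⟨hwa, hwb, hwx, hwy⟩
      by_cases hwCw : w ∈ Cw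
      · -- walk avoiding b
        obtain ⟨p, hp⟩ := h2 b w x hwb (fun h => hxS (h ▸ hbS))
        rcases walk_exit p ({a, b, x, y}ᶜ : Set V) hwA with hall | ⟨c, w', hsw, hadj, hw', hws⟩
        · exact absurd ((hA x).mp (hall x p.end_mem_support)).2.2.1 (by simp)
        · have hw'b : w' ≠ b := fun h => (hp w' hws) (by simp [h])
          have hcS : c ∈ S := hAsubS hsw.mem_right
          have hcases : w' = a ∨ w' = b ∨ w' = x ∨ w' = y := by
            by_contra hc
            push_neg at hc
            exact hw' ((hA w').mpr ⟨hc.1, hc.2.1, hc.2.2.1, hc.2.2.2⟩)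
          rcases hcases with rfl | rfl | rfl | rfl
          · -- w' = a : contradiction
            exfalso
            have hwa' : SWalk G S w w' :=
              (hsw.mono hAsubS).trans (swalk_adj hadj hcS haS)
            exact hnsw (haCu.trans ((hwCw.trans hwa').symm))
          · exact absurd rfl hw'b
          · exact (hsw.mono hAsubT).trans (swalk_adj hadj (hAsubT hsw.mem_right) hxT)
          · exact ((hsw.mono hAsubT).trans
              (swalk_adj hadj (hAsubT hsw.mem_right) hyT)).trans hWxy.symm
      · -- walk avoiding a
        obtain ⟨p, hp⟩ := h2 a w x hwa (fun h => hxS (h ▸ haS))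
        rcases walk_exit p ({a, b, x, y}ᶜ : Set V) hwA with hall | ⟨c, w', hsw, hadj, hw', hws⟩
        · exact absurd ((hA x).mp (hall x p.end_mem_support)).2.2.1 (by simp)
        · have hw'a : w' ≠ a := fun h => (hp w' hws) (by simp [h])
          have hcS : c ∈ S := hAsubS hsw.mem_right
          have hcases : w' = a ∨ w' = b ∨ w' = x ∨ w' = y := by
            by_contra hc
            push_neg at hc
            exact hw' ((hA w').mpr ⟨hc.1, hc.2.1, hc.2.2.1, hc.2.2.2⟩)
          rcases hcases with rfl | rfl | rfl | rfl
          · exact absurd rfl hw'a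
          · -- w' = b : contradiction
            exfalso
            have hwb' : SWalk G S w w' :=
              (hsw.mono hAsubS).trans (swalk_adj hadj hcS hbS)
            exact hwCw (hbCw.trans hwb'.symm)
          · exact (hsw.mono hAsubT).trans (swalk_adj hadj (hAsubT hsw.mem_right) hxT)
          · exact ((hsw.mono hAsubT).trans
              (swalk_adj hadj (hAsubT hsw.mem_right) hyT)).trans hWxy.symm
    -- now produce the pair (a, b)
    have hxc₁ : x ≠ c₁ := fun h => hxS (h ▸ hCuS hc₁Cu)
    have hxc₂ : x ≠ c₂ := fun h => hxS (h ▸ hCwS hc₂Cw)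
    have hyc₁ : y ≠ c₁ := fun h => hyS (h ▸ hCuS hc₁Cu)
    have hyc₂ : y ≠ c₂ := fun h => hyS (h ▸ hCwS hc₂Cw)
    by_cases hthird : ∃ t, t ∈ S ∧ t ∉ Cu ∧ t ∉ Cw
    · obtain ⟨t, htS, htCu, htCw⟩ := hthird
      obtain ⟨c₃, hc₃, hc₃x⟩ := hnbrx t htS
      obtain ⟨d₃, hd₃, hd₃y⟩ := hnbry t htS
      obtain ⟨p₃, hp₃⟩ := hc₃.symm.trans hd₃
      refine ⟨c₁, c₂, hc₁, hc₂, hc₁Cu, hc₂Cw, ?_⟩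
      have hTne : ∀ z, SWalk G S t z → z ∈ ({c₁, c₂}ᶜ : Set V) := by
        intro z hz
        simp only [Set.mem_compl_iff, Set.mem_insert_iff, Set.mem_singleton_iff]
        push_neg
        constructor
        · rintro rfl
          exact htCu (hc₁Cu.trans hz.symm)
        · rintro rfl
          exact htCw (hc₂Cw.trans hz.symm)
      have hxmem : x ∈ ({c₁, c₂}ᶜ : Set V) := by
        simp only [Set.mem_compl_iff, Set.mem_insert_iff, Set.mem_singleton_iff]
        push_neg
        exact ⟨hxc₁, hxc₂⟩
      have hymem : y ∈ ({c₁, c₂}ᶜ : Set V) := by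
        simp only [Set.mem_compl_iff, Set.mem_insert_iff, Set.mem_singleton_iff]
        push_neg
        exact ⟨hyc₁, hyc₂⟩
      have hmid : SWalk G ({c₁, c₂}ᶜ : Set V) c₃ d₃ :=
        ⟨p₃, fun z hz => hTne z (hc₃.trans (swalk_of_mem_support p₃ hp₃ hz))⟩
      exact (swalk_adj hc₃x.symm hxmem (hTne c₃ hc₃)).trans
        (hmid.trans (swalk_adj hd₃y (hTne d₃ hd₃) hymem))
    · push_neg at hthird
      by_cases hsU : ∃ a', a' ∈ Cu ∧ G.Adj x a' ∧ a' ∉ p₁.support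
      · obtain ⟨a', ha'Cu, hxa', ha'supp⟩ := hsU
        refine ⟨a', c₂, hxa', hc₂, ha'Cu, hc₂Cw, ?_⟩
        have hmemt : ∀ z, z ∈ p₁.support → z ∈ ({a', c₂}ᶜ : Set V) := by
          intro z hz
          simp only [Set.mem_compl_iff, Set.mem_insert_iff, Set.mem_singleton_iff]
          push_neg
          constructor
          · rintro rfl; exact ha'supp hz
          · rintro rfl; exact hdisj z (hp₁ z hz) hc₂Cw
        have hxmem : x ∈ ({a', c₂}ᶜ : Set V) := by
          simp only [Set.mem_compl_iff, Set.mem_insert_iff, Set.mem_singleton_iff]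
          push_neg
          exact ⟨fun h => hxS (h ▸ hCuS ha'Cu), hxc₂⟩
        have hymem : y ∈ ({a', c₂}ᶜ : Set V) := by
          simp only [Set.mem_compl_iff, Set.mem_insert_iff, Set.mem_singleton_iff]
          push_neg
          exact ⟨fun h => hyS (h ▸ hCuS ha'Cu), hyc₂⟩
        have hmid : SWalk G ({a', c₂}ᶜ : Set V) c₁ d₁ := ⟨p₁, hmemt⟩
        exact (swalk_adj hc₁ hxmem (hmemt c₁ p₁.start_mem_support)).trans
          (hmid.trans (swalk_adj hd₁ (hmemt d₁ p₁.end_mem_support) hymem))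
      · by_cases hsW : ∃ b', b' ∈ Cw ∧ G.Adj x b' ∧ b' ∉ p₂.support
        · obtain ⟨b', hb'Cw, hxb', hb'supp⟩ := hsW
          refine ⟨c₁, b', hc₁, hxb', hc₁Cu, hb'Cw, ?_⟩
          have hmemt : ∀ z, z ∈ p₂.support → z ∈ ({c₁, b'}ᶜ : Set V) := by
            intro z hz
            simp only [Set.mem_compl_iff, Set.mem_insert_iff, Set.mem_singleton_iff]
            push_neg
            constructor
            · rintro rfl; exact hdisj z hc₁Cu (hp₂ z hz)
            · rintro rfl; exact hb'supp hz
          have hxmem : x ∈ ({c₁, b'}ᶜ : Set V) := by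
            simp only [Set.mem_compl_iff, Set.mem_insert_iff, Set.mem_singleton_iff]
            push_neg
            exact ⟨hxc₁, fun h => hxS (h ▸ hCwS hb'Cw)⟩
          have hymem : y ∈ ({c₁, b'}ᶜ : Set V) := by
            simp only [Set.mem_compl_iff, Set.mem_insert_iff, Set.mem_singleton_iff]
            push_neg
            exact ⟨hyc₁, fun h => hyS (h ▸ hCwS hb'Cw)⟩
          have hmid : SWalk G ({c₁, b'}ᶜ : Set V) c₂ d₂ := ⟨p₂, hmemt⟩
          exact (swalk_adj hc₂ hxmem (hmemt c₂ p₂.start_mem_support)).trans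
            (hmid.trans (swalk_adj hd₂ (hmemt d₂ p₂.end_mem_support) hymem))
        · -- forced case : N(x) ⊆ {c₁, c₂, y}, so x ~ y
          push_neg at hsU hsW
          have honly₁ : ∀ z ∈ p₁.support, G.Adj x z → z = c₁ := by
            intro z hz hxz
            by_contra hne
            have hq : ∀ w' ∈ (p₁.dropUntil z hz).support, SWalk G S u₀ w' := by
              intro w' hw'
              exact hp₁ w' (SimpleGraph.Walk.support_dropUntil_subset p₁ hz hw')
            have hwit : Nat.find (hthru u₀ hu₀S) ≤ (p₁.dropUntil z hz).length :=
              Nat.find_le ⟨z, d₁, p₁.dropUntil z hz, hxz, hd₁, hq, rfl⟩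
            have hsplit := congrArg SimpleGraph.Walk.length (p₁.take_spec hz)
            rw [SimpleGraph.Walk.length_append] at hsplit
            have htpos : 0 < (p₁.takeUntil z hz).length := by
              rcases Nat.eq_zero_or_pos (p₁.takeUntil z hz).length with h0 | h0
              · exact absurd (SimpleGraph.Walk.eq_of_length_eq_zero h0).symm hne
              · exact h0
            omega
          have honly₂ : ∀ z ∈ p₂.support, G.Adj x z → z = c₂ := by
            intro z hz hxz
            by_contra hne
            have hq : ∀ w' ∈ (p₂.dropUntil z hz).support, SWalk G S w₀ w' := by
              intro w' hw'
              exact hp₂ w' (SimpleGraph.Walk.support_dropUntil_subset p₂ hz hw')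
            have hwit : Nat.find (hthru w₀ hw₀S) ≤ (p₂.dropUntil z hz).length :=
              Nat.find_le ⟨z, d₂, p₂.dropUntil z hz, hxz, hd₂, hq, rfl⟩
            have hsplit := congrArg SimpleGraph.Walk.length (p₂.take_spec hz)
            rw [SimpleGraph.Walk.length_append] at hsplit
            have htpos : 0 < (p₂.takeUntil z hz).length := by
              rcases Nat.eq_zero_or_pos (p₂.takeUntil z hz).length with h0 | h0
              · exact absurd (SimpleGraph.Walk.eq_of_length_eq_zero h0).symm hne
              · exact h0
            omega
          have hNx : ∀ z, G.Adj x z → z = c₁ ∨ z = c₂ ∨ z = y := by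
            intro z hxz
            by_cases hzS : z ∈ S
            · by_cases hzCu : z ∈ Cu
              · exact Or.inl (honly₁ z (hsU z hzCu hxz) hxz)
              · have hzCw : z ∈ Cw := hthird z hzS hzCu
                exact Or.inr (Or.inl (honly₂ z (hsW z hzCw hxz) hxz))
            · have : z = x ∨ z = y := by
                by_contra hc
                push_neg at hc
                exact hzS ((hSmem z).mpr hc)
              rcases this with rfl | rfl
              · exact absurd rfl hxz.ne
              · exact Or.inr (Or.inr rfl)
          have hxyadj : G.Adj x y := by
            by_contra hnxy
            have hsub : G.neighborFinset x ⊆ {c₁, c₂} := by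
              intro z hz
              have hxz : G.Adj x z := by simpa using hz
              rcases hNx z hxz with rfl | rfl | rfl
              · exact Finset.mem_insert_self _ _
              · exact Finset.mem_insert_of_mem (Finset.mem_singleton_self _)
              · exact absurd hxz hnxy
            have h1 : G.degree x ≤ ({c₁, c₂} : Finset V).card := by
              rw [← SimpleGraph.card_neighborFinset_eq_degree]
              exact Finset.card_le_card hsub
            have h2 : ({c₁, c₂} : Finset V).card ≤ 2 := Finset.card_insert_le _ _ |>.trans
              (by simp)
            have := hdeg3 x
            omega
          have hxmem : x ∈ ({c₁, c₂}ᶜ : Set V) := by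
            simp only [Set.mem_compl_iff, Set.mem_insert_iff, Set.mem_singleton_iff]
            push_neg
            exact ⟨hxc₁, hxc₂⟩
          have hymem : y ∈ ({c₁, c₂}ᶜ : Set V) := by
            simp only [Set.mem_compl_iff, Set.mem_insert_iff, Set.mem_singleton_iff]
            push_neg
            exact ⟨hyc₁, hyc₂⟩
          exact ⟨c₁, c₂, hc₁, hc₂, hc₁Cu, hc₂Cw, swalk_adj hxyadj hxmem hymem⟩


/-- Build an injective order that is antitone with respect to a distance function
and has positive values. -/
lemma ord_build [Nonempty V] (D : V → ℕ) : ∃ ord : V → ℕ, Function.Injective ord ∧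
    (∀ a b, D a < D b → ord b < ord a) ∧ (∀ v, 0 < ord v) := by
  classical
  set C := Fintype.card V with hC
  have hC0 : 0 < C := Fintype.card_pos
  set idx : V → ℕ := fun v => ((Fintype.equivFin V) v : ℕ) with hidx
  have hidxlt : ∀ v, idx v < C := fun v => (Fintype.equivFin V v).isLt
  have hidxinj : Function.Injective idx := fun u v h =>
    (Fintype.equivFin V).injective (Fin.val_injective h)
  set M := Finset.univ.sup D with hM
  have hDle : ∀ w, D w ≤ M := fun w => Finset.le_sup (Finset.mem_univ w)
  refine ⟨fun w => idx w + (M + 1 - D w) * C, ?_, ?_, ?_⟩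
  · intro u v h
    have h1 : idx u = idx v := by
      have h2 := congrArg (· % C) h
      simpa [Nat.add_mul_mod_self_right, Nat.mod_eq_of_lt (hidxlt _)] using h2
    exact hidxinj h1
  · intro u v huv
    have hDu := hDle u
    have hDv := hDle v
    have h1 : (M + 1 - D v) + 1 ≤ M + 1 - D u := by omega
    have h2 : ((M + 1 - D v) + 1) * C ≤ (M + 1 - D u) * C := Nat.mul_le_mul_right C h1
    have h3 : ((M + 1 - D v) + 1) * C = (M + 1 - D v) * C + C := by ring
    have h4 := hidxlt v
    show idx v + (M + 1 - D v) * C < idx u + (M + 1 - D u) * C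
    omega
  · intro v
    have h1 : 1 ≤ M + 1 - D v := by
      have := hDle v; omega
    have h2 : C ≤ (M + 1 - D v) * C := le_mul_of_one_le_left' h1
    show 0 < idx v + (M + 1 - D v) * C
    omega

theorem brooks_exists (G : SimpleGraph V) [DecidableRel G.Adj] (hconn : G.Connected)
    (hΔ : 3 ≤ G.maxDegree) (hnc : G ≠ ⊤) :
    ∃ f : V → Fin G.maxDegree, ∀ v w, G.Adj v w → f v ≠ f w := by
  classical
  have hV : Nonempty V := hconn.nonempty
  set q := G.maxDegree with hqdef
  have hq0 : 0 < q := by omega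
  by_cases hlow : ∃ r : V, G.degree r < q
  · -- Case 1 : a vertex of low degree
    obtain ⟨r, hr⟩ := hlow
    have hA : ∀ w ∈ (Set.univ : Set V), SWalk G Set.univ w r := by
      intro w _
      obtain ⟨p⟩ := hconn.preconnected w r
      exact ⟨p, fun x _ => trivial⟩
    obtain ⟨D, hD⟩ := exists_downhill G Set.univ r hA
    obtain ⟨ord, hordinj, hordlt, -⟩ := ord_build D
    apply greedy_coloring G q hq0 ord hordinj
    intro v
    by_cases hvr : v = r
    · subst hvr
      refine ⟨G.neighborFinset v, fun u hadj _ => by simpa using hadj, ?_⟩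
      rwa [SimpleGraph.card_neighborFinset_eq_degree]
    · obtain ⟨u, -, hadj, hDu⟩ := hD v trivial hvr
      refine ⟨(G.neighborFinset v).erase u, ?_, ?_⟩
      · intro u' hadj' hord'
        refine Finset.mem_erase.mpr ⟨?_, by simpa using hadj'⟩
        rintro rfl
        have h5 := hordlt _ v hDu
        omega
      · have hmem : u ∈ G.neighborFinset v := by simpa using hadj
        have hcard := Finset.card_erase_lt_of_mem hmem
        have h1 : (G.neighborFinset v).card ≤ q := by
          rw [SimpleGraph.card_neighborFinset_eq_degree]
          exact G.degree_le_maxDegree v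
        omega
  · -- regular case
    push_neg at hlow
    have hreg : ∀ v, G.degree v = q := fun v => le_antisymm (G.degree_le_maxDegree v) (hlow v)
    by_cases h2c : ∀ z u w : V, u ≠ z → w ≠ z → SWalk G ({z}ᶜ : Set V) u w
    · -- Case 2b : two-connected
      obtain ⟨x, a, b, hxa, hxb, hnadj, habne, hTconn⟩ := triple_lemma G hconn
        (fun v => by rw [hreg]; exact hΔ) h2c hnc
      have hx_a : x ≠ a := hxa.ne
      have hx_b : x ≠ b := hxb.ne
      have hab : a ≠ b := habne
      have hinst : Nonempty {w : V // w ≠ b} := ⟨⟨a, hab⟩⟩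
      set H : SimpleGraph {w : V // w ≠ b} := SimpleGraph.fromRel
        (fun p q' => G.Adj ↑p ↑q' ∨ ((p : V) = a ∧ G.Adj b ↑q')) with hH
      have hHadj : ∀ p q' : {w : V // w ≠ b}, H.Adj p q' ↔ p ≠ q' ∧
          (G.Adj ↑p ↑q' ∨ ((p : V) = a ∧ G.Adj b ↑q') ∨ ((q' : V) = a ∧ G.Adj b ↑p)) := by
        intro p q'
        rw [hH, SimpleGraph.fromRel_adj]
        have hsymm : G.Adj ↑q' ↑p ↔ G.Adj ↑p ↑q' := ⟨SimpleGraph.Adj.symm, SimpleGraph.Adj.symm⟩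
        tauto
      have hAconn : ∀ w ∈ ({a, b}ᶜ : Set V), SWalk G ({a, b}ᶜ : Set V) w x := by
        intro w hw
        simp only [Set.mem_compl_iff, Set.mem_insert_iff, Set.mem_singleton_iff] at hw
        push_neg at hw
        exact hTconn w hw.1 hw.2
      obtain ⟨D, hD⟩ := exists_downhill G ({a, b}ᶜ : Set V) x hAconn
      obtain ⟨ord, hordinj, hordlt, hordpos⟩ := ord_build D
      set ordH : {w : V // w ≠ b} → ℕ := fun w => if (w : V) = a then 0 else ord ↑w with hordH
      have hordHinj : Function.Injective ordH := by
        intro u v h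
        rw [hordH] at h
        simp only at h
        split_ifs at h with h1 h2 h2
        · exact Subtype.ext (h1.trans h2.symm)
        · exact absurd h.symm (by have := hordpos ↑v; omega)
        · exact absurd h (by have := hordpos ↑u; omega)
        · exact Subtype.ext (hordinj h)
      have hless : ∀ w : {w : V // w ≠ b}, ∃ s : Finset {w : V // w ≠ b},
          (∀ u, H.Adj w u → ordH u < ordH w → u ∈ s) ∧ s.card < q := by
        intro w
        by_cases hwa : (w : V) = a
        · refine ⟨∅, ?_, by simpa using hq0⟩
          intro u _ hlt
          exfalso
          have h0 : ordH w = 0 := by rw [hordH]; simp [hwa]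
          omega
        by_cases hwx : (w : V) = x
        · -- the root x
          refine ⟨Finset.univ.filter (fun u => H.Adj w u), fun u hadj _ => by simp [hadj], ?_⟩
          have hinj2 : (Finset.univ.filter (fun u => H.Adj w u)).card ≤
              ((G.neighborFinset x).erase b).card := by
            apply Finset.card_le_card_of_injOn (fun u : {w : V // w ≠ b} => (u : V))
            · intro u hu
              have hadj := (Finset.mem_filter.mp hu).2
              rw [hHadj] at hadj
              obtain ⟨hne, hcases⟩ := hadj
              refine Finset.mem_erase.mpr ⟨u.2, ?_⟩
              rcases hcases with h | h | h
              · rw [← hwx]; simpa using h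
              · exact absurd (hwx ▸ h.1 : x = a) hx_a
              · beta_reduce; rw [h.1]; simpa using hxa
            · intro u₁ _ u₂ _ h
              exact Subtype.ext h
          have hmem : b ∈ G.neighborFinset x := by simpa using hxb
          have hcard := Finset.card_erase_lt_of_mem hmem
          have h1 : (G.neighborFinset x).card = q := by
            rw [SimpleGraph.card_neighborFinset_eq_degree]; exact hreg x
          omega
        · -- middle vertex
          have hwmem : (w : V) ∈ ({a, b}ᶜ : Set V) := by
            simp only [Set.mem_compl_iff, Set.mem_insert_iff, Set.mem_singleton_iff]
            push_neg
            exact ⟨hwa, w.2⟩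
          obtain ⟨u, humem, hadj, hDu⟩ := hD (w : V) hwmem hwx
          simp only [Set.mem_compl_iff, Set.mem_insert_iff, Set.mem_singleton_iff] at humem
          push_neg at humem
          set u' : {w : V // w ≠ b} := ⟨u, humem.2⟩ with hu'
          have hHadj' : H.Adj w u' := by
            rw [hHadj]
            refine ⟨?_, Or.inl hadj⟩
            intro h
            exact G.irrefl (h ▸ hadj)
          have hltord : ordH w < ordH u' := by
            rw [hordH]
            simp only
            rw [if_neg hwa, if_neg humem.1]
            exact hordlt u ↑w hDu
          refine ⟨(Finset.univ.filter (fun u₂ => H.Adj w u₂)).erase u', ?_, ?_⟩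
          · intro u₂ hadj₂ hlt₂
            refine Finset.mem_erase.mpr ⟨?_, by simp [hadj₂]⟩
            rintro rfl
            omega
          · have key : ∀ u₃ : {w : V // w ≠ b}, H.Adj w u₃ → ¬ G.Adj ↑w ↑u₃ → (u₃ : V) = a := by
              intro u₃ hadj₃ hg
              rw [hHadj] at hadj₃
              rcases hadj₃.2 with h | h | h
              · exact absurd h hg
              · exact absurd h.1 hwa
              · exact h.1
            have hfilter : (Finset.univ.filter (fun u₂ => H.Adj w u₂)).card ≤ G.degree ↑w := by
              rw [← SimpleGraph.card_neighborFinset_eq_degree]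
              refine Finset.card_le_card_of_injOn
                (fun u₂ : {w : V // w ≠ b} => if G.Adj ↑w ↑u₂ then (u₂ : V) else b) ?_ ?_
              · intro u₂ hu₂
                dsimp only
                have hadj₂ := (Finset.mem_filter.mp hu₂).2
                by_cases hGadj : G.Adj ↑w ↑u₂
                · rw [if_pos hGadj]; simpa using hGadj
                · rw [if_neg hGadj]
                  have h3 := key u₂ hadj₂ hGadj
                  rw [hHadj] at hadj₂
                  rcases hadj₂.2 with h | h | h
                  · exact absurd h hGadj
                  · exact absurd h.1 hwa
                  · simpa using h.2.symm
              · intro u₁ h₁ u₂ h₂ heq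
                dsimp only at heq
                by_cases hg1 : G.Adj ↑w ↑u₁ <;> by_cases hg2 : G.Adj ↑w ↑u₂
                · rw [if_pos hg1, if_pos hg2] at heq; exact Subtype.ext heq
                · rw [if_pos hg1, if_neg hg2] at heq; exact absurd heq u₁.2
                · rw [if_neg hg1, if_pos hg2] at heq; exact absurd heq.symm u₂.2
                · exact Subtype.ext ((key u₁ (Finset.mem_filter.mp h₁).2 hg1).trans
                    (key u₂ (Finset.mem_filter.mp h₂).2 hg2).symm)
            have hu'mem : u' ∈ Finset.univ.filter (fun u₂ => H.Adj w u₂) := by simp [hHadj']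
            have hcard := Finset.card_erase_lt_of_mem hu'mem
            have hdq := hreg (w : V)
            omega
      obtain ⟨f', hf'⟩ := greedy_coloring H q hq0 ordH hordHinj hless
      refine ⟨fun w => if h : w = b then f' ⟨a, hab⟩ else f' ⟨w, h⟩, ?_⟩
      have hFv : ∀ (w₂ : V) (h : w₂ ≠ b),
          (fun w => if h : w = b then f' ⟨a, hab⟩ else f' ⟨w, h⟩) w₂ = f' ⟨w₂, h⟩ := by
        intro w₂ h
        simp only
        rw [dif_neg h]
      have hFb : (fun w => if h : w = b then f' ⟨a, hab⟩ else f' ⟨w, h⟩) b = f' ⟨a, hab⟩ := by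
        simp
      intro v₁ w₁ hadj
      by_cases hvb : v₁ = b <;> by_cases hwb : w₁ = b
      · rw [hvb, hwb] at hadj
        exact absurd hadj G.irrefl
      · rw [hvb] at hadj ⊢
        rw [hFb, hFv w₁ hwb]
        apply hf'
        rw [hHadj]
        refine ⟨?_, Or.inr (Or.inl ⟨rfl, hadj⟩)⟩
        intro h
        have h1 : a = w₁ := congrArg Subtype.val h
        have h2 : G.Adj w₁ b := hadj.symm
        rw [← h1] at h2
        exact hnadj h2
      · rw [hwb] at hadj ⊢
        rw [hFb, hFv v₁ hvb]
        apply hf'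
        rw [hHadj]
        refine ⟨?_, Or.inr (Or.inr ⟨rfl, hadj.symm⟩)⟩
        intro h
        have h1 : v₁ = a := congrArg Subtype.val h
        have h2 : G.Adj v₁ b := hadj
        rw [h1] at h2
        exact hnadj h2
      · rw [hFv v₁ hvb, hFv w₁ hwb]
        apply hf'
        rw [hHadj]
        exact ⟨fun h => hadj.ne (congrArg Subtype.val h), Or.inl hadj⟩
    · push_neg at h2c
      obtain ⟨z, u₀, w₀, hu₀z, hw₀z, hnsw⟩ := h2c
      set S : Set V := ({z}ᶜ : Set V) with hSdef
      have hSmem : ∀ t : V, t ∈ S ↔ t ≠ z := by intro t; simp [hSdef]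
      have hu₀S : u₀ ∈ S := (hSmem u₀).mpr hu₀z
      have hw₀S : w₀ ∈ S := (hSmem w₀).mpr hw₀z
      have hzS : z ∉ S := by simp [hSdef]
      have hnbrz : ∀ t, t ∈ S → ∃ c, SWalk G S t c ∧ G.Adj c z := by
        intro t ht
        obtain ⟨p⟩ := hconn.preconnected t z
        rcases walk_exit p S ht with hall | ⟨c, w, hsw, hadj, hw, hwsupp⟩
        · exact absurd (hall z p.end_mem_support) hzS
        · have hwz : w = z := by
            by_contra hwz
            exact hw ((hSmem w).mpr hwz)
          exact ⟨c, hsw, hwz ▸ hadj⟩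
      obtain ⟨a₁, ha₁u, ha₁z⟩ := hnbrz u₀ hu₀S
      obtain ⟨c₂, hc₂w, hc₂z⟩ := hnbrz w₀ hw₀S
      have hc₂Cu : ¬ SWalk G S u₀ c₂ := fun h => hnsw (h.trans hc₂w.symm)
      -- side 1 : the component of u₀ together with z
      set A1 : Set V := {t | SWalk G S u₀ t ∨ t = z} with hA1def
      have hzA1 : z ∈ A1 := Or.inr rfl
      have hA1 : ∀ w ∈ A1, SWalk G A1 w z := by
        intro w hw
        rcases hw with hw | rfl
        · obtain ⟨c, hc, hcz⟩ := hnbrz w hw.mem_right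
          have hstr : SWalk G A1 w c := by
            obtain ⟨p, hp⟩ := hc
            exact ⟨p, fun t ht => Or.inl (hw.trans (swalk_of_mem_support p hp ht))⟩
          exact hstr.trans (swalk_adj hcz (Or.inl (hw.trans hc)) hzA1)
        · exact swalk_refl hzA1
      obtain ⟨D1, hD1⟩ := exists_downhill G A1 z hA1
      obtain ⟨ord1, hord1inj, hord1lt, -⟩ := ord_build D1
      have hinst1 : Nonempty {w : V // w ∈ A1} := ⟨⟨z, hzA1⟩⟩
      set H1 : SimpleGraph {w : V // w ∈ A1} := SimpleGraph.fromRel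
        (fun p q' => G.Adj ↑p ↑q') with hH1
      have hH1adj : ∀ p q' : {w : V // w ∈ A1}, H1.Adj p q' ↔ p ≠ q' ∧ G.Adj ↑p ↑q' := by
        intro p q'
        rw [hH1, SimpleGraph.fromRel_adj]
        have hs : G.Adj ↑q' ↑p ↔ G.Adj ↑p ↑q' := ⟨SimpleGraph.Adj.symm, SimpleGraph.Adj.symm⟩
        tauto
      have hless1 : ∀ w : {w : V // w ∈ A1}, ∃ s : Finset {w : V // w ∈ A1},
          (∀ u, H1.Adj w u → ord1 ↑u < ord1 ↑w → u ∈ s) ∧ s.card < q := by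
        intro w
        by_cases hwz : (w : V) = z
        · refine ⟨Finset.univ.filter (fun u => H1.Adj w u), fun u hadj _ => by simp [hadj], ?_⟩
          have hle : (Finset.univ.filter (fun u => H1.Adj w u)).card ≤
              ((G.neighborFinset z).erase c₂).card := by
            refine Finset.card_le_card_of_injOn (fun u : {w : V // w ∈ A1} => (u : V)) ?_ ?_
            · intro u hu
              obtain ⟨hne, hGadj⟩ := (hH1adj w u).mp (Finset.mem_filter.mp hu).2
              refine Finset.mem_erase.mpr ⟨?_, by simpa using (hwz ▸ hGadj : G.Adj z ↑u)⟩
              intro heq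
              rcases u.2 with h | h
              · exact hc₂Cu (heq ▸ h)
              · exact (hSmem c₂).mp hc₂w.mem_right (heq ▸ h)
            · intro u₁ _ u₂ _ h
              exact Subtype.ext h
          have hmem : c₂ ∈ G.neighborFinset z := by simpa using hc₂z.symm
          have hcard := Finset.card_erase_lt_of_mem hmem
          have h1 : (G.neighborFinset z).card = q := by
            rw [SimpleGraph.card_neighborFinset_eq_degree]; exact hreg z
          omega
        · obtain ⟨u, huA, hadj, hDu⟩ := hD1 ↑w w.2 hwz
          refine ⟨(Finset.univ.filter (fun u₂ => H1.Adj w u₂)).erase ⟨u, huA⟩, ?_, ?_⟩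
          · intro u₂ hadj₂ hlt₂
            refine Finset.mem_erase.mpr ⟨?_, by simp [hadj₂]⟩
            rintro rfl
            have h5 := hord1lt u ↑w hDu
            simp only at hlt₂
            omega
          · have hfil : (Finset.univ.filter (fun u₂ => H1.Adj w u₂)).card ≤ G.degree ↑w := by
              rw [← SimpleGraph.card_neighborFinset_eq_degree]
              refine Finset.card_le_card_of_injOn (fun u₂ : {w : V // w ∈ A1} => (u₂ : V)) ?_ ?_
              · intro u₂ hu₂
                obtain ⟨hne, hGadj⟩ := (hH1adj w u₂).mp (Finset.mem_filter.mp hu₂).2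
                simpa using hGadj
              · intro u₁ _ u₂ _ h
                exact Subtype.ext h
            have hu'mem : (⟨u, huA⟩ : {w : V // w ∈ A1}) ∈
                Finset.univ.filter (fun u₂ => H1.Adj w u₂) := by
              refine Finset.mem_filter.mpr ⟨Finset.mem_univ _, (hH1adj w ⟨u, huA⟩).mpr ⟨?_, hadj⟩⟩
              intro h
              have h1 : (w : V) = u := congrArg Subtype.val h
              rw [h1] at hadj
              exact G.irrefl hadj
            have hcard := Finset.card_erase_lt_of_mem hu'mem
            have hdq := hreg (w : V)
            omega
      obtain ⟨f1, hf1⟩ := greedy_coloring H1 q hq0 (fun w => ord1 ↑w)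
        (fun u v h => Subtype.ext (hord1inj h)) hless1
      -- side 2 : everything outside the component of u₀
      set A2 : Set V := {t | ¬ SWalk G S u₀ t} with hA2def
      have hzA2 : z ∈ A2 := fun h => hzS h.mem_right
      have hA2 : ∀ w ∈ A2, SWalk G A2 w z := by
        intro w hw
        by_cases hwz : w = z
        · subst hwz; exact swalk_refl hzA2
        · have hwS : w ∈ S := (hSmem w).mpr hwz
          obtain ⟨c, hc, hcz⟩ := hnbrz w hwS
          have hstr : SWalk G A2 w c := by
            obtain ⟨p, hp⟩ := hc
            refine ⟨p, fun t ht hut => ?_⟩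
            exact hw (hut.trans (swalk_of_mem_support p hp ht).symm)
          have hcA2 : c ∈ A2 := fun huc => hw (huc.trans hc.symm)
          exact hstr.trans (swalk_adj hcz hcA2 hzA2)
      obtain ⟨D2, hD2⟩ := exists_downhill G A2 z hA2
      obtain ⟨ord2, hord2inj, hord2lt, -⟩ := ord_build D2
      have hinst2 : Nonempty {w : V // w ∈ A2} := ⟨⟨z, hzA2⟩⟩
      set H2 : SimpleGraph {w : V // w ∈ A2} := SimpleGraph.fromRel
        (fun p q' => G.Adj ↑p ↑q') with hH2
      have hH2adj : ∀ p q' : {w : V // w ∈ A2}, H2.Adj p q' ↔ p ≠ q' ∧ G.Adj ↑p ↑q' := by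
        intro p q'
        rw [hH2, SimpleGraph.fromRel_adj]
        have hs : G.Adj ↑q' ↑p ↔ G.Adj ↑p ↑q' := ⟨SimpleGraph.Adj.symm, SimpleGraph.Adj.symm⟩
        tauto
      have hless2 : ∀ w : {w : V // w ∈ A2}, ∃ s : Finset {w : V // w ∈ A2},
          (∀ u, H2.Adj w u → ord2 ↑u < ord2 ↑w → u ∈ s) ∧ s.card < q := by
        intro w
        by_cases hwz : (w : V) = z
        · refine ⟨Finset.univ.filter (fun u => H2.Adj w u), fun u hadj _ => by simp [hadj], ?_⟩
          have hle : (Finset.univ.filter (fun u => H2.Adj w u)).card ≤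
              ((G.neighborFinset z).erase a₁).card := by
            refine Finset.card_le_card_of_injOn (fun u : {w : V // w ∈ A2} => (u : V)) ?_ ?_
            · intro u hu
              obtain ⟨hne, hGadj⟩ := (hH2adj w u).mp (Finset.mem_filter.mp hu).2
              refine Finset.mem_erase.mpr ⟨?_, by simpa using (hwz ▸ hGadj : G.Adj z ↑u)⟩
              intro heq
              have h1 : (u : V) = a₁ := heq
              exact u.2 (h1.symm ▸ ha₁u)
            · intro u₁ _ u₂ _ h
              exact Subtype.ext h
          have hmem : a₁ ∈ G.neighborFinset z := by simpa using ha₁z.symm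
          have hcard := Finset.card_erase_lt_of_mem hmem
          have h1 : (G.neighborFinset z).card = q := by
            rw [SimpleGraph.card_neighborFinset_eq_degree]; exact hreg z
          omega
        · obtain ⟨u, huA, hadj, hDu⟩ := hD2 ↑w w.2 hwz
          refine ⟨(Finset.univ.filter (fun u₂ => H2.Adj w u₂)).erase ⟨u, huA⟩, ?_, ?_⟩
          · intro u₂ hadj₂ hlt₂
            refine Finset.mem_erase.mpr ⟨?_, by simp [hadj₂]⟩
            rintro rfl
            have h5 := hord2lt u ↑w hDu
            simp only at hlt₂
            omega
          · have hfil : (Finset.univ.filter (fun u₂ => H2.Adj w u₂)).card ≤ G.degree ↑w := by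
              rw [← SimpleGraph.card_neighborFinset_eq_degree]
              refine Finset.card_le_card_of_injOn (fun u₂ : {w : V // w ∈ A2} => (u₂ : V)) ?_ ?_
              · intro u₂ hu₂
                obtain ⟨hne, hGadj⟩ := (hH2adj w u₂).mp (Finset.mem_filter.mp hu₂).2
                simpa using hGadj
              · intro u₁ _ u₂ _ h
                exact Subtype.ext h
            have hu'mem : (⟨u, huA⟩ : {w : V // w ∈ A2}) ∈
                Finset.univ.filter (fun u₂ => H2.Adj w u₂) := by
              refine Finset.mem_filter.mpr ⟨Finset.mem_univ _, (hH2adj w ⟨u, huA⟩).mpr ⟨?_, hadj⟩⟩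
              intro h
              have h1 : (w : V) = u := congrArg Subtype.val h
              rw [h1] at hadj
              exact G.irrefl hadj
            have hcard := Finset.card_erase_lt_of_mem hu'mem
            have hdq := hreg (w : V)
            omega
      obtain ⟨f2, hf2⟩ := greedy_coloring H2 q hq0 (fun w => ord2 ↑w)
        (fun u v h => Subtype.ext (hord2inj h)) hless2
      -- glue the two colorings
      set σ := Equiv.swap (f2 ⟨z, hzA2⟩) (f1 ⟨z, hzA1⟩) with hσ
      have hznot : ¬ SWalk G S u₀ z := fun h => hzS h.mem_right
      refine ⟨fun w => if h : SWalk G S u₀ w then f1 ⟨w, Or.inl h⟩ else σ (f2 ⟨w, h⟩), ?_⟩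
      intro v₁ w₁ hadj
      dsimp only
      by_cases hv : SWalk G S u₀ v₁ <;> by_cases hw : SWalk G S u₀ w₁
      · rw [dif_pos hv, dif_pos hw]
        apply hf1
        rw [hH1adj]
        exact ⟨fun h => hadj.ne (congrArg Subtype.val h), hadj⟩
      · have hwz : w₁ = z := by
          by_contra hwz
          exact hw (hv.trans (swalk_adj hadj hv.mem_right ((hSmem w₁).mpr hwz)))
        subst hwz
        rw [dif_pos hv, dif_neg hznot, hσ, Equiv.swap_apply_left]
        apply hf1
        rw [hH1adj]
        exact ⟨fun h => hadj.ne (congrArg Subtype.val h), hadj⟩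
      · have hvz : v₁ = z := by
          by_contra hvz
          exact hv (hw.trans (swalk_adj hadj.symm hw.mem_right ((hSmem v₁).mpr hvz)))
        subst hvz
        rw [dif_neg hznot, dif_pos hw, hσ, Equiv.swap_apply_left]
        apply hf1
        rw [hH1adj]
        exact ⟨fun h => hadj.ne (congrArg Subtype.val h), hadj⟩
      · rw [dif_neg hv, dif_neg hw]
        intro heq
        apply hf2 ⟨v₁, hv⟩ ⟨w₁, hw⟩ ?_ (σ.injective heq)
        rw [hH2adj]
        exact ⟨fun h => hadj.ne (congrArg Subtype.val h), hadj⟩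


end GraphPart

noncomputable section AFPart
open Polynomial MvPolynomial

/-- Evaluation of a polynomial over multivariate polynomials at
`X := z` and multivariate variables `g`. -/
def EV {m : ℕ} (g : Fin m → ℝ) (z : ℝ) : Polynomial (MvPolynomial (Fin m) ℝ) →+* ℝ :=
  (Polynomial.evalRingHom z).comp (Polynomial.mapRingHom (MvPolynomial.eval g))

lemma EV_apply {m : ℕ} (g : Fin m → ℝ) (z : ℝ) (Ψ : Polynomial (MvPolynomial (Fin m) ℝ)) :
    EV g z Ψ = Polynomial.eval z (Ψ.map (MvPolynomial.eval g)) := rfl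

/-- Reduction of a univariate polynomial (over multivariate polys) to degree `< q`
preserving values at points of `T` and the total-degree profile. -/
lemma exists_reduced (m q : ℕ) (hq : 1 ≤ q) (T : Finset ℝ) (hT : T.card = q) (D : ℕ)
    (Ψ : Polynomial (MvPolynomial (Fin m) ℝ))
    (hprof : ∀ k, Ψ.coeff k ≠ 0 → (Ψ.coeff k).totalDegree + k ≤ D) :
    ∃ Ψ' : Polynomial (MvPolynomial (Fin m) ℝ), Ψ'.natDegree < q ∧
      (∀ k, Ψ'.coeff k ≠ 0 → (Ψ'.coeff k).totalDegree + k ≤ D) ∧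
      (∀ z ∈ T, ∀ g : Fin m → ℝ, EV g z Ψ' = EV g z Ψ) := by
  -- the modulus
  set M₀ : Polynomial ℝ := ∏ t ∈ T, (Polynomial.X - Polynomial.C t) with hM₀
  have hM₀monic : M₀.Monic := monic_prod_of_monic _ _ fun t _ => monic_X_sub_C t
  have hM₀deg : M₀.natDegree = q := by
    rw [hM₀, natDegree_prod_of_monic _ _ fun t _ => monic_X_sub_C t]
    simp [hT]
  set ρ₀ : Polynomial ℝ := Polynomial.X ^ q - M₀ with hρ₀
  have hρ₀coeff : ∀ N, q ≤ N → ρ₀.coeff N = 0 := by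
    intro N hN
    rcases eq_or_lt_of_le hN with h | h
    · have h1 : M₀.coeff N = 1 := by
        rw [← h, ← hM₀deg]; exact hM₀monic.coeff_natDegree
      rw [hρ₀, Polynomial.coeff_sub, Polynomial.coeff_X_pow, h1, if_pos h.symm, sub_self]
    · have h1 : M₀.coeff N = 0 :=
        Polynomial.coeff_eq_zero_of_natDegree_lt (by omega : M₀.natDegree < N)
      rw [hρ₀, Polynomial.coeff_sub, Polynomial.coeff_X_pow, h1, if_neg (by omega), sub_zero]
  have hρ₀eval : ∀ z ∈ T, ρ₀.eval z = z ^ q := by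
    intro z hz
    have : M₀.eval z = 0 := by
      rw [hM₀, Polynomial.eval_prod]
      exact Finset.prod_eq_zero hz (by simp)
    simp [hρ₀, this]
  -- strong induction on the degree bound
  suffices H : ∀ N : ℕ, ∀ Ψ : Polynomial (MvPolynomial (Fin m) ℝ), Ψ.natDegree ≤ N →
      (∀ k, Ψ.coeff k ≠ 0 → (Ψ.coeff k).totalDegree + k ≤ D) →
      ∃ Ψ' : Polynomial (MvPolynomial (Fin m) ℝ), Ψ'.natDegree < q ∧
        (∀ k, Ψ'.coeff k ≠ 0 → (Ψ'.coeff k).totalDegree + k ≤ D) ∧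
        (∀ z ∈ T, ∀ g : Fin m → ℝ, EV g z Ψ' = EV g z Ψ) by
    exact H Ψ.natDegree Ψ le_rfl hprof
  intro N
  induction N with
  | zero =>
    intro Ψ hdeg hprof
    exact ⟨Ψ, by omega, hprof, fun z _ g => rfl⟩
  | succ N ih =>
    intro Ψ hdeg hprof
    by_cases hlt : Ψ.natDegree < q
    · exact ⟨Ψ, hlt, hprof, fun z _ g => rfl⟩
    push_neg at hlt
    have hΨne : Ψ ≠ 0 := by
      intro h; rw [h] at hlt; simp at hlt; omega
    set d := Ψ.natDegree with hd
    set A := Ψ.leadingCoeff with hA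
    have hAne : A ≠ 0 := leadingCoeff_ne_zero.mpr hΨne
    have hdD : d ≤ D := by
      have := hprof d hAne
      omega
    set ρ : Polynomial (MvPolynomial (Fin m) ℝ) :=
      ρ₀.map (MvPolynomial.C : ℝ →+* MvPolynomial (Fin m) ℝ) with hρ
    set Ψ₁ := Ψ.eraseLead + (Polynomial.C A * ρ) * Polynomial.X ^ (d - q) with hΨ₁
    -- coefficients of the correction term
    have hcoeffcorr : ∀ k, ((Polynomial.C A * ρ) * Polynomial.X ^ (d - q)).coeff k =
        if d - q ≤ k then A * MvPolynomial.C (ρ₀.coeff (k - (d - q))) else 0 := by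
      intro k
      rw [Polynomial.coeff_mul_X_pow']
      split_ifs with h
      · rw [Polynomial.coeff_C_mul, hρ, Polynomial.coeff_map]
      · rfl
    have hzero_high : ∀ k, d ≤ k → Ψ₁.coeff k = 0 := by
      intro k hk
      rw [hΨ₁, Polynomial.coeff_add, hcoeffcorr]
      have h1 : Ψ.eraseLead.coeff k = 0 := by
        rw [Polynomial.eraseLead_coeff]
        split_ifs with h
        · rfl
        · exact Polynomial.coeff_eq_zero_of_natDegree_lt (by omega)
      rw [h1, if_pos (by omega)]
      rw [hρ₀coeff (k - (d - q)) (by omega)]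
      simp
    have hΨ₁deg : Ψ₁.natDegree ≤ N := by
      rw [natDegree_le_iff_coeff_eq_zero]
      intro k hk
      exact hzero_high k (by omega)
    have hΨ₁prof : ∀ k, Ψ₁.coeff k ≠ 0 → (Ψ₁.coeff k).totalDegree + k ≤ D := by
      intro k hkne
      have hkd : k < d := by
        by_contra h
        exact hkne (hzero_high k (by omega))
      have h1 : (Ψ₁.coeff k).totalDegree ≤
          max (Ψ.eraseLead.coeff k).totalDegree
            (((Polynomial.C A * ρ) * Polynomial.X ^ (d - q)).coeff k).totalDegree := by
        rw [hΨ₁, Polynomial.coeff_add]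
        exact MvPolynomial.totalDegree_add _ _
      have h2 : (Ψ.eraseLead.coeff k).totalDegree + k ≤ D := by
        rw [Polynomial.eraseLead_coeff, if_neg (by omega)]
        by_cases h : Ψ.coeff k = 0
        · simp [h]; omega
        · exact hprof k h
      have h3 : (((Polynomial.C A * ρ) * Polynomial.X ^ (d - q)).coeff k).totalDegree + k ≤ D := by
        rw [hcoeffcorr]
        split_ifs with h
        · have hb : (A * MvPolynomial.C (ρ₀.coeff (k - (d - q)))).totalDegree ≤
              A.totalDegree := by
            refine le_trans (MvPolynomial.totalDegree_mul _ _) ?_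
            simp [MvPolynomial.totalDegree_C]
          have hAc : Ψ.coeff d = A := rfl
          have := hprof d (by rw [hAc]; exact hAne)
          rw [hAc] at this
          omega
        · simp only [MvPolynomial.totalDegree_zero]
          omega
      omega
    obtain ⟨Ψ', h1, h2, h3⟩ := ih Ψ₁ hΨ₁deg hΨ₁prof
    refine ⟨Ψ', h1, h2, fun z hz g => ?_⟩
    rw [h3 z hz g]
    -- EV g z Ψ₁ = EV g z Ψ
    have hsplit : Ψ = Ψ.eraseLead + Polynomial.C A * Polynomial.X ^ d :=
      (Polynomial.eraseLead_add_C_mul_X_pow Ψ).symm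
    have hEVρ : EV g z ρ = z ^ q := by
      rw [EV_apply, hρ, Polynomial.map_map]
      have : (MvPolynomial.eval g).comp (MvPolynomial.C : ℝ →+* MvPolynomial (Fin m) ℝ) =
          RingHom.id ℝ := by
        ext r; simp
      rw [this, Polynomial.map_id, ← hρ₀eval z hz]
    have hEVX : EV g z (Polynomial.X) = z := by simp [EV_apply]
    have hEVC : ∀ B : MvPolynomial (Fin m) ℝ, EV g z (Polynomial.C B) = MvPolynomial.eval g B := by
      intro B; simp [EV_apply]
    calc EV g z Ψ₁ = EV g z Ψ.eraseLead + (MvPolynomial.eval g A * z ^ q) * z ^ (d - q) := by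
          rw [hΨ₁, map_add, map_mul, map_mul, map_pow, hEVρ, hEVX, hEVC]
      _ = EV g z Ψ.eraseLead + MvPolynomial.eval g A * z ^ d := by
          rw [mul_assoc, ← pow_add]
          congr 3
          omega
      _ = EV g z Ψ := by
          conv_rhs => rw [hsplit]
          rw [map_add, map_mul, map_pow, hEVX, hEVC]

lemma rpow_le_q_sub_k (q k : ℕ) (hq : 2 ≤ q) (hk : k < q) :
    (q : ℝ) ^ ((1 : ℝ) - k / ((q : ℝ) - 1)) ≤ (q : ℝ) - k := by
  have hq2 : (2 : ℝ) ≤ (q : ℝ) := by exact_mod_cast hq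
  have hkr : (k : ℝ) ≤ (q : ℝ) - 1 := by
    have : (k : ℝ) + 1 ≤ (q : ℝ) := by exact_mod_cast hk
    linarith
  have hqne : ((q : ℝ) - 1) ≠ 0 := by linarith
  have key := Real.geom_mean_le_arith_mean2_weighted
    (w₁ := ((q : ℝ) - 1 - k) / ((q : ℝ) - 1)) (w₂ := (k : ℝ) / ((q : ℝ) - 1))
    (p₁ := (q : ℝ)) (p₂ := 1)
    (by apply div_nonneg <;> linarith) (by apply div_nonneg <;> [positivity; linarith])
    (by positivity) (by norm_num)
    (by field_simp; ring)
  have h1 : ((q : ℝ) - 1 - k) / ((q : ℝ) - 1) = (1 : ℝ) - k / ((q : ℝ) - 1) := by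
    field_simp
  rw [Real.one_rpow, mul_one, h1] at key
  refine le_trans key (le_of_eq ?_)
  field_simp
  ring

theorem AF_fin (q : ℕ) (hq : 2 ≤ q) (T : Finset ℝ) (hT : T.card = q) :
    ∀ (n : ℕ) (F : MvPolynomial (Fin n) ℝ) (d : ℕ), F.totalDegree ≤ d →
    ∀ g₀ : Fin n → ℝ, (∀ i, g₀ i ∈ T) → MvPolynomial.eval g₀ F ≠ 0 →
    (q : ℝ) ^ ((n : ℝ) - d / ((q:ℝ) - 1)) ≤
      ((Fintype.piFinset (fun _ : Fin n => T)).filter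
        (fun g => MvPolynomial.eval g F ≠ 0)).card := by
  have hq2 : (2 : ℝ) ≤ (q : ℝ) := by exact_mod_cast hq
  intro n
  induction n with
  | zero =>
    intro F d hd g₀ hg₀T hg₀
    have hmem : g₀ ∈ (Fintype.piFinset (fun _ : Fin 0 => T)).filter
        (fun g => MvPolynomial.eval g F ≠ 0) :=
      Finset.mem_filter.mpr ⟨Fintype.mem_piFinset.mpr hg₀T, hg₀⟩
    have hcard : 1 ≤ ((Fintype.piFinset (fun _ : Fin 0 => T)).filter
        (fun g => MvPolynomial.eval g F ≠ 0)).card :=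
      Finset.card_pos.mpr ⟨g₀, hmem⟩
    have h1 : (q : ℝ) ^ (((0:ℕ) : ℝ) - d / ((q:ℝ) - 1)) ≤ 1 := by
      apply Real.rpow_le_one_of_one_le_of_nonpos (by linarith)
      have : (0:ℝ) ≤ (d : ℝ) / ((q:ℝ) - 1) := by
        apply div_nonneg <;> [positivity; linarith]
      simp only [Nat.cast_zero]
      linarith
    calc (q : ℝ) ^ (((0:ℕ) : ℝ) - d / ((q:ℝ) - 1)) ≤ 1 := h1
      _ ≤ _ := by exact_mod_cast hcard
  | succ n ih =>
    intro F d hd g₀ hg₀T hg₀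
    classical
    set Ψ := finSuccEquiv ℝ n F with hΨ
    have hprof : ∀ k, Ψ.coeff k ≠ 0 → (Ψ.coeff k).totalDegree + k ≤ d :=
      fun k hk => le_trans (totalDegree_coeff_finSuccEquiv_add_le F k hk) hd
    obtain ⟨Ψ', hΨ'deg, hΨ'prof, hΨ'ev⟩ := exists_reduced n q (by omega) T hT d Ψ hprof
    have hval : ∀ z ∈ T, ∀ g : Fin n → ℝ, MvPolynomial.eval (Fin.cons z g) F =
        Polynomial.eval z (Ψ'.map (MvPolynomial.eval g)) := by
      intro z hz g
      rw [eval_eq_eval_mv_eval', ← hΨ, ← EV_apply, ← hΨ'ev z hz g, EV_apply]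
    set Kset := (Finset.range q).filter (fun k => ∃ g' ∈ Fintype.piFinset (fun _ : Fin n => T),
      MvPolynomial.eval g' (Ψ'.coeff k) ≠ 0) with hKset
    have hg₀cons : Fin.cons (g₀ 0) (Fin.tail g₀) = g₀ := Fin.cons_self_tail g₀
    have h0T : g₀ 0 ∈ T := hg₀T 0
    have htail : ∀ i, Fin.tail g₀ i ∈ T := fun i => hg₀T i.succ
    have hKne : Kset.Nonempty := by
      have h1 : Polynomial.eval (g₀ 0) (Ψ'.map (MvPolynomial.eval (Fin.tail g₀))) ≠ 0 := by
        rw [← hval _ h0T _, hg₀cons]; exact hg₀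
      obtain ⟨k, hk⟩ : ∃ k, (Ψ'.map (MvPolynomial.eval (Fin.tail g₀))).coeff k ≠ 0 := by
        by_contra h; push_neg at h
        have hzero : Ψ'.map (MvPolynomial.eval (Fin.tail g₀)) = 0 :=
          Polynomial.ext (by simpa using h)
        rw [hzero] at h1
        simp at h1
      rw [Polynomial.coeff_map] at hk
      refine ⟨k, Finset.mem_filter.mpr ⟨Finset.mem_range.mpr ?_, ⟨Fin.tail g₀,
        Fintype.mem_piFinset.mpr htail, hk⟩⟩⟩
      have hne : Ψ'.coeff k ≠ 0 := fun h => hk (by rw [h]; simp)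
      have := Polynomial.le_natDegree_of_ne_zero hne
      omega
    set kk := Kset.max' hKne with hkk
    have hkkmem := Kset.max'_mem hKne
    have hkkq : kk < q := Finset.mem_range.mp (Finset.mem_filter.mp hkkmem).1
    obtain ⟨g'₀, hg'₀pi, hg'₀⟩ := (Finset.mem_filter.mp hkkmem).2
    have hFkne : Ψ'.coeff kk ≠ 0 := fun h => hg'₀ (by rw [h]; simp)
    have hkkd : kk ≤ d := le_trans (Nat.le_add_left _ _) (hΨ'prof kk hFkne)
    have htd : (Ψ'.coeff kk).totalDegree ≤ d - kk := by
      have := hΨ'prof kk hFkne; omega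
    have IH := ih (Ψ'.coeff kk) (d - kk) htd g'₀ (Fintype.mem_piFinset.mp hg'₀pi) hg'₀
    set Good := (Fintype.piFinset (fun _ : Fin n => T)).filter
      (fun g' => MvPolynomial.eval g' (Ψ'.coeff kk) ≠ 0) with hGood
    -- per-fiber bound
    have hfiber : ∀ g' ∈ Good, (q - kk : ℕ) ≤
        (T.filter (fun z => MvPolynomial.eval (Fin.cons z g') F ≠ 0)).card := by
      intro g' hg'
      obtain ⟨hg'pi, hg'ne⟩ := Finset.mem_filter.mp hg'
      set u := Ψ'.map (MvPolynomial.eval g') with hu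
      have hune : u ≠ 0 := by
        intro h
        apply hg'ne
        have h2 := congrArg (fun p => Polynomial.coeff p kk) h
        simpa [hu, Polynomial.coeff_map] using h2
      have hudeg : u.natDegree ≤ kk := by
        rw [natDegree_le_iff_coeff_eq_zero]
        intro N hN
        rw [hu, Polynomial.coeff_map]
        by_cases hNq : N < q
        · by_contra hne
          have hmem : N ∈ Kset := Finset.mem_filter.mpr
            ⟨Finset.mem_range.mpr hNq, ⟨g', hg'pi, hne⟩⟩
          have := Finset.le_max' Kset N hmem
          omega
        · rw [Polynomial.coeff_eq_zero_of_natDegree_lt (by omega : Ψ'.natDegree < N)]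
          simp
      have hzeros : (T.filter (fun z => MvPolynomial.eval (Fin.cons z g') F = 0)).card ≤ kk := by
        have hsub : (T.filter (fun z => MvPolynomial.eval (Fin.cons z g') F = 0)) ⊆
            u.roots.toFinset := by
          intro z hz
          obtain ⟨hzT, hz0⟩ := Finset.mem_filter.mp hz
          rw [Multiset.mem_toFinset, Polynomial.mem_roots hune]
          rw [Polynomial.IsRoot, hu, ← hval z hzT g']
          exact hz0
        calc (T.filter (fun z => MvPolynomial.eval (Fin.cons z g') F = 0)).card
            ≤ u.roots.toFinset.card := Finset.card_le_card hsub
          _ ≤ Multiset.card u.roots := Multiset.toFinset_card_le _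
          _ ≤ u.natDegree := Polynomial.card_roots' u
          _ ≤ kk := hudeg
      have hsplit := Finset.card_filter_add_card_filter_not (s := T)
        (p := fun z => MvPolynomial.eval (Fin.cons z g') F = 0)
      rw [hT] at hsplit
      have hre : (T.filter (fun a => ¬ MvPolynomial.eval (Fin.cons a g') F = 0)).card =
          (T.filter (fun z => MvPolynomial.eval (Fin.cons z g') F ≠ 0)).card := by
        congr 1
      omega
    set NF := ((Fintype.piFinset (fun _ : Fin (n+1) => T)).filter
      (fun g => MvPolynomial.eval g F ≠ 0)) with hNF
    have hcount : (q - kk) * Good.card ≤ NF.card := by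
      set tfun : (Fin n → ℝ) → Finset (Fin (n+1) → ℝ) := fun g' =>
        (T.filter (fun z => MvPolynomial.eval (Fin.cons z g') F ≠ 0)).image
          (fun z => Fin.cons z g') with htfun
      set B := Good.biUnion tfun with hB
      have hBsub : B ⊆ NF := by
        intro h hh
        obtain ⟨g', hg', hz⟩ := Finset.mem_biUnion.mp hh
        obtain ⟨z, hzmem, rfl⟩ := Finset.mem_image.mp hz
        obtain ⟨hzT, hzne⟩ := Finset.mem_filter.mp hzmem
        refine Finset.mem_filter.mpr ⟨Fintype.mem_piFinset.mpr ?_, hzne⟩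
        intro i
        refine Fin.cases ?_ ?_ i
        · simpa using hzT
        · intro j; simpa using Fintype.mem_piFinset.mp (Finset.mem_filter.mp hg').1 j
      have hcons_inj : ∀ g' : Fin n → ℝ, Function.Injective (fun z : ℝ => (Fin.cons z g' : Fin (n+1) → ℝ)) := by
        intro g' z z' h
        have := congrFun h 0
        simpa using this
      have hcardB : B.card = ∑ g' ∈ Good, (tfun g').card := by
        apply Finset.card_biUnion
        intro x hx y hy hxy
        rw [Function.onFun, Finset.disjoint_left]
        intro h hhx hhy
        obtain ⟨z, _, rfl⟩ := Finset.mem_image.mp hhx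
        obtain ⟨z', _, heq⟩ := Finset.mem_image.mp hhy
        apply hxy
        have := congrArg Fin.tail heq
        simpa [Fin.tail_cons] using this.symm
      have hsum : (q - kk) * Good.card ≤ ∑ g' ∈ Good, (tfun g').card := by
        calc (q - kk) * Good.card = ∑ _g' ∈ Good, (q - kk) := by
              rw [Finset.sum_const, smul_eq_mul, mul_comm]
          _ ≤ ∑ g' ∈ Good, (tfun g').card := by
              apply Finset.sum_le_sum
              intro g' hg'
              rw [htfun]
              simp only []
              rw [Finset.card_image_of_injective _ (hcons_inj g')]
              exact hfiber g' hg'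
      calc (q - kk) * Good.card ≤ ∑ g' ∈ Good, (tfun g').card := hsum
        _ = B.card := hcardB.symm
        _ ≤ NF.card := Finset.card_le_card hBsub
    -- final arithmetic
    have hqk := rpow_le_q_sub_k q kk hq hkkq
    have hqpos : (0:ℝ) < q := by linarith
    have hcast : ((d - kk : ℕ) : ℝ) = (d : ℝ) - (kk : ℝ) := by
      exact Nat.cast_sub hkkd
    have hqne : ((q:ℝ) - 1) ≠ 0 := by linarith
    have hexp : (((n+1:ℕ)) : ℝ) - (d:ℝ) / ((q:ℝ) - 1) =
        ((1 : ℝ) - (kk:ℝ) / ((q:ℝ) - 1)) + ((n : ℝ) - ((d - kk : ℕ):ℝ) / ((q:ℝ) - 1)) := by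
      rw [hcast]
      push_cast
      field_simp
      ring
    have hkcast : (q:ℝ) - (kk:ℝ) = ((q - kk : ℕ) : ℝ) := by
      rw [Nat.cast_sub (le_of_lt hkkq)]
    calc (q : ℝ) ^ ((((n+1:ℕ)) : ℝ) - (d:ℝ) / ((q:ℝ) - 1))
        = (q : ℝ) ^ ((1 : ℝ) - (kk:ℝ) / ((q:ℝ) - 1)) *
          (q : ℝ) ^ ((n : ℝ) - ((d - kk : ℕ):ℝ) / ((q:ℝ) - 1)) := by
          rw [hexp, Real.rpow_add hqpos]
      _ ≤ ((q:ℝ) - kk) * Good.card := by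
          apply mul_le_mul hqk IH (Real.rpow_nonneg (le_of_lt hqpos) _)
          have : (kk:ℝ) + 1 ≤ q := by exact_mod_cast hkkq
          linarith
      _ = (((q - kk) * Good.card : ℕ) : ℝ) := by
          rw [hkcast]; push_cast; ring
      _ ≤ NF.card := by exact_mod_cast hcount

theorem AF_card {V : Type*} [Fintype V] [DecidableEq V] (q : ℕ) (hq : 2 ≤ q) (T : Finset ℝ)
    (hT : T.card = q) (F : MvPolynomial V ℝ) (d : ℕ) (hd : F.totalDegree ≤ d)
    (g₀ : V → ℝ) (hg₀T : ∀ i, g₀ i ∈ T) (hg₀ : MvPolynomial.eval g₀ F ≠ 0) :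
    (q:ℝ) ^ ((Fintype.card V : ℝ) - (d:ℝ) / ((q:ℝ)-1)) ≤
      ((Fintype.piFinset (fun _ : V => T)).filter (fun g => MvPolynomial.eval g F ≠ 0)).card := by
  classical
  set e := Fintype.equivFin V with he
  set F' := rename (⇑e) F with hF'
  have hd' : F'.totalDegree ≤ d := le_trans (totalDegree_rename_le _ _) hd
  set g₀' : Fin (Fintype.card V) → ℝ := g₀ ∘ ⇑e.symm with hg₀'
  have hcomp : g₀' ∘ ⇑e = g₀ := by
    funext v; simp [hg₀']
  have hg₀'T : ∀ i, g₀' i ∈ T := fun i => hg₀T _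
  have hg₀'ne : MvPolynomial.eval g₀' F' ≠ 0 := by
    rw [hF', eval_rename, hcomp]; exact hg₀
  have key := AF_fin q hq T hT (Fintype.card V) F' d hd' g₀' hg₀'T hg₀'ne
  have hcards : ((Fintype.piFinset (fun _ : Fin (Fintype.card V) => T)).filter
      (fun g => MvPolynomial.eval g F' ≠ 0)).card =
      ((Fintype.piFinset (fun _ : V => T)).filter (fun g => MvPolynomial.eval g F ≠ 0)).card := by
    apply Finset.card_bij (i := fun g _ => g ∘ ⇑e)
    · intro g hg
      obtain ⟨hgpi, hgne⟩ := Finset.mem_filter.mp hg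
      refine Finset.mem_filter.mpr ⟨Fintype.mem_piFinset.mpr
        (fun v => Fintype.mem_piFinset.mp hgpi (e v)), ?_⟩
      rwa [hF', eval_rename] at hgne
    · intro g hg g' hg' hgg
      funext i
      have := congrFun hgg (e.symm i)
      simpa using this
    · intro h hmem
      obtain ⟨hpi, hne⟩ := Finset.mem_filter.mp hmem
      refine ⟨h ∘ ⇑e.symm, Finset.mem_filter.mpr ⟨Fintype.mem_piFinset.mpr
        (fun i => Fintype.mem_piFinset.mp hpi (e.symm i)), ?_⟩, ?_⟩
      · rw [hF', eval_rename]
        have : (h ∘ ⇑e.symm) ∘ ⇑e = h := by funext v; simp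
        rwa [this]
      · funext v; simp
  rwa [hcards] at key

variable {V : Type*} [Fintype V] [DecidableEq V] (G : SimpleGraph V) [DecidableRel G.Adj]

theorem count_colorings_ge (q : ℕ) (hq : 2 ≤ q)
    (f₀ : V → Fin q) (hf₀ : ∀ v w, G.Adj v w → f₀ v ≠ f₀ w) :
    (q:ℝ) ^ ((Fintype.card V : ℝ) - (G.edgeFinset.card : ℝ) / ((q:ℝ)-1)) ≤
      ((Finset.univ.filter fun f : V → Fin q =>
        ∀ v w, G.Adj v w → f v ≠ f w).card : ℝ) := by
  classical
  set ordV : V → ℕ := fun v => ((Fintype.equivFin V) v : ℕ) with hordV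
  have hordinj : Function.Injective ordV := by
    intro a b h
    exact (Fintype.equivFin V).injective (Fin.val_injective h)
  set E' : Finset (V × V) :=
    Finset.univ.filter (fun p : V × V => G.Adj p.1 p.2 ∧ ordV p.1 < ordV p.2) with hE'
  set P : MvPolynomial V ℝ := ∏ p ∈ E', (X p.1 - X p.2) with hP
  set T : Finset ℝ := (Finset.range q).image (Nat.cast : ℕ → ℝ) with hTdef
  have hT : T.card = q := by
    rw [hTdef, Finset.card_image_of_injective _ Nat.cast_injective, Finset.card_range]
  have hmemT : ∀ j : Fin q, ((j : ℕ) : ℝ) ∈ T := by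
    intro j
    exact Finset.mem_image.mpr ⟨j, Finset.mem_range.mpr j.isLt, rfl⟩
  -- total degree
  have htd : P.totalDegree ≤ E'.card := by
    refine le_trans (totalDegree_finset_prod _ _) ?_
    have : ∀ p : V × V, (X p.1 - X p.2 : MvPolynomial V ℝ).totalDegree ≤ 1 := by
      intro p
      refine le_trans (totalDegree_sub _ _) ?_
      simp [totalDegree_X]
    calc ∑ p ∈ E', (X p.1 - X p.2 : MvPolynomial V ℝ).totalDegree
        ≤ ∑ _p ∈ E', 1 := Finset.sum_le_sum (fun p _ => this p)
      _ = E'.card := by simp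
  -- edge count
  have hEcard : E'.card = G.edgeFinset.card := by
    apply Finset.card_bij (s := E') (t := G.edgeFinset) (i := fun p _ => Sym2.mk p.1 p.2)
    · rintro ⟨a, b⟩ hp
      obtain ⟨-, hadj, -⟩ := Finset.mem_filter.mp hp
      exact SimpleGraph.mem_edgeFinset.mpr hadj
    · rintro ⟨a, b⟩ ha ⟨a', b'⟩ hb hab
      obtain ⟨-, -, hlt⟩ := Finset.mem_filter.mp ha
      obtain ⟨-, -, hlt'⟩ := Finset.mem_filter.mp hb
      rcases Sym2.eq_iff.mp hab with ⟨h1, h2⟩ | ⟨h1, h2⟩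
      · exact Prod.ext h1 h2
      · exfalso; subst h1; subst h2; dsimp only at hlt hlt'; omega
    · intro s hs
      induction s using Sym2.ind with
      | _ a b =>
        have hadj : G.Adj a b := SimpleGraph.mem_edgeFinset.mp hs
        have hne : ordV a ≠ ordV b := fun h => hadj.ne (hordinj h)
        rcases lt_or_gt_of_ne hne with h | h
        · exact ⟨(a, b), Finset.mem_filter.mpr ⟨Finset.mem_univ _, hadj, h⟩, rfl⟩
        · exact ⟨(b, a), Finset.mem_filter.mpr ⟨Finset.mem_univ _, hadj.symm, h⟩, Sym2.eq_swap⟩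
  -- evaluations
  have heval : ∀ g : V → ℝ, MvPolynomial.eval g P = ∏ p ∈ E', (g p.1 - g p.2) := by
    intro g
    rw [hP, map_prod]
    apply Finset.prod_congr rfl
    intro p _
    simp
  have hevalne : ∀ c : V → Fin q, (∀ v w, G.Adj v w → c v ≠ c w) →
      MvPolynomial.eval (fun v => ((c v : ℕ) : ℝ)) P ≠ 0 := by
    intro c hc
    rw [heval]
    apply Finset.prod_ne_zero_iff.mpr
    intro p hp
    obtain ⟨-, hadj, -⟩ := Finset.mem_filter.mp hp
    have : c p.1 ≠ c p.2 := hc _ _ hadj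
    intro h
    apply this
    have := sub_eq_zero.mp h
    exact Fin.val_injective (Nat.cast_injective this)
  -- the coloring with all values cast
  have hg₀ : MvPolynomial.eval (fun v => ((f₀ v : ℕ) : ℝ)) P ≠ 0 := hevalne f₀ hf₀
  have key := AF_card q hq T hT P E'.card htd _ (fun v => hmemT (f₀ v)) hg₀
  -- card bijection between proper colorings and grid nonzeros
  have hbij : (Finset.univ.filter fun f : V → Fin q => ∀ v w, G.Adj v w → f v ≠ f w).card =
      ((Fintype.piFinset (fun _ : V => T)).filter
        (fun g => MvPolynomial.eval g P ≠ 0)).card := by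
    apply Finset.card_bij (i := fun f _ => fun v => ((f v : ℕ) : ℝ))
    · intro f hf
      have hfp := (Finset.mem_filter.mp hf).2
      exact Finset.mem_filter.mpr ⟨Fintype.mem_piFinset.mpr (fun v => hmemT (f v)),
        hevalne f hfp⟩
    · intro f hf f' hf' h
      funext v
      have := congrFun h v
      exact Fin.val_injective (Nat.cast_injective this)
    · intro g hg
      obtain ⟨hgpi, hgne⟩ := Finset.mem_filter.mp hg
      have hval : ∀ v, ∃ m : ℕ, m < q ∧ (m : ℝ) = g v := by
        intro v
        obtain ⟨m, hm, hmv⟩ := Finset.mem_image.mp (Fintype.mem_piFinset.mp hgpi v)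
        exact ⟨m, Finset.mem_range.mp hm, hmv⟩
      set f : V → Fin q := fun v => ⟨(hval v).choose, (hval v).choose_spec.1⟩ with hfdef
      have hfg : (fun v => ((f v : ℕ) : ℝ)) = g := by
        funext v
        exact (hval v).choose_spec.2
      have hproper : ∀ v w, G.Adj v w → f v ≠ f w := by
        intro v w hadj heq
        have hgvw : g v = g w := by
          calc g v = ((f v : ℕ) : ℝ) := (congrFun hfg v).symm
            _ = ((f w : ℕ) : ℝ) := by rw [heq]
            _ = g w := congrFun hfg w
        apply hgne
        rw [heval]
        have hne : ordV v ≠ ordV w := fun h => hadj.ne (hordinj h)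
        rcases lt_or_gt_of_ne hne with h | h
        · exact Finset.prod_eq_zero (i := (v, w))
            (Finset.mem_filter.mpr ⟨Finset.mem_univ _, hadj, h⟩) (sub_eq_zero.mpr hgvw)
        · exact Finset.prod_eq_zero (i := (w, v))
            (Finset.mem_filter.mpr ⟨Finset.mem_univ _, hadj.symm, h⟩) (sub_eq_zero.mpr hgvw.symm)
      exact ⟨f, Finset.mem_filter.mpr ⟨Finset.mem_univ _, hproper⟩, hfg⟩
  rw [hEcard] at key
  rw [hbij]
  exact key

end AFPart

end BrooksQuant

/-- The quantitative strengthening of Brooks' theorem from the discussion section: a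
connected non-complete graph of maximum degree `Δ ≥ 3` on `n` vertices has at least
`Δ ^ (n·(Δ-2)/(2·(Δ-1)))` proper colorings with `Δ` colors. -/
theorem card_brooks_colorings {V : Type*} [Fintype V] [DecidableEq V]
    (G : SimpleGraph V) [DecidableRel G.Adj]
    (hconn : G.Connected) (hΔ : 3 ≤ G.maxDegree) (hnc : G ≠ ⊤)
    (n : ℕ) (hn : n = Fintype.card V) :
    ((G.maxDegree : ℝ)) ^ ((n : ℝ) * ((G.maxDegree : ℝ) - 2) / (2 * ((G.maxDegree : ℝ) - 1))) ≤
      ((Finset.univ.filter fun f : V → Fin G.maxDegree =>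
        ∀ v w, G.Adj v w → f v ≠ f w).card : ℝ) := by
  classical
  obtain ⟨f₀, hf₀⟩ := BrooksQuant.brooks_exists G hconn hΔ hnc
  have key := BrooksQuant.count_colorings_ge G G.maxDegree (by omega) f₀ hf₀
  have hedge : 2 * G.edgeFinset.card ≤ Fintype.card V * G.maxDegree := by
    rw [← SimpleGraph.sum_degrees_eq_twice_card_edges]
    calc ∑ v : V, G.degree v ≤ ∑ _v : V, G.maxDegree :=
          Finset.sum_le_sum (fun v _ => G.degree_le_maxDegree v)
      _ = Fintype.card V * G.maxDegree := by
          rw [Finset.sum_const, smul_eq_mul, Finset.card_univ]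
  subst hn
  have hQR : (3:ℝ) ≤ (G.maxDegree : ℝ) := by exact_mod_cast hΔ
  have hmR : 2 * (G.edgeFinset.card : ℝ) ≤ (Fintype.card V : ℝ) * (G.maxDegree : ℝ) := by
    exact_mod_cast hedge
  have h1 : (0:ℝ) < (G.maxDegree : ℝ) - 1 := by linarith
  have hexp : (Fintype.card V : ℝ) * ((G.maxDegree : ℝ) - 2) / (2 * ((G.maxDegree : ℝ) - 1)) ≤
      (Fintype.card V : ℝ) - (G.edgeFinset.card : ℝ) / ((G.maxDegree : ℝ) - 1) := by
    have e1 : (Fintype.card V : ℝ) - (G.edgeFinset.card : ℝ) / ((G.maxDegree : ℝ) - 1) -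
        (Fintype.card V : ℝ) * ((G.maxDegree : ℝ) - 2) / (2 * ((G.maxDegree : ℝ) - 1)) =
        ((Fintype.card V : ℝ) * (G.maxDegree : ℝ) - 2 * (G.edgeFinset.card : ℝ)) /
          (2 * ((G.maxDegree : ℝ) - 1)) := by
      field_simp
      ring
    have e2 : (0:ℝ) ≤ ((Fintype.card V : ℝ) * (G.maxDegree : ℝ) -
        2 * (G.edgeFinset.card : ℝ)) / (2 * ((G.maxDegree : ℝ) - 1)) := by
      apply div_nonneg
      · linarith
      · linarith
    linarith
  calc ((G.maxDegree : ℝ)) ^ ((Fintype.card V : ℝ) * ((G.maxDegree : ℝ) - 2) /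
        (2 * ((G.maxDegree : ℝ) - 1)))
      ≤ ((G.maxDegree : ℝ)) ^ ((Fintype.card V : ℝ) -
        (G.edgeFinset.card : ℝ) / ((G.maxDegree : ℝ) - 1)) :=
        Real.rpow_le_rpow_of_exponent_le (by linarith) hexp
    _ ≤ _ := key
end
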